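/- arXiv:2206.02192 — 8 statements merged into one kernel-verified Lean document; each statement's English description precedes it below -/
import Mathlib

section
/- Let n ≥ 1, let y₀ > 1 be a real number, and let U be a real symmetric n×n matrix. Set Z = U + i·y₀·1ₙ, an n×n complex matrix. Let M be a 2n×2n integer symplectic matrix, written in n×n blocks as M = (a b; c d), and suppose that the lower-left block c is not the zero matrix. Then |det(c·Z + d)| ≥ y₀, where c and d are regarded as complex matrices and |·| is the complex absolute value. -/
open Matrix

lemma det_one_add_posSemidef {m : Type*} [Fintype m] [DecidableEq m]
    {S : Matrix m m ℝ} (hS : S.PosSemidef) : 1 ≤ (1 + S).det := by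
  have hH : (1 + S).IsHermitian := Matrix.isHermitian_one.add hS.1
  rw [hH.det_eq_prod_eigenvalues]
  have h1 : ∀ i, 1 ≤ hH.eigenvalues i := by
    intro i
    rw [hH.eigenvalues_eq]
    set v : EuclideanSpace ℝ m := hH.eigenvectorBasis i with hv
    have hnorm : ‖v‖ = 1 := hH.eigenvectorBasis.orthonormal.1 i
    have hinner : (inner ℝ v v : ℝ) = 1 := by
      rw [real_inner_self_eq_norm_sq, hnorm]; norm_num
    have hvv : dotProduct (star ⇑v) ⇑v = 1 := by
      rw [← hinner, PiLp.inner_apply]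
      simp [dotProduct, sq]
    have hSv : 0 ≤ dotProduct (star ⇑v) (S *ᵥ ⇑v) := hS.dotProduct_mulVec_nonneg ⇑v
    have hsplit : dotProduct (star ⇑v) ((1 + S) *ᵥ ⇑v)
        = dotProduct (star ⇑v) ⇑v + dotProduct (star ⇑v) (S *ᵥ ⇑v) := by
      rw [Matrix.add_mulVec, dotProduct_add, Matrix.one_mulVec]
    simp only [RCLike.re_to_real]
    rw [hsplit, hvv]
    linarith
  have := Finset.prod_le_prod (s := Finset.univ) (f := fun _ : m => (1:ℝ))
    (g := fun i => hH.eigenvalues i) (by simp) (by intro i _; exact h1 i)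
  simpa using this

lemma det_NNt_add_psd {m : Type*} [Fintype m] [DecidableEq m] (N R : Matrix m m ℝ)
    (hN : N.det ≠ 0) (hR : R.PosSemidef) : N.det ^ 2 ≤ (N * Nᵀ + R).det := by
  have hNinv : N * N⁻¹ = 1 := mul_nonsing_inv N (isUnit_iff_ne_zero.mpr hN)
  set S := N⁻¹ * R * (N⁻¹)ᵀ with hSdef
  have hS : S.PosSemidef := by
    have := hR.mul_mul_conjTranspose_same (N⁻¹)
    rwa [conjTranspose_eq_transpose_of_trivial] at this
  have h2 : (N⁻¹)ᵀ * Nᵀ = 1 := by rw [← transpose_mul, hNinv, transpose_one]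
  have hNSN : N * S * Nᵀ = R := by
    calc N * (N⁻¹ * R * (N⁻¹)ᵀ) * Nᵀ = (N * N⁻¹) * (R * ((N⁻¹)ᵀ * Nᵀ)) := by
          simp only [mul_assoc]
    _ = R := by rw [hNinv, h2, one_mul, mul_one]
  have key : N * (1 + S) * Nᵀ = N * Nᵀ + R := by
    rw [mul_add, mul_one, add_mul, hNSN]
  have hdet : (N * Nᵀ + R).det = N.det ^ 2 * (1 + S).det := by
    rw [← key, det_mul, det_mul, det_transpose]; ring
  rw [hdet]
  nlinarith [det_one_add_posSemidef hS, sq_nonneg N.det]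

lemma core (n : ℕ) (y₀ : ℝ) (hy₀ : 1 < y₀)
    (U : Matrix (Fin n) (Fin n) ℝ) (hU : U.IsSymm)
    (c d a b : Matrix (Fin n) (Fin n) ℤ)
    (hcd : c * dᵀ = d * cᵀ) (hco : d * aᵀ - c * bᵀ = 1) (hc : c ≠ 0) :
    y₀ ^ 2 ≤ ((c.map (fun x : ℤ => (x:ℝ)) * U + d.map (fun x : ℤ => (x:ℝ))) *
        (c.map (fun x : ℤ => (x:ℝ)) * U + d.map (fun x : ℤ => (x:ℝ)))ᵀ
        + y₀ ^ 2 • (c.map (fun x : ℤ => (x:ℝ)) * (c.map (fun x : ℤ => (x:ℝ)))ᵀ)).det := by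
  classical
  set cR : Matrix (Fin n) (Fin n) ℝ := c.map (fun x : ℤ => (x:ℝ)) with hcRdef
  set dR : Matrix (Fin n) (Fin n) ℝ := d.map (fun x : ℤ => (x:ℝ)) with hdRdef
  set aR : Matrix (Fin n) (Fin n) ℝ := a.map (fun x : ℤ => (x:ℝ)) with haRdef
  set bR : Matrix (Fin n) (Fin n) ℝ := b.map (fun x : ℤ => (x:ℝ)) with hbRdef
  have hcdR : cR * dRᵀ = dR * cRᵀ := by
    ext i j
    have h := congrFun (congrFun hcd i) j
    simp only [hcRdef, hdRdef, Matrix.sub_apply, Matrix.mul_apply, Matrix.map_apply,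
      Matrix.transpose_apply] at h ⊢
    exact_mod_cast h
  have hcoR : dR * aRᵀ - cR * bRᵀ = 1 := by
    ext i j
    have h := congrFun (congrFun hco i) j
    simp only [hcRdef, hdRdef, haRdef, hbRdef, Matrix.sub_apply, Matrix.mul_apply,
      Matrix.map_apply, Matrix.transpose_apply, Matrix.one_apply] at h ⊢
    split_ifs at h ⊢ with hij <;> exact_mod_cast h
  have hcR0 : cR ≠ 0 := by
    intro h
    apply hc
    ext i j
    have := congrFun (congrFun h i) j
    simpa [hcRdef, Matrix.map_apply] using this
  set AR : Matrix (Fin n) (Fin n) ℝ := cR * U + dR with hARdef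
  set col : Fin n → (Fin n → ℝ) := fun j i => cR i j with hcoldef
  obtain ⟨I, hInd, hMax⟩ := exists_maximal_linearIndepOn ℝ col
  have hspan : ∀ j, col j ∈ Submodule.span ℝ (col '' I) := by
    intro j
    by_cases hj : j ∈ I
    · exact Submodule.subset_span ⟨j, hj, rfl⟩
    · obtain ⟨r, hr, hmem⟩ := hMax j hj
      have := Submodule.smul_mem _ r⁻¹ hmem
      rwa [smul_smul, inv_mul_cancel₀ hr, one_smul] at this
  set S₀ : Finset (Fin n) := I.toFinite.toFinset with hS₀def
  have hmemS₀ : ∀ j, j ∈ S₀ ↔ j ∈ I := fun j => Set.Finite.mem_toFinset _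
  have hS₀ne : S₀.Nonempty := by
    rw [Finset.nonempty_iff_ne_empty]
    intro hemp
    have hIemp : I = ∅ := by
      ext x
      simp only [Set.mem_empty_iff_false, iff_false]
      intro hx
      exact (Finset.notMem_empty x) (hemp ▸ (hmemS₀ x).mpr hx)
    apply hcR0
    ext i j
    have := hspan j
    rw [hIemp] at this
    simp only [Set.image_empty, Submodule.span_empty, Submodule.mem_bot] at this
    have := congrFun this i
    simpa [hcoldef] using this
  set Nz : Matrix (Fin n) (Fin n) ℤ :=
    Matrix.of (fun i j => if j ∈ S₀ then c i j else d i j) with hNzdef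
  set NR : Matrix (Fin n) (Fin n) ℝ :=
    Matrix.of (fun i j => if j ∈ S₀ then cR i j else dR i j) with hNRdef
  have hNRmap : NR = Nz.map (fun x : ℤ => (x:ℝ)) := by
    ext i j
    simp only [hNRdef, hNzdef, hcRdef, hdRdef, Matrix.map_apply, Matrix.of_apply,
      apply_ite (fun x : ℤ => (x:ℝ))]
  have hNRdet : NR.det ≠ 0 := by
    intro h0
    obtain ⟨v, hvne, hv⟩ := Matrix.exists_vecMul_eq_zero_iff.mpr h0
    apply hvne
    have hvS₀ : ∀ j ∈ S₀, v ⬝ᵥ col j = 0 := by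
      intro j hj
      have h := congrFun hv j
      simpa [Matrix.vecMul, dotProduct, hNRdef, hj, hcoldef] using h
    have hvcol : ∀ j, v ⬝ᵥ col j = 0 := by
      intro j
      let ℓ : (Fin n → ℝ) →ₗ[ℝ] ℝ :=
        { toFun := fun x => v ⬝ᵥ x
          map_add' := fun x y => dotProduct_add v x y
          map_smul' := fun r x => by simp }
      have hker : Submodule.span ℝ (col '' I) ≤ LinearMap.ker ℓ := by
        rw [Submodule.span_le]
        rintro x ⟨k, hk, rfl⟩
        exact hvS₀ k ((hmemS₀ k).mpr hk)
      exact hker (hspan j)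
    have hvcR : v ᵥ* cR = 0 := by
      funext j
      have := hvcol j
      simpa [Matrix.vecMul, dotProduct, hcoldef] using this
    set w : Fin n → ℝ := dRᵀ *ᵥ v with hwdef
    have hwvec : w = v ᵥ* dR := Matrix.mulVec_transpose dR v
    have hwout : ∀ j ∉ S₀, w j = 0 := by
      intro j hj
      have h := congrFun hv j
      rw [hwvec]
      simpa [Matrix.vecMul, dotProduct, hNRdef, hj] using h
    have hcw : cR *ᵥ w = 0 := by
      rw [hwdef, Matrix.mulVec_mulVec, hcdR, ← Matrix.mulVec_mulVec,
        Matrix.mulVec_transpose, hvcR, Matrix.mulVec_zero]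
    haveI : Fintype I := I.toFinite.fintype
    have hsumuniv : ∑ j : Fin n, w j • col j = 0 := by
      funext i
      have h := congrFun hcw i
      simp only [Matrix.mulVec, dotProduct] at h
      simpa [Finset.sum_apply, hcoldef, mul_comm] using h
    have hsumS₀ : ∑ j ∈ S₀, w j • col j = 0 := by
      rw [Finset.sum_subset (Finset.subset_univ S₀)
        (fun x _ hx => by rw [hwout x hx, zero_smul])]
      exact hsumuniv
    have hsumI : ∑ x : I, w ↑x • col ↑x = 0 := by
      rw [← Finset.sum_subtype S₀ (fun j => (hmemS₀ j)) (fun j => w j • col j)]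
      exact hsumS₀
    have hwS₀ : ∀ j ∈ S₀, w j = 0 := by
      intro j hj
      exact Fintype.linearIndependent_iff.mp hInd (fun x : I => w ↑x) hsumI
        ⟨j, (hmemS₀ j).mp hj⟩
    have hvdR : v ᵥ* dR = 0 := by
      funext j
      rw [← hwvec]
      by_cases hj : j ∈ S₀
      · exact hwS₀ j hj
      · exact hwout j hj
    calc v = v ᵥ* 1 := (Matrix.vecMul_one v).symm
    _ = v ᵥ* (dR * aRᵀ - cR * bRᵀ) := by rw [hcoR]
    _ = (v ᵥ* dR) ᵥ* aRᵀ - (v ᵥ* cR) ᵥ* bRᵀ := by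
        rw [Matrix.vecMul_sub, Matrix.vecMul_vecMul, Matrix.vecMul_vecMul]
    _ = 0 := by rw [hvdR, hvcR, Matrix.zero_vecMul, Matrix.zero_vecMul, sub_zero]
  have hNR1 : 1 ≤ NR.det ^ 2 := by
    have hdetcast : NR.det = ((Nz.det : ℤ) : ℝ) := by
      rw [hNRmap]
      exact ((Int.castRingHom ℝ).map_det Nz).symm
    have hNz0 : Nz.det ≠ 0 := by
      intro h0
      apply hNRdet
      rw [hdetcast, h0, Int.cast_zero]
    have habs : (1:ℤ) ≤ |Nz.det| := Int.one_le_abs hNz0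
    have : (1:ℤ) ≤ Nz.det ^ 2 := by nlinarith [sq_abs Nz.det]
    rw [hdetcast]
    exact_mod_cast this
  set M' : Matrix (Fin n) (Fin n) ℝ :=
    Matrix.of (fun i j => if j ∈ S₀ then cR i j else AR i j) with hM'def
  have hcu : ∀ j, (fun i => (cR * U) i j) ∈ Submodule.span ℝ (col '' I) := by
    intro j
    have heq : (fun i => (cR * U) i j) = ∑ m : Fin n, U m j • col m := by
      funext i
      simp [Matrix.mul_apply, hcoldef, Finset.sum_apply, mul_comm]
    rw [heq]
    exact Submodule.sum_mem _ (fun m _ => Submodule.smul_mem _ _ (hspan m))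
  have hex : ∀ j, ∃ l : Fin n →₀ ℝ, l ∈ Finsupp.supported ℝ ℝ I ∧
      Finsupp.linearCombination ℝ col l = (fun i => (cR * U) i j) := by
    intro j
    exact (Finsupp.mem_span_image_iff_linearCombination ℝ).mp (hcu j)
  choose L hLsupp hLtot using hex
  set F : Matrix (Fin n) (Fin n) ℝ :=
    Matrix.of (fun k j => if k ∈ S₀ ∧ j ∉ S₀ then L j k else 0) with hFdef
  have hM'det : M'.det = NR.det := by
    have hMN : M' = NR * (1 + F) := by
      ext i j
      rw [Matrix.mul_apply]
      have hsplit : ∀ k, NR i k * (1 + F) k j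
          = NR i k * (if k = j then 1 else 0) + NR i k * F k j := by
        intro k
        rw [Matrix.add_apply, Matrix.one_apply, mul_add]
      rw [Finset.sum_congr rfl (fun k _ => hsplit k), Finset.sum_add_distrib]
      have h1 : ∑ k : Fin n, NR i k * (if k = j then 1 else 0) = NR i j := by
        simp [Finset.sum_ite_eq']
      rw [h1]
      by_cases hj : j ∈ S₀
      · have h2 : ∑ k : Fin n, NR i k * F k j = 0 := by
          apply Finset.sum_eq_zero
          intro k _
          simp [hFdef, hj]
        rw [h2, add_zero]
        simp [hM'def, hNRdef, hj]
      · have h2 : ∑ k : Fin n, NR i k * F k j = ∑ k ∈ S₀, cR i k * L j k := by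
          rw [← Finset.sum_subset (Finset.subset_univ S₀)]
          · apply Finset.sum_congr rfl
            intro k hk
            simp [hFdef, hk, hj, hNRdef]
          · intro k _ hk
            simp [hFdef, hk]
        have hLval : ∑ k ∈ S₀, cR i k * L j k = (cR * U) i j := by
          have h3 := congrFun (hLtot j) i
          rw [Finsupp.linearCombination_apply, Finsupp.sum] at h3
          rw [Finset.sum_apply] at h3
          have h4 : ∑ k ∈ (L j).support, (L j k • col k) i
              = ∑ k ∈ (L j).support, cR i k * L j k := by
            apply Finset.sum_congr rfl
            intro k _
            simp [hcoldef, mul_comm]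
          rw [h4] at h3
          rw [← h3]
          refine (Finset.sum_subset ?_ ?_).symm
          · intro k hk
            exact (hmemS₀ k).mpr ((Finsupp.mem_supported ℝ (L j)).mp (hLsupp j) hk)
          · intro k _ hk
            rw [Finsupp.notMem_support_iff.mp hk, mul_zero]
        rw [h2, hLval]
        simp only [hM'def, hNRdef, hARdef, Matrix.of_apply, hj, if_false, Matrix.add_apply]
        ring
    have hdetF : (1 + F).det = 1 := by
      let e : {x // x ∈ S₀} ⊕ {x // ¬ x ∈ S₀} ≃ Fin n := Equiv.sumCompl _
      have hsub : (1 + F).submatrix e e =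
          Matrix.fromBlocks 1 (Matrix.of fun (k : {x // x ∈ S₀}) (j : {x // ¬ x ∈ S₀}) =>
            L ↑j ↑k) 0 1 := by
        ext i j
        cases i with
        | inl k =>
          cases j with
          | inl k' =>
            by_cases hkk : k = k'
            · subst hkk
              simp [e, hFdef, Matrix.one_apply]
            · have : (k : Fin n) ≠ ↑k' := fun h => hkk (Subtype.ext h)
              simp [e, hFdef, Matrix.one_apply, this, hkk]
          | inr j' =>
            have hne : (k : Fin n) ≠ ↑j' := fun h => j'.2 (h ▸ k.2)
            simp [e, hFdef, Matrix.one_apply, hne, k.2, j'.2]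
        | inr jj =>
          cases j with
          | inl k' =>
            have hne : (jj : Fin n) ≠ ↑k' := by
              intro h
              exact jj.2 (by rw [h]; exact k'.2)
            simp [e, hFdef, Matrix.one_apply, hne, jj.2]
          | inr jj' =>
            by_cases hkk : jj = jj'
            · subst hkk
              simp [e, hFdef, Matrix.one_apply, jj.2]
            · have hne : (jj : Fin n) ≠ ↑jj' := fun h => hkk (Subtype.ext h)
              simp [e, hFdef, Matrix.one_apply, hne, hkk, jj.2]
      rw [← Matrix.det_submatrix_equiv_self e (1 + F), hsub,
        Matrix.det_fromBlocks_zero₂₁]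
      simp
    rw [hMN, Matrix.det_mul, hdetF, mul_one]
  set N₀ : Matrix (Fin n) (Fin n) ℝ :=
    Matrix.of (fun i j => if j ∈ S₀ then y₀ * cR i j else AR i j) with hN₀def
  have hN₀det : N₀.det = y₀ ^ S₀.card * M'.det := by
    have hND : N₀ = M' * Matrix.diagonal (fun j => if j ∈ S₀ then y₀ else 1) := by
      ext i j
      rw [Matrix.mul_diagonal]
      by_cases hj : j ∈ S₀ <;> simp [hN₀def, hM'def, hj, mul_comm]
    rw [hND, Matrix.det_mul, Matrix.det_diagonal]
    have hprod : ∏ j : Fin n, (if j ∈ S₀ then y₀ else 1) = y₀ ^ S₀.card := by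
      rw [Finset.prod_ite_mem Finset.univ S₀ (fun _ => y₀), Finset.univ_inter,
        Finset.prod_const]
    rw [hprod]; ring
  have hN₀sq : y₀ ^ 2 ≤ N₀.det ^ 2 := by
    have hy0 : (0:ℝ) < y₀ := lt_trans one_pos hy₀
    have hcard : 1 ≤ S₀.card := Finset.Nonempty.card_pos hS₀ne
    have h1 : y₀ ≤ y₀ ^ S₀.card := by
      calc y₀ = y₀ ^ 1 := (pow_one y₀).symm
      _ ≤ y₀ ^ S₀.card := pow_le_pow_right₀ hy₀.le hcard
    have h2 : N₀.det ^ 2 = (y₀ ^ S₀.card) ^ 2 * NR.det ^ 2 := by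
      rw [hN₀det, hM'det]; ring
    rw [h2]
    have h3 : y₀ ^ 2 ≤ (y₀ ^ S₀.card) ^ 2 := pow_le_pow_left₀ hy0.le h1 2
    nlinarith [hNR1, sq_nonneg (y₀ ^ S₀.card)]
  set A1 : Matrix (Fin n) (Fin n) ℝ :=
    Matrix.of (fun i j => if j ∈ S₀ then AR i j else 0) with hA1def
  set C1 : Matrix (Fin n) (Fin n) ℝ :=
    Matrix.of (fun i j => if j ∈ S₀ then 0 else y₀ * cR i j) with hC1def
  have hdecomp : AR * ARᵀ + y₀ ^ 2 • (cR * cRᵀ) = N₀ * N₀ᵀ + (A1 * A1ᵀ + C1 * C1ᵀ) := by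
    ext i k
    simp only [Matrix.add_apply, Matrix.smul_apply, Matrix.mul_apply, Matrix.transpose_apply,
      smul_eq_mul, Finset.mul_sum]
    rw [← Finset.sum_add_distrib, ← Finset.sum_add_distrib, ← Finset.sum_add_distrib]
    apply Finset.sum_congr rfl
    intro j _
    by_cases hj : j ∈ S₀ <;> simp only [hN₀def, hA1def, hC1def, Matrix.of_apply, hj,
      if_true, if_false] <;> ring
  have hpsd : (A1 * A1ᵀ + C1 * C1ᵀ).PosSemidef := by
    have h1 : (A1 * A1ᵀ).PosSemidef := by
      have := Matrix.posSemidef_self_mul_conjTranspose A1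
      rwa [Matrix.conjTranspose_eq_transpose_of_trivial] at this
    have h2 : (C1 * C1ᵀ).PosSemidef := by
      have := Matrix.posSemidef_self_mul_conjTranspose C1
      rwa [Matrix.conjTranspose_eq_transpose_of_trivial] at this
    exact h1.add h2
  have hN₀ne : N₀.det ≠ 0 := by
    rw [hN₀det, hM'det]
    exact mul_ne_zero (pow_ne_zero _ (by linarith)) hNRdet
  have hfinal := det_NNt_add_psd N₀ _ hN₀ne hpsd
  rw [hdecomp]
  exact le_trans hN₀sq hfinal

/-- Lemma 3.2 of the paper: for `y₀ > 1`, `Z = U + i y₀ 1ₙ` with `U` real symmetric,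
and `M = (a b; c d)` an integral symplectic matrix with `c ≠ 0`, one has
`|det(c Z + d)| ≥ y₀`. -/
theorem stmt_0 (n : ℕ) (hn : 1 ≤ n) (y₀ : ℝ) (hy₀ : 1 < y₀)
    (U : Matrix (Fin n) (Fin n) ℝ) (hU : U.IsSymm)
    (M : Matrix (Fin n ⊕ Fin n) (Fin n ⊕ Fin n) ℤ)
    (hM : M * Matrix.fromBlocks 0 (-1) 1 0 * M.transpose =
      Matrix.fromBlocks (0 : Matrix (Fin n) (Fin n) ℤ) (-1) 1 0)
    (hc : M.toBlocks₂₁ ≠ 0) :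
    y₀ ≤ ‖
      (((M.toBlocks₂₁.map (fun x : ℤ => (x : ℂ))) *
          (U.map (fun x : ℝ => (x : ℂ)) + ((y₀ : ℂ) * Complex.I) • (1 : Matrix (Fin n) (Fin n) ℂ)) +
        M.toBlocks₂₂.map (fun x : ℤ => (x : ℂ))).det)‖ := by
  classical
  have hy0 : (0:ℝ) < y₀ := lt_trans one_pos hy₀
  -- block relations
  have hJ : Matrix.fromBlocks M.toBlocks₁₁ M.toBlocks₁₂ M.toBlocks₂₁ M.toBlocks₂₂ *
      Matrix.fromBlocks 0 (-1) 1 0 *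
      (Matrix.fromBlocks M.toBlocks₁₁ M.toBlocks₁₂ M.toBlocks₂₁ M.toBlocks₂₂)ᵀ =
      Matrix.fromBlocks 0 (-1) 1 0 := by
    rw [Matrix.fromBlocks_toBlocks]; exact hM
  rw [Matrix.fromBlocks_transpose, Matrix.fromBlocks_multiply, Matrix.fromBlocks_multiply] at hJ
  simp only [Matrix.mul_zero, Matrix.mul_one, Matrix.mul_neg,
    Matrix.neg_mul, mul_zero, mul_one, zero_add, add_zero, mul_neg, neg_mul] at hJ
  have h21 := congrArg Matrix.toBlocks₂₁ hJ
  have h22 := congrArg Matrix.toBlocks₂₂ hJ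
  simp only [Matrix.toBlocks_fromBlocks₂₁, Matrix.toBlocks_fromBlocks₂₂] at h21 h22
  have hco : M.toBlocks₂₂ * M.toBlocks₁₁ᵀ - M.toBlocks₂₁ * M.toBlocks₁₂ᵀ = 1 := by
    rw [sub_eq_add_neg]; exact h21
  have hcd : M.toBlocks₂₁ * M.toBlocks₂₂ᵀ = M.toBlocks₂₂ * M.toBlocks₂₁ᵀ := by
    have := h22
    rw [add_neg_eq_zero] at this
    exact this.symm
  set c := M.toBlocks₂₁ with hcdef
  set d := M.toBlocks₂₂ with hddef
  set cR : Matrix (Fin n) (Fin n) ℝ := c.map (fun x : ℤ => (x:ℝ)) with hcRdef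
  set dR : Matrix (Fin n) (Fin n) ℝ := d.map (fun x : ℤ => (x:ℝ)) with hdRdef
  have hcdR : cR * dRᵀ = dR * cRᵀ := by
    ext i j
    have h := congrFun (congrFun hcd i) j
    simp only [hcRdef, hdRdef, Matrix.mul_apply, Matrix.map_apply,
      Matrix.transpose_apply] at h ⊢
    exact_mod_cast h
  set AR : Matrix (Fin n) (Fin n) ℝ := cR * U + dR with hARdef
  set GR : Matrix (Fin n) (Fin n) ℝ := AR * ARᵀ + y₀ ^ 2 • (cR * cRᵀ) with hGRdef
  have hGRpos : y₀ ^ 2 ≤ GR.det :=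
    core n y₀ hy₀ U hU c d M.toBlocks₁₁ M.toBlocks₁₂ hcd hco hc
  -- complex matrices
  set P : Matrix (Fin n) (Fin n) ℂ := AR.map (fun x : ℝ => (x:ℂ)) with hPdef
  set Q : Matrix (Fin n) (Fin n) ℂ := cR.map (fun x : ℝ => (x:ℂ)) with hQdef
  set α : ℂ := (y₀ : ℂ) * Complex.I with hαdef
  set W : Matrix (Fin n) (Fin n) ℂ :=
    (c.map (fun x : ℤ => (x : ℂ))) *
      (U.map (fun x : ℝ => (x : ℂ)) + α • (1 : Matrix (Fin n) (Fin n) ℂ)) +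
      d.map (fun x : ℤ => (x : ℂ)) with hWdef
  have hW : W = P + α • Q := by
    ext i j
    simp only [hWdef, hPdef, hQdef, hARdef, Matrix.add_apply, Matrix.mul_apply,
      Matrix.map_apply, Matrix.smul_apply, Matrix.one_apply, smul_eq_mul, mul_ite,
      mul_zero, mul_one, mul_add, Finset.sum_add_distrib, Finset.sum_ite_eq']
    simp only [Finset.mem_univ, if_true, hcRdef, hdRdef, Matrix.map_apply]
    push_cast
    ring
  have hWconj : W.map (starRingEnd ℂ) = P - α • Q := by
    rw [hW]
    ext i j
    simp only [Matrix.map_apply, Matrix.add_apply, Matrix.sub_apply, Matrix.smul_apply,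
      hPdef, hQdef, smul_eq_mul, map_add, _root_.map_mul, hαdef]
    simp [Complex.conj_ofReal]
    ring
  have hPQ : P * Qᵀ = Q * Pᵀ := by
    have hcomm : AR * cRᵀ = cR * ARᵀ := by
      have hUsymm : Uᵀ = U := hU
      rw [hARdef, Matrix.add_mul, Matrix.transpose_add, Matrix.mul_add,
        Matrix.transpose_mul, hUsymm, ← Matrix.mul_assoc, hcdR]
    ext i j
    have h := congrFun (congrFun hcomm i) j
    simp only [hPdef, hQdef, Matrix.mul_apply, Matrix.map_apply,
      Matrix.transpose_apply] at h ⊢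
    exact_mod_cast h
  have hprod : W * (W.map (starRingEnd ℂ))ᵀ = GR.map (fun x : ℝ => (x:ℂ)) := by
    rw [hWconj, hW, Matrix.transpose_sub, Matrix.transpose_smul]
    have expand : (P + α • Q) * (Pᵀ - α • Qᵀ)
        = P * Pᵀ - α • (P * Qᵀ) + α • (Q * Pᵀ) - (α * α) • (Q * Qᵀ) := by
      rw [Matrix.mul_sub, Matrix.add_mul, Matrix.add_mul, Matrix.mul_smul, Matrix.smul_mul,
        Matrix.mul_smul, Matrix.smul_mul, smul_smul]
      abel
    rw [expand, hPQ]
    have hα2 : α * α = -((y₀:ℂ)^2) := by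
      rw [hαdef]
      have := Complex.I_sq
      ring_nf
      rw [Complex.I_sq]
      ring
    rw [hα2]
    have : P * Pᵀ - α • (Q * Pᵀ) + α • (Q * Pᵀ) - (-((y₀:ℂ)^2)) • (Q * Qᵀ)
        = P * Pᵀ + ((y₀:ℂ)^2) • (Q * Qᵀ) := by
      rw [neg_smul]
      abel
    rw [this]
    ext i j
    simp only [hPdef, hQdef, hGRdef, Matrix.add_apply, Matrix.smul_apply, Matrix.mul_apply,
      Matrix.map_apply, Matrix.transpose_apply, smul_eq_mul]
    push_cast
    ring
  have hdetW : Complex.normSq W.det = GR.det := by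
    have h1 : W.det * (starRingEnd ℂ) W.det = ((GR.det : ℝ) : ℂ) := by
      have hconjdet : (starRingEnd ℂ) W.det = (W.map (starRingEnd ℂ)).det :=
        (starRingEnd ℂ).map_det W
      have hofdet : ((GR.det : ℝ) : ℂ) = (GR.map (fun x : ℝ => (x:ℂ))).det :=
        Complex.ofRealHom.map_det GR
      rw [hconjdet, ← Matrix.det_transpose (W.map (starRingEnd ℂ)), ← Matrix.det_mul, hprod,
        hofdet]
    have h2 := Complex.mul_conj W.det
    rw [h1] at h2
    exact_mod_cast h2.symm
  show y₀ ≤ ‖W.det‖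
  rw [Complex.norm_def, hdetW]
  have : y₀ = Real.sqrt (y₀ ^ 2) := by
    rw [Real.sqrt_sq hy0.le]
  rw [this]
  exact Real.sqrt_le_sqrt hGRpos
end

section
/- Let n ≥ 1, let A be a real symmetric n×n matrix and let B be a real symmetric positive definite n×n matrix. Then |det(A + i·B)| ≥ det(B), where A + i·B is regarded as a complex n×n matrix and |·| is the complex absolute value. -/
open Matrix Complex

/-- For a Hermitian complex matrix `M`, `|det (M + i•1)| ≥ 1`. -/
lemma aux_det_add_smul_one (n : ℕ) (M : Matrix (Fin n) (Fin n) ℂ)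
    (hM : M.IsHermitian) :
    1 ≤ ‖(M + Complex.I • (1 : Matrix (Fin n) (Fin n) ℂ)).det‖ := by
  classical
  set U : Matrix (Fin n) (Fin n) ℂ := (hM.eigenvectorUnitary : Matrix (Fin n) (Fin n) ℂ)
  have hU : U * star U = 1 := (Matrix.mem_unitaryGroup_iff).mp hM.eigenvectorUnitary.2
  have hUdet : ‖U.det‖ * ‖(star U).det‖ = 1 := by
    have := congr_arg Matrix.det hU
    rw [Matrix.det_mul, Matrix.det_one] at this
    calc ‖U.det‖ * ‖(star U).det‖
        = ‖U.det * (star U).det‖ := (norm_mul _ _).symm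
      _ = 1 := by rw [this]; simp
  have key : M + Complex.I • (1 : Matrix (Fin n) (Fin n) ℂ)
      = U * (Matrix.diagonal (fun j => (hM.eigenvalues j : ℂ) + Complex.I)) * star U := by
    have h1 : (Complex.I • (1 : Matrix (Fin n) (Fin n) ℂ))
        = U * (Complex.I • (1 : Matrix (Fin n) (Fin n) ℂ)) * star U := by
      rw [Matrix.mul_smul, Matrix.smul_mul, mul_one, hU]
    have h2 : Matrix.diagonal (fun j => (hM.eigenvalues j : ℂ) + Complex.I)
        = Matrix.diagonal ((RCLike.ofReal : ℝ → ℂ) ∘ hM.eigenvalues)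
          + Complex.I • (1 : Matrix (Fin n) (Fin n) ℂ) := by
      ext i j
      by_cases h : i = j <;>
        simp [Matrix.diagonal_apply, Matrix.one_apply, h]
    rw [h2, Matrix.mul_add, Matrix.add_mul, ← h1]
    conv_lhs => rw [hM.spectral_theorem, Unitary.conjStarAlgAut_apply]
  rw [key, Matrix.det_mul, Matrix.det_mul, norm_mul, norm_mul]
  have hdiag : 1 ≤ ‖(Matrix.diagonal (fun j => (hM.eigenvalues j : ℂ) + Complex.I)).det‖ := by
    rw [Matrix.det_diagonal, norm_prod]
    have h1 : (1:ℝ) = ∏ _j : Fin n, (1:ℝ) := by simp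
    rw [h1]
    refine Finset.prod_le_prod (fun j _ => zero_le_one) fun j _ => ?_
    have him : ((hM.eigenvalues j : ℂ) + Complex.I).im = 1 := by simp
    calc (1 : ℝ) = |((hM.eigenvalues j : ℂ) + Complex.I).im| := by rw [him]; simp
      _ ≤ ‖(hM.eigenvalues j : ℂ) + Complex.I‖ := Complex.abs_im_le_norm _
  calc (1 : ℝ) = ‖U.det‖ * 1 * ‖(star U).det‖ := by
        rw [mul_one, hUdet]
    _ ≤ ‖U.det‖ * ‖(Matrix.diagonal (fun j => (hM.eigenvalues j : ℂ) + Complex.I)).det‖ * ‖(star U).det‖ := by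
        apply mul_le_mul_of_nonneg_right _ (by positivity)
        exact mul_le_mul_of_nonneg_left hdiag (by positivity)

/-- The standard inequality `|det(A + iB)| ≥ det B` for `A` real symmetric and
`B` real symmetric positive definite, invoked in the proof of Lemma 3.2 of the paper. -/
theorem stmt_1 (n : ℕ) (hn : 1 ≤ n) (A B : Matrix (Fin n) (Fin n) ℝ)
    (hA : A.IsSymm) (hB : B.PosDef) :
    B.det ≤ ‖
      ((A.map (fun x : ℝ => (x : ℂ)) + Complex.I • B.map (fun x : ℝ => (x : ℂ))).det)‖ := by
  classical
  set S : Matrix (Fin n) (Fin n) ℝ := (open scoped MatrixOrder in CFC.sqrt B) with hSdef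
  have hS : S.PosSemidef := open scoped MatrixOrder in Matrix.nonneg_iff_posSemidef.mp (CFC.sqrt_nonneg B)
  have hSS : S * S = B := open scoped MatrixOrder in CFC.sqrt_mul_sqrt_self B hB.posSemidef.nonneg
  -- det S > 0
  have hSdet_nonneg : 0 ≤ S.det := by
    rw [hS.isHermitian.det_eq_prod_eigenvalues]
    exact Finset.prod_nonneg fun i _ => hS.eigenvalues_nonneg i
  have hSdet_sq : S.det * S.det = B.det := by rw [← Matrix.det_mul, hSS]
  have hSdet_pos : 0 < S.det := by
    rcases lt_or_eq_of_le hSdet_nonneg with h | h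
    · exact h
    · exfalso; have := hB.det_pos; rw [← hSdet_sq, ← h, mul_zero] at this; exact lt_irrefl _ this
  have hSunit : IsUnit S.det := hSdet_pos.ne'.isUnit
  have hSinv : S * S⁻¹ = 1 := Matrix.mul_nonsing_inv S hSunit
  have hSinv' : S⁻¹ * S = 1 := Matrix.nonsing_inv_mul S hSunit
  -- M := S⁻¹ A S⁻¹
  set M : Matrix (Fin n) (Fin n) ℝ := S⁻¹ * A * S⁻¹ with hMdef
  have hAeq : A = S * M * S := by
    rw [hMdef]
    calc A = (S * S⁻¹) * A * (S⁻¹ * S) := by rw [hSinv, hSinv', one_mul, mul_one]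
      _ = S * (S⁻¹ * A * S⁻¹) * S := by noncomm_ring
  -- M is symmetric
  have hSsymm : Sᵀ = S := hS.isHermitian
  have hSinvSymm : (S⁻¹)ᵀ = S⁻¹ := by rw [Matrix.transpose_nonsing_inv, hSsymm]
  have hMsymm : Mᵀ = M := by
    rw [hMdef, Matrix.transpose_mul, Matrix.transpose_mul, hSinvSymm, hA, ← mul_assoc]
  -- map to ℂ
  have fmap : ∀ (X Y : Matrix (Fin n) (Fin n) ℝ),
      (X * Y).map (fun x : ℝ => (x : ℂ)) =
        X.map (fun x : ℝ => (x : ℂ)) * Y.map (fun x : ℝ => (x : ℂ)) := fun X Y =>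
    Matrix.map_mul (f := Complex.ofRealHom)
  set S' := S.map (fun x : ℝ => (x : ℂ)) with hS'def
  set M' := M.map (fun x : ℝ => (x : ℂ)) with hM'def
  have hM'herm : M'.IsHermitian := by
    ext i j
    simp only [hM'def, Matrix.conjTranspose_apply, Matrix.map_apply, star_def,
      Complex.conj_ofReal]
    exact_mod_cast (congrFun (congrFun hMsymm j) i).symm
  have hkey : A.map (fun x : ℝ => (x : ℂ)) + Complex.I • B.map (fun x : ℝ => (x : ℂ))
      = S' * (M' + Complex.I • (1 : Matrix (Fin n) (Fin n) ℂ)) * S' := by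
    rw [Matrix.mul_add, Matrix.add_mul]
    congr 1
    · rw [hS'def, hM'def, ← fmap, ← fmap, ← hAeq]
    · rw [Matrix.mul_smul, Matrix.smul_mul, mul_one, hS'def, ← fmap, hSS]
  rw [hkey, Matrix.det_mul, Matrix.det_mul, norm_mul, norm_mul]
  have hS'det : ‖S'.det‖ = S.det := by
    have hd : S'.det = ((S.det : ℝ) : ℂ) := by
      rw [hS'def, show (S.map fun x : ℝ => (x : ℂ)) = Complex.ofRealHom.mapMatrix S from rfl,
        ← RingHom.map_det]
      rfl
    rw [hd, Complex.norm_real, Real.norm_of_nonneg hSdet_nonneg]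
  rw [hS'det]
  calc B.det = S.det * 1 * S.det := by rw [mul_one, hSdet_sq]
    _ ≤ S.det * ‖(M' + Complex.I • (1 : Matrix (Fin n) (Fin n) ℂ)).det‖ * S.det := by
        apply mul_le_mul_of_nonneg_right _ hSdet_nonneg
        exact mul_le_mul_of_nonneg_left (aux_det_add_smul_one n M' hM'herm) hSdet_nonneg
end

section
/- Let α, β ∈ ℝ and ε ∈ (0, 1/2). There exist constants C > 0 and ℓ₀ ≥ 2, depending only on α, β, ε, such that the following holds: for every real ℓ ≥ ℓ₀, every positive integer N, every integer a, and every real v′ > 0 such that v := 2Nv′ satisfies v ≥ ℓ^{1/2+ε}, one has Q₁(ℓ, α, β, N, a, v′) ≤ C · v^β · ℓ^{α−β+1/4} · N^{−β}. -/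
set_option maxHeartbeats 2000000

open Real MeasureTheory

lemma log_le_two_sqrt {t : ℝ} (ht : 0 < t) : Real.log t ≤ 2 * (Real.sqrt t - 1) := by
  have h := Real.log_le_sub_one_of_pos (Real.sqrt_pos.2 ht)
  rw [Real.log_sqrt ht.le] at h
  linarith

lemma phi_ge_sq {t : ℝ} (ht : 0 < t) : (Real.sqrt t - 1)^2 ≤ t - 1 - Real.log t := by
  have h := log_le_two_sqrt ht
  have hs : Real.sqrt t ^ 2 = t := Real.sq_sqrt ht.le
  nlinarith [Real.sqrt_nonneg t]

lemma phi_nonneg {t : ℝ} (ht : 0 < t) : 0 ≤ t - 1 - Real.log t := by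
  have := Real.log_le_sub_one_of_pos ht; linarith

lemma abs_log_le_phi {t : ℝ} (ht : 0 < t) : |Real.log t| ≤ (t - 1 - Real.log t) + 1 := by
  rcases abs_cases (Real.log t) with ⟨h, _⟩ | ⟨h, _⟩
  · rw [h]
    have h1 := log_le_two_sqrt ht
    have h2 := phi_ge_sq ht
    nlinarith [sq_nonneg (Real.sqrt t - 2)]
  · rw [h]; nlinarith

lemma geom_bound (s : Finset ℕ) : ∑ k ∈ s, Real.exp (-(k:ℝ)) ≤ 2 := by
  have heq : ∀ k : ℕ, Real.exp (-(k:ℝ)) = (Real.exp (-1))^k := by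
    intro k; rw [← Real.exp_nat_mul]; ring_nf
  have hsum : Summable (fun k : ℕ => (Real.exp (-1))^k) :=
    summable_geometric_of_lt_one (Real.exp_nonneg _) (Real.exp_lt_one_iff.2 (by norm_num))
  calc ∑ k ∈ s, Real.exp (-(k:ℝ)) = ∑ k ∈ s, (Real.exp (-1))^k :=
        Finset.sum_congr rfl (fun k _ => heq k)
    _ ≤ ∑' k : ℕ, (Real.exp (-1))^k := Summable.sum_le_tsum s (fun i _ => by positivity) hsum
    _ = (1 - Real.exp (-1))⁻¹ :=
        tsum_geometric_of_lt_one (Real.exp_nonneg _) (Real.exp_lt_one_iff.2 (by norm_num))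
    _ ≤ 2 := by
        rw [inv_le_comm₀ (by nlinarith [Real.exp_lt_one_iff.2 (show (-1:ℝ)<0 by norm_num)]) (by norm_num)]
        have h : Real.exp (-1) ≤ 1/2 := by
          rw [Real.exp_neg, inv_le_comm₀ (Real.exp_pos 1) (by norm_num)]
          nlinarith [Real.add_one_le_exp (1:ℝ)]
        linarith

lemma gamma_lb {l : ℝ} (hl : 4 ≤ l) : l ^ l * Real.exp (-l) ≤ Real.exp 2 * Real.sqrt l * Real.Gamma l := by
  have hl0 : (0:ℝ) < l := by linarith
  have hs0 : 0 < Real.sqrt l := Real.sqrt_pos.2 hl0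
  have hssq : Real.sqrt l ^ 2 = l := Real.sq_sqrt hl0.le
  have hs_half : Real.sqrt l ≤ l / 2 := by nlinarith [Real.sqrt_nonneg l]
  have hsub : Set.Ioc (l - Real.sqrt l) l ⊆ Set.Ioi (0:ℝ) := by
    intro x hx; simp only [Set.mem_Ioc, Set.mem_Ioi] at *; nlinarith [hx.1]
  have hint : IntegrableOn (fun x => Real.exp (-x) * x ^ (l-1)) (Set.Ioi 0) volume :=
    Real.GammaIntegral_convergent hl0
  have hint2 : IntegrableOn (fun x => Real.exp (-x) * x ^ (l-1)) (Set.Ioc (l - Real.sqrt l) l) volume :=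
    hint.mono_set hsub
  have key : ∀ x ∈ Set.Ioc (l - Real.sqrt l) l,
      Real.exp (-2) * (l ^ (l-1) * Real.exp (-l)) ≤ Real.exp (-x) * x ^ (l-1) := by
    intro x hx
    have hx1 : l - Real.sqrt l < x := hx.1
    have hx2 : x ≤ l := hx.2
    have hx0 : 0 < x := by nlinarith
    rw [Real.rpow_def_of_pos hx0, Real.rpow_def_of_pos hl0, ← Real.exp_add, ← Real.exp_add,
      ← Real.exp_add, Real.exp_le_exp]
    have hlog : Real.log l - Real.log x ≤ (l - x) / x := by
      have h := Real.log_le_sub_one_of_pos (show (0:ℝ) < l / x by positivity)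
      rw [Real.log_div hl0.ne' hx0.ne'] at h
      calc Real.log l - Real.log x ≤ l / x - 1 := h
        _ = (l - x)/x := by field_simp
    have hd2 : (l - x)^2 ≤ l := by nlinarith
    have hgoal : (l-1) * (Real.log l - Real.log x) ≤ l - x + 2 := by
      have h2 : (l-1) * (Real.log l - Real.log x) ≤ (l-1) * ((l-x)/x) := by
        apply mul_le_mul_of_nonneg_left hlog (by linarith)
      have h3 : (l-1) * ((l-x)/x) = ((l-1)*(l-x))/x := by ring
      have h4 : ((l-1)*(l-x))/x ≤ l - x + 2 := by
        rw [div_le_iff₀ hx0]; nlinarith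
      linarith
    nlinarith [hgoal]
  have hvol : (volume (Set.Ioc (l - Real.sqrt l) l)).toReal = Real.sqrt l := by
    rw [Real.volume_Ioc, ENNReal.toReal_ofReal (by linarith : (0:ℝ) ≤ l - (l - Real.sqrt l))]
    ring
  have hlow := setIntegral_ge_of_const_le measurableSet_Ioc (by
      rw [Real.volume_Ioc]; exact ENNReal.ofReal_ne_top) key hint2
  have hmono : ∫ x in Set.Ioc (l - Real.sqrt l) l, Real.exp (-x) * x ^ (l-1)
      ≤ ∫ x in Set.Ioi 0, Real.exp (-x) * x ^ (l-1) := by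
    apply setIntegral_mono_set hint
    · rw [Filter.EventuallyLE, MeasureTheory.ae_restrict_iff' measurableSet_Ioi]
      filter_upwards [] with x hx
      have hx0 : (0:ℝ) < x := hx
      simp only [Pi.zero_apply]
      positivity
    · exact Filter.Eventually.of_forall hsub
  rw [Real.Gamma_eq_integral hl0]
  rw [measureReal_def, hvol] at hlow
  have hpow : l ^ l = l ^ (l-1) * l := by
    rw [← Real.rpow_add_one hl0.ne' (l-1)]; ring_nf
  have he2 : Real.exp (-2) * Real.exp 2 = 1 := by rw [← Real.exp_add]; norm_num
  have hss : Real.sqrt l * Real.sqrt l = l := Real.mul_self_sqrt hl0.le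
  have heq : l ^ l * Real.exp (-l)
      = (Real.exp (-2) * (l ^ (l-1) * Real.exp (-l)) * Real.sqrt l) * (Real.exp 2 * Real.sqrt l) := by
    have h5 : Real.exp (-2) * (l^(l-1)*Real.exp (-l)) * Real.sqrt l * (Real.exp 2 * Real.sqrt l)
        = (Real.exp (-2) * Real.exp 2) * (Real.sqrt l * Real.sqrt l) * (l^(l-1)*Real.exp (-l)) := by
      ring
    rw [hpow, h5, he2, hss]; ring
  rw [heq]
  have hG := hlow.trans hmono
  calc (Real.exp (-2) * (l ^ (l-1) * Real.exp (-l)) * Real.sqrt l) * (Real.exp 2 * Real.sqrt l)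
      ≤ (∫ x in Set.Ioi 0, Real.exp (-x) * x ^ (l-1)) * (Real.exp 2 * Real.sqrt l) := by
        apply mul_le_mul_of_nonneg_right (by rw [smul_eq_mul] at hG; linarith) (by positivity)
    _ = Real.exp 2 * Real.sqrt l * ∫ x in Set.Ioi 0, Real.exp (-x) * x ^ (l-1) := by ring

/-- Main termwise bound. -/
lemma term_le {l β p : ℝ} (hl : 4 ≤ l) (hβ : 4*|β| ≤ l) (hp : 0 < p) (D : ℕ) (hD : 0 < D) :
    (p*D) ^ (l/2) * (Real.Gamma l) ^ (-(1:ℝ)/2) * Real.exp (-(p*D)/2) * (D:ℝ) ^ (-β)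
      ≤ Real.exp (1+|β|) * l ^ ((1:ℝ)/4) * (l/p) ^ (-β) *
        Real.exp (-(l/4) * (p*D/l - 1 - Real.log (p*D/l))) := by
  have hl0 : (0:ℝ) < l := by linarith
  have hD0 : (0:ℝ) < (D:ℝ) := by exact_mod_cast hD
  set t : ℝ := p*D/l with htdef
  have ht0 : 0 < t := by positivity
  set φ : ℝ := t - 1 - Real.log t with hφdef
  have hφ0 : 0 ≤ φ := phi_nonneg ht0
  have habs : |Real.log t| ≤ φ + 1 := abs_log_le_phi ht0
  have hΓpos : 0 < Real.Gamma l := Real.Gamma_pos_of_pos hl0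
  -- bound for Gamma^{-1/2}
  have hG : (Real.Gamma l) ^ (-(1:ℝ)/2) ≤
      Real.exp (1 + Real.log l/4 - l/2 * Real.log l + l/2) := by
    have h1 := gamma_lb hl
    have h2 : Real.log (l ^ l * Real.exp (-l)) ≤ Real.log (Real.exp 2 * Real.sqrt l * Real.Gamma l) :=
      Real.log_le_log (by positivity) h1
    rw [Real.log_mul (by positivity) (Real.exp_ne_zero _), Real.log_exp,
      Real.log_mul (by positivity) hΓpos.ne', Real.log_mul (Real.exp_ne_zero _) (by positivity),
      Real.log_exp, Real.log_rpow hl0, Real.log_sqrt hl0.le] at h2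
    rw [Real.rpow_def_of_pos hΓpos, Real.exp_le_exp]
    nlinarith [h2]
  -- rewrite the pD-powers in exp form
  have hpD : p * (D:ℝ) = l * t := by
    rw [htdef, mul_comm l _, div_mul_cancel₀ _ hl0.ne']
  have h1 : (p*(D:ℝ)) ^ (l/2) = Real.exp ((Real.log l + Real.log t) * (l/2)) := by
    rw [Real.rpow_def_of_pos (by positivity), hpD, Real.log_mul hl0.ne' ht0.ne']
  have h2 : Real.exp (-(p*(D:ℝ))/2) = Real.exp (-(l*t)/2) := by rw [hpD]
  have h3 : ((D:ℝ)) ^ (-β) = Real.exp ((Real.log l + Real.log t - Real.log p) * (-β)) := by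
    have hDeq : (D:ℝ) = l * t / p := by
      rw [eq_div_iff hp.ne', ← hpD]; ring
    rw [Real.rpow_def_of_pos hD0, hDeq, Real.log_div (by positivity) hp.ne',
      Real.log_mul hl0.ne' ht0.ne']
  have h4 : l ^ ((1:ℝ)/4) = Real.exp (Real.log l * (1/4)) := Real.rpow_def_of_pos hl0 _
  have h5 : (l/p) ^ (-β) = Real.exp ((Real.log l - Real.log p) * (-β)) := by
    rw [Real.rpow_def_of_pos (by positivity), Real.log_div hl0.ne' hp.ne']
  rw [h1, h2, h3, h4, h5]
  calc Real.exp ((Real.log l + Real.log t) * (l/2)) * Real.Gamma l ^ (-(1:ℝ)/2) *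
        Real.exp (-(l*t)/2) * Real.exp ((Real.log l + Real.log t - Real.log p) * (-β))
      ≤ Real.exp ((Real.log l + Real.log t) * (l/2)) *
        Real.exp (1 + Real.log l/4 - l/2 * Real.log l + l/2) *
        Real.exp (-(l*t)/2) * Real.exp ((Real.log l + Real.log t - Real.log p) * (-β)) := by
        have e1 : (0:ℝ) < Real.exp ((Real.log l + Real.log t) * (l/2)) := Real.exp_pos _
        have e2 : (0:ℝ) < Real.exp (-(l*t)/2) := Real.exp_pos _
        have e3 : (0:ℝ) < Real.exp ((Real.log l + Real.log t - Real.log p) * (-β)) := Real.exp_pos _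
        have := mul_le_mul_of_nonneg_left hG e1.le
        nlinarith [this, mul_pos e2 e3]
    _ ≤ Real.exp (1+|β|) * Real.exp (Real.log l * (1/4)) *
        Real.exp ((Real.log l - Real.log p) * (-β)) * Real.exp (-(l/4) * φ) := by
        rw [← Real.exp_add, ← Real.exp_add, ← Real.exp_add, ← Real.exp_add, ← Real.exp_add,
          ← Real.exp_add, Real.exp_le_exp]
        have hb1 : -β * Real.log t ≤ |β| * (φ + 1) := by
          calc -β * Real.log t ≤ |(-β) * Real.log t| := le_abs_self _
            _ = |β| * |Real.log t| := by rw [abs_mul, abs_neg]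
            _ ≤ |β| * (φ + 1) := mul_le_mul_of_nonneg_left habs (abs_nonneg β)
        have hb2 : |β| * φ ≤ (l/4) * φ := mul_le_mul_of_nonneg_right (by linarith) hφ0
        have hlogt : Real.log t = t - 1 - φ := by rw [hφdef]; ring
        nlinarith [hb1, hb2]

/-- The quantity `Q₁(ℓ, α, β, N, a, v′)` of Lemma 4.3 of the paper:
`Σ_{D ≥ 1, D ≡ a (mod N)} (4π v′ D)^{ℓ/2} Γ(ℓ)^{−1/2} exp(−2π v′ D) ℓ^α D^{−β}`. -/
noncomputable def Q1 (l α β : ℝ) (N : ℕ) (a : ℤ) (v' : ℝ) : ℝ :=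
  ∑' D : ℕ, if 0 < D ∧ (D : ℤ) ≡ a [ZMOD (N : ℤ)] then
    (4 * π * v' * D) ^ (l / 2) * (Real.Gamma l) ^ (-(1 : ℝ) / 2) *
      Real.exp (-2 * π * v' * D) * l ^ α * (D : ℝ) ^ (-β)
  else 0

/-- First case of Lemma 4.3 of the paper: if `v := 2 N v′ ≥ ℓ^{1/2+ε}` then
`Q₁ ≪ v^β ℓ^{α−β+1/4} N^{−β}`. -/
theorem stmt_4 (α β ε : ℝ) (hε : ε ∈ Set.Ioo (0 : ℝ) (1 / 2)) :
    ∃ C : ℝ, 0 < C ∧ ∃ ℓ₀ : ℝ, 2 ≤ ℓ₀ ∧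
      ∀ (l : ℝ), ℓ₀ ≤ l → ∀ (N : ℕ), 0 < N → ∀ (a : ℤ) (v' : ℝ), 0 < v' →
        l ^ (1 / 2 + ε) ≤ 2 * N * v' →
        Q1 l α β N a v' ≤ C * (2 * N * v') ^ β * l ^ (α - β + 1 / 4) * (N : ℝ) ^ (-β) := by
  obtain ⟨hε0, hε2⟩ := hε
  refine ⟨4 * Real.exp (1 + |β|) * (2*π) ^ β, by positivity, 7 + 4*|β|,
    by linarith [abs_nonneg β], ?_⟩
  intro l hl N hN a v' hv' hv
  have hN1 : (1:ℝ) ≤ (N:ℝ) := by exact_mod_cast hN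
  have hN0 : (0:ℝ) < (N:ℝ) := by linarith
  have hl7 : (7:ℝ) ≤ l := by linarith [abs_nonneg β]
  have hl0 : (0:ℝ) < l := by linarith
  have hl1 : (1:ℝ) ≤ l := by linarith
  have hl4 : (4:ℝ) ≤ l := by linarith
  have hβl : 4*|β| ≤ l := by linarith
  set v : ℝ := 2 * (N:ℝ) * v' with hvdef
  have hv0 : 0 < v := by positivity
  have hsq : Real.sqrt l ≤ v := by
    have h1 : l ^ ((1:ℝ)/2) ≤ l ^ ((1:ℝ)/2 + ε) :=
      Real.rpow_le_rpow_of_exponent_le hl1 (by linarith)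
    have h2 : Real.sqrt l = l ^ ((1:ℝ)/2) := Real.sqrt_eq_rpow l
    rw [h2]
    calc l ^ ((1:ℝ)/2) ≤ l ^ ((1:ℝ)/2 + ε) := h1
      _ ≤ v := hv
  have hvsq : l ≤ v^2 := by
    nlinarith [Real.sq_sqrt hl0.le, Real.sqrt_nonneg l, hsq]
  have hπ := Real.pi_gt_d6
  set p : ℝ := 4*π*v' with hpdef
  have hp0 : 0 < p := by positivity
  set δ : ℝ := (N:ℝ)*p/l with hδdef
  have hδ0 : 0 < δ := by positivity
  have hlδ : l*δ = 2*π*v := by rw [hδdef, hpdef, hvdef]; field_simp; ring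
  have hv7 : (7:ℝ) ≤ v^2 := le_trans hl7 hvsq
  have h16 : (16:ℝ) ≤ l*δ := by
    rw [hlδ]
    have hv26 : (13/5:ℝ) ≤ v := by nlinarith [hv7, hv0]
    nlinarith [hπ, hv26, hv0]
  have h32 : (32:ℝ) ≤ l*δ^2 := by
    have he : l*δ^2 = (l*δ)^2/l := by field_simp
    rw [he, hlδ, le_div_iff₀ hl0]
    have hπ2 : (39:ℝ) ≤ 4*π^2 := by nlinarith [hπ]
    have hm1 : 32*l ≤ 32*v^2 := by linarith
    have hm2 : 32*v^2 ≤ 4*π^2*v^2 := by nlinarith [sq_nonneg v, hπ2]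
    nlinarith [hm1, hm2]
  -- the floor-count function
  set kf : ℕ → ℕ := fun D => ⌊|((D:ℕ):ℝ) - l/p| / (N:ℝ)⌋₊ with hkfdef
  set B : ℝ := Real.exp (1+|β|) * l ^ ((1:ℝ)/4) * (l/p) ^ (-β) * l^α with hBdef
  have hB0 : 0 ≤ B := by positivity
  rw [Q1]
  apply tsum_le_of_sum_le' (by positivity)
  intro s
  classical
  rw [← Finset.sum_filter]
  set P : ℕ → Prop := fun D => 0 < D ∧ (D:ℤ) ≡ a [ZMOD (N:ℤ)] with hPdef
  clear_value v p δ kf B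
  -- termwise bound
  have hterm : ∀ D ∈ s.filter P,
      (4 * π * v' * D) ^ (l / 2) * (Real.Gamma l) ^ (-(1 : ℝ) / 2) *
        Real.exp (-2 * π * v' * D) * l ^ α * (D : ℝ) ^ (-β)
      ≤ B * Real.exp (-(kf D : ℝ)) := by
    intro D hDmem
    obtain ⟨hD, hmod⟩ := (Finset.mem_filter.1 hDmem).2
    have hD0 : (0:ℝ) < (D:ℝ) := by exact_mod_cast hD
    set t : ℝ := p*(D:ℝ)/l with htdef
    have ht0 : 0 < t := by rw [htdef]; exact div_pos (mul_pos hp0 hD0) hl0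
    clear_value t
    have hφ0 : 0 ≤ t - 1 - Real.log t := phi_nonneg ht0
    -- the k bound
    have hkb : (kf D : ℝ) ≤ (l/4) * (t - 1 - Real.log t) := by
      set a' : ℝ := |t - 1| with ha'def
      have ha'0 : 0 ≤ a' := abs_nonneg _
      have hfl : (kf D : ℝ) ≤ |(D:ℝ) - l/p| / (N:ℝ) := by
        rw [hkfdef]
        exact Nat.floor_le (by positivity)
      have habsrel : |(D:ℝ) - l/p| = (l/p) * a' := by
        have hDt : (D:ℝ) - l/p = (l/p) * (t - 1) := by
          rw [htdef]; field_simp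
        rw [hDt, abs_mul, abs_of_pos (div_pos hl0 hp0)]
      have hkδ : (kf D : ℝ) * δ ≤ a' := by
        have h' := mul_le_mul_of_nonneg_right hfl hδ0.le
        have hEq : (|(D:ℝ) - l/p| / (N:ℝ)) * δ = a' := by
          rw [habsrel, hδdef]; field_simp
        rw [hEq] at h'; exact h'
      -- quadratic bound on phi
      have hquad : a' ^ 2 ≤ (t - 1 - Real.log t) * (2*a' + 4) := by
        set u : ℝ := Real.sqrt t with hudef
        have hu0 : 0 ≤ u := Real.sqrt_nonneg t
        have hu2 : u^2 = t := Real.sq_sqrt ht0.le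
        have hφu : (u - 1)^2 ≤ t - 1 - Real.log t := phi_ge_sq ht0
        have ht_le : t - 1 ≤ a' := le_abs_self _
        have ha2 : a'^2 = (t-1)^2 := sq_abs _
        have h5 : (u+1)^2 ≤ 2*a' + 4 := by
          have e2 : (0:ℝ) ≤ (u-1)^2 := sq_nonneg _
          have e3 : (u+1)^2 = (u-1)^2 + 4*u := by ring
          have e5 : (u-1)^2 = t - 2*u + 1 := by rw [← hu2]; ring
          linarith [e2, e3, e5, ht_le]
        have h6 : a'^2 = (u-1)^2 * (u+1)^2 := by rw [ha2, ← hu2]; ring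
        rw [h6]
        exact mul_le_mul hφu h5 (sq_nonneg _) hφ0
      have hk01 : (kf D : ℝ) ≤ (kf D : ℝ)^2 := by
        rcases Nat.eq_zero_or_pos (kf D) with h | h
        · simp [h]
        · have h1 : (1:ℝ) ≤ (kf D : ℝ) := by exact_mod_cast h
          have h2 : (kf D:ℝ) * 1 ≤ (kf D:ℝ) * (kf D:ℝ) :=
            mul_le_mul_of_nonneg_left h1 (by linarith)
          have h3 : (kf D:ℝ)^2 = (kf D:ℝ) * (kf D:ℝ) := sq (kf D:ℝ) ▸ by ring
          linarith [h2, h3]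
      rcases le_or_gt a' 2 with hcase | hcase
      · have h6 : (kf D : ℝ)^2 * δ^2 ≤ a'^2 := by
          have hkδ0 : (0:ℝ) ≤ (kf D:ℝ) * δ := by positivity
          have h61 := mul_le_mul hkδ hkδ hkδ0 ha'0
          have h62 : ((kf D:ℝ)*δ) * ((kf D:ℝ)*δ) = (kf D:ℝ)^2 * δ^2 := by ring
          have h63 : a' * a' = a'^2 := by ring
          linarith [h61, h62, h63]
        have h7 : a'^2 ≤ 8 * (t - 1 - Real.log t) := by
          have h71 := mul_le_mul_of_nonneg_left hcase hφ0
          nlinarith [hquad, hφ0, h71]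
        have h8 : 32 * (kf D:ℝ)^2 ≤ (l*δ^2) * (kf D:ℝ)^2 :=
          mul_le_mul_of_nonneg_right h32 (sq_nonneg _)
        have h9 : l * ((kf D:ℝ)^2 * δ^2) ≤ l * (8 * (t - 1 - Real.log t)) :=
          mul_le_mul_of_nonneg_left (h6.trans h7) hl0.le
        linarith [h8, h9, hk01]
      · have h7 : a' ≤ 4 * (t - 1 - Real.log t) := by
          have hc2 : (t - 1 - Real.log t) * 2 ≤ (t - 1 - Real.log t) * a' :=
            mul_le_mul_of_nonneg_left hcase.le hφ0
          by_contra hcon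
          push_neg at hcon
          have ha'pos : (0:ℝ) < a' := by linarith
          have hx1 : a'^2 ≤ 4 * (t - 1 - Real.log t) * a' := by nlinarith [hquad, hc2]
          have hx2 : 4 * (t - 1 - Real.log t) * a' < a' * a' :=
            mul_lt_mul_of_pos_right hcon ha'pos
          nlinarith [hx1, hx2]
        have h8 : 16 * (kf D:ℝ) ≤ (l*δ) * (kf D:ℝ) :=
          mul_le_mul_of_nonneg_right h16 (Nat.cast_nonneg _)
        have h9 : l * ((kf D:ℝ) * δ) ≤ l * (4 * (t - 1 - Real.log t)) :=
          mul_le_mul_of_nonneg_left (hkδ.trans h7) hl0.le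
        linarith [h8, h9]
    -- assemble
    have hTform : (4 * π * v' * (D:ℝ)) ^ (l / 2) * (Real.Gamma l) ^ (-(1 : ℝ) / 2) *
        Real.exp (-2 * π * v' * (D:ℝ)) * l ^ α * ((D:ℝ)) ^ (-β)
        = ((p*(D:ℝ)) ^ (l/2) * (Real.Gamma l) ^ (-(1:ℝ)/2) * Real.exp (-(p*(D:ℝ))/2) *
          ((D:ℝ)) ^ (-β)) * l^α := by
      have e1 : (4*π*v'*(D:ℝ)) = p*(D:ℝ) := by rw [hpdef]
      have e2 : Real.exp (-2*π*v'*(D:ℝ)) = Real.exp (-(p*(D:ℝ))/2) := by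
        apply congrArg; rw [hpdef]; ring
      rw [e1, e2]; ring
    rw [hTform]
    have hstep1 := term_le hl4 hβl hp0 D hD
    have hstep2 : Real.exp (-(l/4) * (p*(D:ℝ)/l - 1 - Real.log (p*(D:ℝ)/l)))
        ≤ Real.exp (-(kf D : ℝ)) := by
      rw [Real.exp_le_exp, ← htdef]
      linarith [hkb]
    calc ((p*(D:ℝ)) ^ (l/2) * (Real.Gamma l) ^ (-(1:ℝ)/2) * Real.exp (-(p*(D:ℝ))/2) *
          ((D:ℝ)) ^ (-β)) * l^α
        ≤ (Real.exp (1+|β|) * l ^ ((1:ℝ)/4) * (l/p) ^ (-β) *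
            Real.exp (-(l/4) * (p*(D:ℝ)/l - 1 - Real.log (p*(D:ℝ)/l)))) * l^α :=
          mul_le_mul_of_nonneg_right hstep1 (by positivity)
      _ ≤ (Real.exp (1+|β|) * l ^ ((1:ℝ)/4) * (l/p) ^ (-β) * Real.exp (-(kf D:ℝ))) * l^α := by
          apply mul_le_mul_of_nonneg_right _ (le_of_lt (Real.rpow_pos_of_pos hl0 α))
          apply mul_le_mul_of_nonneg_left hstep2
          have h1 : (0:ℝ) ≤ (l/p) ^ (-β) := Real.rpow_nonneg (div_nonneg hl0.le hp0.le) _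
          have h2 : (0:ℝ) ≤ l ^ ((1:ℝ)/4) := Real.rpow_nonneg hl0.le _
          positivity
      _ = B * Real.exp (-(kf D:ℝ)) := by rw [hBdef]; ring
  -- sum the bound
  have hsum1 : ∑ D ∈ s.filter P,
      (4 * π * v' * D) ^ (l / 2) * (Real.Gamma l) ^ (-(1 : ℝ) / 2) *
        Real.exp (-2 * π * v' * D) * l ^ α * (D : ℝ) ^ (-β)
      ≤ ∑ D ∈ s.filter P, B * Real.exp (-(kf D : ℝ)) := Finset.sum_le_sum hterm
  -- injectivity on the two halves
  have hmono : ∀ x y : ℕ, x ∈ s.filter P → y ∈ s.filter P → x < y →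
      ((N:ℝ) ≤ (y:ℝ) - (x:ℝ)) := by
    intro x y hx hy hxy
    have hmx := ((Finset.mem_filter.1 hx).2).2
    have hmy := ((Finset.mem_filter.1 hy).2).2
    have hdvd : (N:ℤ) ∣ (y:ℤ) - (x:ℤ) := (hmx.trans hmy.symm).dvd
    have hxy' : (x:ℤ) < (y:ℤ) := by exact_mod_cast hxy
    have hpos : (0:ℤ) < (y:ℤ) - (x:ℤ) := by linarith
    have hle : (N:ℤ) ≤ (y:ℤ) - (x:ℤ) := Int.le_of_dvd hpos hdvd
    exact_mod_cast hle
  have hinj1 : ∀ x ∈ (s.filter P).filter (fun D : ℕ => (D:ℝ) ≤ l/p),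
      ∀ y ∈ (s.filter P).filter (fun D : ℕ => (D:ℝ) ≤ l/p), kf x = kf y → x = y := by
    intro x hx y hy hkxy
    by_contra hne
    have key : ∀ x' y' : ℕ, x' ∈ (s.filter P).filter (fun D : ℕ => (D:ℝ) ≤ l/p) →
        y' ∈ (s.filter P).filter (fun D : ℕ => (D:ℝ) ≤ l/p) → x' < y' → kf y' < kf x' := by
      intro x' y' hx' hy' hlt
      have hxle : (x':ℝ) ≤ l/p := (Finset.mem_filter.1 hx').2
      have hyle : (y':ℝ) ≤ l/p := (Finset.mem_filter.1 hy').2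
      have hNle := hmono x' y' (Finset.mem_filter.1 hx').1 (Finset.mem_filter.1 hy').1 hlt
      have hax : |(x':ℝ) - l/p| = l/p - x' := by rw [abs_of_nonpos (by linarith)]; ring
      have hay : |(y':ℝ) - l/p| = l/p - y' := by rw [abs_of_nonpos (by linarith)]; ring
      have hstep : (l/p - (y':ℝ))/(N:ℝ) + 1 ≤ (l/p - (x':ℝ))/(N:ℝ) := by
        rw [div_add' _ _ _ hN0.ne', div_le_div_iff₀ hN0 hN0]
        have := mul_le_mul_of_nonneg_right hNle hN0.le
        nlinarith [this]
      have hfl := Nat.floor_le_floor hstep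
      rw [Nat.floor_add_one (div_nonneg (by linarith) hN0.le : (0:ℝ) ≤ (l/p - (y':ℝ))/(N:ℝ))] at hfl
      simp only [hkfdef, hax, hay]
      omega
    rcases lt_trichotomy x y with h | h | h
    · have := key x y hx hy h; omega
    · exact hne h
    · have := key y x hy hx h; omega
  have hinj2 : ∀ x ∈ (s.filter P).filter (fun D : ℕ => ¬((D:ℝ) ≤ l/p)),
      ∀ y ∈ (s.filter P).filter (fun D : ℕ => ¬((D:ℝ) ≤ l/p)), kf x = kf y → x = y := by
    intro x hx y hy hkxy
    by_contra hne
    have key : ∀ x' y' : ℕ, x' ∈ (s.filter P).filter (fun D : ℕ => ¬((D:ℝ) ≤ l/p)) →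
        y' ∈ (s.filter P).filter (fun D : ℕ => ¬((D:ℝ) ≤ l/p)) → x' < y' → kf x' < kf y' := by
      intro x' y' hx' hy' hlt
      have hxle : l/p < (x':ℝ) := not_le.1 (Finset.mem_filter.1 hx').2
      have hyle : l/p < (y':ℝ) := not_le.1 (Finset.mem_filter.1 hy').2
      have hNle := hmono x' y' (Finset.mem_filter.1 hx').1 (Finset.mem_filter.1 hy').1 hlt
      have hax : |(x':ℝ) - l/p| = (x':ℝ) - l/p := abs_of_pos (by linarith)
      have hay : |(y':ℝ) - l/p| = (y':ℝ) - l/p := abs_of_pos (by linarith)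
      have hstep : ((x':ℝ) - l/p)/(N:ℝ) + 1 ≤ ((y':ℝ) - l/p)/(N:ℝ) := by
        rw [div_add' _ _ _ hN0.ne', div_le_div_iff₀ hN0 hN0]
        have := mul_le_mul_of_nonneg_right hNle hN0.le
        nlinarith [this]
      have hfl := Nat.floor_le_floor hstep
      rw [Nat.floor_add_one (div_nonneg (by linarith) hN0.le : (0:ℝ) ≤ ((x':ℝ) - l/p)/(N:ℝ))] at hfl
      simp only [hkfdef, hax, hay]
      omega
    rcases lt_trichotomy x y with h | h | h
    · have := key x y hx hy h; omega
    · exact hne h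
    · have := key y x hy hx h; omega
  -- bound the exp sums
  have hsum2 : ∑ D ∈ s.filter P, Real.exp (-(kf D : ℝ)) ≤ 4 := by
    rw [← Finset.sum_filter_add_sum_filter_not (s.filter P) (fun D : ℕ => (D:ℝ) ≤ l/p)]
    have hb1 : ∑ D ∈ (s.filter P).filter (fun D : ℕ => (D:ℝ) ≤ l/p), Real.exp (-(kf D : ℝ)) ≤ 2 := by
      have he : ∑ j ∈ ((s.filter P).filter (fun D : ℕ => (D:ℝ) ≤ l/p)).image kf,
          Real.exp (-(j : ℝ)) = ∑ D ∈ (s.filter P).filter (fun D : ℕ => (D:ℝ) ≤ l/p),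
          Real.exp (-(kf D : ℝ)) := Finset.sum_image hinj1
      rw [← he]; exact geom_bound _
    have hb2 : ∑ D ∈ (s.filter P).filter (fun D : ℕ => ¬((D:ℝ) ≤ l/p)),
        Real.exp (-(kf D : ℝ)) ≤ 2 := by
      have he : ∑ j ∈ ((s.filter P).filter (fun D : ℕ => ¬((D:ℝ) ≤ l/p))).image kf,
          Real.exp (-(j : ℝ)) = ∑ D ∈ (s.filter P).filter (fun D : ℕ => ¬((D:ℝ) ≤ l/p)),
          Real.exp (-(kf D : ℝ)) := Finset.sum_image hinj2
      rw [← he]; exact geom_bound _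
    linarith
  -- final algebra
  have hfin : l ^ ((1:ℝ)/4) * (l/p) ^ (-β) * l^α
      = (2*π)^β * v^β * l^(α-β+1/4) * (N:ℝ)^(-β) := by
    have e1 : (l/p) ^ (-β) = (p/l) ^ β := by
      rw [Real.rpow_neg (by positivity), ← Real.inv_rpow (by positivity), inv_div]
    have e2 : p/l = 2*π * (v * (((N:ℝ))⁻¹ * l⁻¹)) := by
      rw [hpdef, hvdef]; field_simp; ring
    have e3a : (v * (((N:ℝ))⁻¹ * l⁻¹))^β = v^β * (((N:ℝ))⁻¹ * l⁻¹)^β :=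
      Real.mul_rpow (by positivity) (by positivity)
    have e3b : ((((N:ℝ))⁻¹) * l⁻¹)^β = (((N:ℝ))⁻¹)^β * (l⁻¹)^β :=
      Real.mul_rpow (by positivity) (by positivity)
    have e3 : (p/l)^β = (2*π)^β * (v^β * ((((N:ℝ))⁻¹)^β * (l⁻¹)^β)) := by
      rw [e2, Real.mul_rpow (by positivity) (by positivity), e3a, e3b]
    have e4 : (((N:ℝ))⁻¹)^β = (N:ℝ)^(-β) := by
      rw [Real.inv_rpow (by positivity), ← Real.rpow_neg (by positivity)]
    have e5 : (l⁻¹)^β = l^(-β) := by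
      rw [Real.inv_rpow (by positivity), ← Real.rpow_neg (by positivity)]
    have e6 : l ^ ((1:ℝ)/4) * l^(-β) * l^α = l^(α-β+1/4) := by
      rw [← Real.rpow_add hl0, ← Real.rpow_add hl0]
      congr 1; ring
    rw [e1, e3, e4, e5, ← e6]; ring
  calc ∑ D ∈ s.filter P,
      (4 * π * v' * D) ^ (l / 2) * (Real.Gamma l) ^ (-(1 : ℝ) / 2) *
        Real.exp (-2 * π * v' * D) * l ^ α * (D : ℝ) ^ (-β)
      ≤ ∑ D ∈ s.filter P, B * Real.exp (-(kf D : ℝ)) := hsum1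
    _ = B * ∑ D ∈ s.filter P, Real.exp (-(kf D : ℝ)) := by rw [Finset.mul_sum]
    _ ≤ B * 4 := mul_le_mul_of_nonneg_left hsum2 hB0
    _ = 4 * Real.exp (1 + |β|) * (2*π) ^ β * v ^ β * l ^ (α - β + 1/4) * (N:ℝ) ^ (-β) := by
        rw [hBdef]
        linear_combination (4 * Real.exp (1+|β|)) * hfin
end

section
/- Let α, β ∈ ℝ and ε ∈ (0, 1/2). There exist constants C > 0 and ℓ₀ ≥ 2, depending only on α, β, ε, such that the following holds: for every real ℓ ≥ ℓ₀, every positive integer N, every integer a, and every real v′ > 0 such that v := 2Nv′ satisfies v ≤ ℓ^{1/2+ε}, one has Q₁(ℓ, α, β, N, a, v′) ≤ C · ℓ^{α−β+3/4+ε} · v^{β−1} · N^{−β} · (1 + v·ℓ^{−1/2}). -/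
open Real

open Set MeasureTheory Finset

namespace Q1Lemmas

lemma Gamma_add_nat (x : ℝ) (hx : 0 < x) (n : ℕ) :
    Real.Gamma (x + n) = Real.Gamma x * ∏ j ∈ Finset.range n, (x + j) := by
  induction n with
  | zero => simp
  | succ n ih =>
    have hxn : x + n ≠ 0 := by positivity
    have e : (x + ((n:ℕ)+1 : ℕ) : ℝ) = (x + n) + 1 := by push_cast; ring
    rw [Finset.prod_range_succ, e, Real.Gamma_add_one hxn, ih]
    push_cast; ring

lemma Gamma_add_le {x a : ℝ} (hx : 1 ≤ x) (ha0 : 0 ≤ a) (ha1 : a ≤ 1) :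
    Real.Gamma (x + a) ≤ Real.Gamma x * x ^ a := by
  have hx0 : (0:ℝ) < x := lt_of_lt_of_le one_pos hx
  have h1 : (x : ℝ) ∈ Set.Ioi (0:ℝ) := hx0
  have h2 : (x + 1 : ℝ) ∈ Set.Ioi (0:ℝ) := by simp [Set.mem_Ioi]; linarith
  have hconv := Real.convexOn_log_Gamma.2 h1 h2 (by linarith : (0:ℝ) ≤ 1 - a) ha0 (by ring)
  have hcomb : (1 - a) • x + a • (x + 1) = x + a := by simp [smul_eq_mul]; ring
  rw [hcomb] at hconv
  simp only [Function.comp_apply, smul_eq_mul] at hconv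
  have hGx : 0 < Real.Gamma x := Real.Gamma_pos_of_pos hx0
  have hGxa : 0 < Real.Gamma (x + a) := Real.Gamma_pos_of_pos (by linarith)
  have hGx1 : Real.Gamma (x + 1) = x * Real.Gamma x := Real.Gamma_add_one (ne_of_gt hx0)
  rw [hGx1, Real.log_mul (ne_of_gt hx0) (ne_of_gt hGx)] at hconv
  have : Real.log (Real.Gamma (x + a)) ≤ Real.log (Real.Gamma x) + a * Real.log x := by
    nlinarith [hconv]
  calc Real.Gamma (x + a) = Real.exp (Real.log (Real.Gamma (x+a))) := (Real.exp_log hGxa).symm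
    _ ≤ Real.exp (Real.log (Real.Gamma x) + a * Real.log x) := Real.exp_le_exp.2 this
    _ = Real.Gamma x * x ^ a := by
        rw [Real.exp_add, Real.exp_log hGx, Real.rpow_def_of_pos hx0, mul_comm a]

lemma Gamma_half_ge {s : ℝ} (hs : 3/2 ≤ s) :
    Real.Gamma s * (s - 1/2) ^ ((1:ℝ)/2) ≤ Real.Gamma (s + 1/2) := by
  have h1 : (1:ℝ) ≤ s - 1/2 := by linarith
  have h0 : (0:ℝ) < s - 1/2 := by linarith
  have key := Gamma_add_le h1 (by norm_num : (0:ℝ) ≤ 1/2) (by norm_num)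
  have e1 : s - 1/2 + 1/2 = s := by ring
  rw [e1] at key
  have e2 : Real.Gamma (s + 1/2) = (s - 1/2) * Real.Gamma (s - 1/2) := by
    have := Real.Gamma_add_one (ne_of_gt h0)
    rw [show s - 1/2 + 1 = s + 1/2 by ring] at this
    exact this
  have hrp : (0:ℝ) < (s - 1/2) ^ ((1:ℝ)/2) := Real.rpow_pos_of_pos h0 _
  -- from key : Γ s ≤ Γ(s-1/2) * (s-1/2)^(1/2)
  -- multiply both sides by (s-1/2)^(1/2):
  have : Real.Gamma s * (s - 1/2) ^ ((1:ℝ)/2) ≤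
      Real.Gamma (s - 1/2) * ((s - 1/2) ^ ((1:ℝ)/2) * (s - 1/2) ^ ((1:ℝ)/2)) := by
    nlinarith [key, hrp]
  rw [← Real.rpow_add h0] at this
  norm_num at this
  rw [e2]
  linarith [this]

lemma log_ge_aux {s x : ℝ} (hs : 0 < s) (hsx : s ≤ x) :
    Real.log s + (x - s)/x ≤ Real.log x := by
  have hx : 0 < x := lt_of_lt_of_le hs hsx
  have h := Real.log_le_sub_one_of_pos (show (0:ℝ) < s/x by positivity)
  rw [Real.log_div (ne_of_gt hs) (ne_of_gt hx)] at h
  have : s/x - 1 = -((x - s)/x) := by field_simp; ring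
  rw [this] at h
  linarith

lemma stirling_pointwise {s x : ℝ} (hs : 1 ≤ s) (hx1 : s ≤ x) (hx2 : x ≤ s + Real.sqrt s) :
    s ^ s * Real.exp (-s - 1) ≤ Real.exp (-x) * x ^ s := by
  have hs0 : (0:ℝ) < s := lt_of_lt_of_le one_pos hs
  have hx0 : (0:ℝ) < x := lt_of_lt_of_le hs0 hx1
  have hlog := log_ge_aux hs0 hx1
  have hmul : s * Real.log s + s * ((x - s)/x) ≤ s * Real.log x := by nlinarith [hlog]
  have hsq : (x - s)^2 ≤ s := by
    nlinarith [Real.sq_sqrt (le_of_lt hs0), Real.sqrt_nonneg s]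
  have key : s * Real.log s - s - 1 ≤ s * Real.log x - x := by
    have e : s * ((x - s)/x) - x + s + 1 = 1 - (x-s)^2 / x := by
      field_simp; ring
    have hdiv : (x-s)^2 / x ≤ 1 := by
      rw [div_le_one hx0]; nlinarith [hsq]
    have h2 : s * ((x - s)/x) - x + s + 1 ≥ 0 := by rw [e]; linarith
    linarith
  calc s ^ s * Real.exp (-s - 1) = Real.exp (s * Real.log s - s - 1) := by
        rw [Real.rpow_def_of_pos hs0, mul_comm (Real.log s) s, ← Real.exp_add]
        ring_nf
    _ ≤ Real.exp (s * Real.log x - x) := Real.exp_le_exp.2 key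
    _ = Real.exp (-x) * x ^ s := by
        rw [Real.rpow_def_of_pos hx0, mul_comm (Real.log x) s, sub_eq_add_neg, Real.exp_add, mul_comm]

lemma Gamma_stirling {s : ℝ} (hs : 1 ≤ s) :
    Real.exp (-1) * (s ^ (s - 1/2) * Real.exp (-s)) ≤ Real.Gamma s := by
  have hs0 : (0:ℝ) < s := lt_of_lt_of_le one_pos hs
  have hsq : (0:ℝ) < Real.sqrt s := Real.sqrt_pos.2 hs0
  have hint : IntegrableOn (fun x : ℝ => Real.exp (-x) * x ^ s) (Set.Ioi 0) := by
    have := Real.GammaIntegral_convergent (show (0:ℝ) < s + 1 by linarith)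
    simpa using this
  have hG : Real.Gamma (s+1) = ∫ x in Set.Ioi (0:ℝ), Real.exp (-x) * x ^ s := by
    rw [Real.Gamma_eq_integral (by linarith : (0:ℝ) < s + 1)]
    simp
  have hsub : Set.Ioc s (s + Real.sqrt s) ⊆ Set.Ioi (0:ℝ) := by
    intro y hy
    exact lt_trans hs0 hy.1
  have step1 : ∫ x in Set.Ioc s (s + Real.sqrt s), Real.exp (-x) * x ^ s
      ≤ ∫ x in Set.Ioi (0:ℝ), Real.exp (-x) * x ^ s := by
    apply MeasureTheory.setIntegral_mono_set hint
    · filter_upwards [MeasureTheory.self_mem_ae_restrict measurableSet_Ioi] with y hy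
      simp only [Set.mem_Ioi] at hy
      positivity
    · exact HasSubset.Subset.eventuallyLE hsub
  have step2 : (Real.sqrt s) * (s ^ s * Real.exp (-s - 1))
      ≤ ∫ x in Set.Ioc s (s + Real.sqrt s), Real.exp (-x) * x ^ s := by
    have hconst : ∫ _x in Set.Ioc s (s + Real.sqrt s), (s ^ s * Real.exp (-s - 1))
        = (Real.sqrt s) * (s ^ s * Real.exp (-s - 1)) := by
      rw [MeasureTheory.setIntegral_const]
      rw [measureReal_def, Real.volume_Ioc]
      rw [ENNReal.toReal_ofReal (by linarith : (0:ℝ) ≤ s + Real.sqrt s - s)]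
      simp [smul_eq_mul]
    rw [← hconst]
    apply MeasureTheory.setIntegral_mono_on
    · exact MeasureTheory.integrableOn_const (by rw [Real.volume_Ioc]; exact ENNReal.ofReal_ne_top)
    · exact hint.mono_set hsub
    · exact measurableSet_Ioc
    · intro x hx
      exact stirling_pointwise hs (le_of_lt hx.1) hx.2
  have hG1 : (Real.sqrt s) * (s ^ s * Real.exp (-s - 1)) ≤ Real.Gamma (s+1) := by
    rw [hG]; exact le_trans step2 step1
  rw [Real.Gamma_add_one (ne_of_gt hs0)] at hG1
  -- Γ s ≥ sqrt s * s^s * exp(-s-1) / s = s^(s-1/2) exp(-s-1)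
  have hss : Real.sqrt s * s ^ s = s ^ (s - 1/2) * s := by
    rw [Real.sqrt_eq_rpow, ← Real.rpow_add hs0, ← Real.rpow_add_one (ne_of_gt hs0)]
    ring_nf
  have hexp : Real.exp (-s - 1) = Real.exp (-1) * Real.exp (-s) := by
    rw [← Real.exp_add]; ring_nf
  have h2 : s ^ (s - 1/2) * s * Real.exp (-s-1) ≤ s * Real.Gamma s := by
    calc s ^ (s - 1/2) * s * Real.exp (-s-1) = Real.sqrt s * s ^ s * Real.exp (-s-1) := by rw [hss]
      _ = Real.sqrt s * (s ^ s * Real.exp (-s - 1)) := by ring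
      _ ≤ s * Real.Gamma s := hG1
  have := (mul_le_mul_iff_right₀ hs0).1 (by linarith [h2] : s * (s ^ (s - 1/2) * Real.exp (-s-1)) ≤ s * Real.Gamma s)
  calc Real.exp (-1) * (s ^ (s-1/2) * Real.exp (-s)) = s ^ (s-1/2) * Real.exp (-s-1) := by
        rw [hexp]; ring
    _ ≤ Real.Gamma s := this


lemma Gamma_shift (γ : ℝ) : ∃ C : ℝ, 0 < C ∧ ∃ s₀ : ℝ, 2 ≤ s₀ ∧ ∀ s : ℝ, s₀ ≤ s →
    Real.Gamma (s + γ) ≤ C * (Real.Gamma s * s ^ γ) := by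
  classical
  set n : ℕ := ⌈|γ|⌉₊ + 1 with hn
  have habs : -|γ| ≤ γ := neg_abs_le γ
  have habs' : γ ≤ |γ| := le_abs_self γ
  have habs0 : 0 ≤ |γ| := abs_nonneg γ
  have hnγ : |γ| + 1 ≤ (n : ℝ) := by
    have := Nat.le_ceil |γ|
    push_cast [hn]; linarith
  have hfloor : (0:ℤ) ≤ ⌊γ⌋ + n := by
    have h1 : (γ:ℝ) - 1 < (⌊γ⌋ : ℝ) := Int.sub_one_lt_floor γ
    have h2 : -(n:ℝ) ≤ γ - 1 := by linarith
    have h3 : -(n:ℝ) < (⌊γ⌋:ℝ) := lt_of_le_of_lt h2 h1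
    have h4 : -(n:ℤ) < ⌊γ⌋ := by exact_mod_cast h3
    linarith
  set m : ℕ := (⌊γ⌋ + n).toNat with hm
  have hmz : (m : ℤ) = ⌊γ⌋ + n := Int.toNat_of_nonneg hfloor
  have hmr : (m : ℝ) = (⌊γ⌋:ℝ) + n := by exact_mod_cast hmz
  set a : ℝ := γ - ⌊γ⌋ with ha
  have ha0 : 0 ≤ a := by rw [ha]; linarith [Int.floor_le γ]
  have ha1 : a ≤ 1 := by rw [ha]; linarith [Int.lt_floor_add_one γ]
  have hkey : a + (m:ℝ) = γ + (n:ℝ) := by rw [ha, hmr]; ring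
  refine ⟨2 ^ (m + n), by positivity, 2 * |γ| + m + n + 4, ?_, ?_⟩
  · have h1 : (0:ℝ) ≤ (m:ℝ) := Nat.cast_nonneg m
    have h2 : (0:ℝ) ≤ (n:ℝ) := Nat.cast_nonneg n
    linarith
  intro s hs
  have hmnn : (0:ℝ) ≤ (m:ℝ) := Nat.cast_nonneg m
  have hnnn : (0:ℝ) ≤ (n:ℝ) := Nat.cast_nonneg n
  have hs2 : (2:ℝ) ≤ s := by linarith
  have hs0 : (0:ℝ) < s := by linarith
  have hsγ : 0 < s + γ := by linarith
  have hsa : 0 < s + a := by linarith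
  have hG : 0 < Real.Gamma s := Real.Gamma_pos_of_pos hs0
  have e1 : Real.Gamma (s + γ + n) = Real.Gamma (s + γ) * ∏ j ∈ Finset.range n, (s + γ + j) :=
    Gamma_add_nat _ hsγ n
  have e2 : Real.Gamma (s + a + m) = Real.Gamma (s + a) * ∏ j ∈ Finset.range m, (s + a + j) :=
    Gamma_add_nat _ hsa m
  have eeq : s + γ + (n:ℝ) = s + a + (m:ℝ) := by linarith
  have hP1 : (s/2) ^ n ≤ ∏ j ∈ Finset.range n, (s + γ + j) := by
    rw [show (s/2)^n = ∏ _j ∈ Finset.range n, (s/2) by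
      rw [Finset.prod_const, Finset.card_range]]
    apply Finset.prod_le_prod (fun j _ => by positivity)
    intro j _
    have hj : (0:ℝ) ≤ (j:ℝ) := Nat.cast_nonneg j
    linarith
  have hP2 : ∏ j ∈ Finset.range m, (s + a + j) ≤ (2*s) ^ m := by
    rw [show (2*s)^m = ∏ _j ∈ Finset.range m, (2*s) by
      rw [Finset.prod_const, Finset.card_range]]
    apply Finset.prod_le_prod
    · intro j _
      have hj : (0:ℝ) ≤ (j:ℝ) := Nat.cast_nonneg j
      positivity
    intro j hj
    have hj' : (j:ℝ) + 1 ≤ (m:ℝ) := by exact_mod_cast Finset.mem_range.1 hj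
    linarith
  have hGaa : Real.Gamma (s + a) ≤ Real.Gamma s * s ^ a :=
    Gamma_add_le (by linarith) ha0 ha1
  have hprodpos : (0:ℝ) < ∏ j ∈ Finset.range n, (s + γ + j) := by
    apply Finset.prod_pos; intro j _
    have hj : (0:ℝ) ≤ (j:ℝ) := Nat.cast_nonneg j
    linarith
  have hGγpos : 0 < Real.Gamma (s + γ) := Real.Gamma_pos_of_pos hsγ
  have hprodnn : (0:ℝ) ≤ ∏ j ∈ Finset.range m, (s + a + j) :=
    Finset.prod_nonneg (fun j _ => by
      have hj : (0:ℝ) ≤ (j:ℝ) := Nat.cast_nonneg j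
      positivity)
  have hmain : Real.Gamma (s + γ) * (s/2) ^ n ≤ Real.Gamma s * s ^ a * (2*s) ^ m := by
    calc Real.Gamma (s + γ) * (s/2) ^ n
        ≤ Real.Gamma (s + γ) * ∏ j ∈ Finset.range n, (s + γ + j) :=
          mul_le_mul_of_nonneg_left hP1 (le_of_lt hGγpos)
      _ = Real.Gamma (s + a) * ∏ j ∈ Finset.range m, (s + a + j) := by
          rw [← e1, ← e2, eeq]
      _ ≤ (Real.Gamma s * s ^ a) * (2*s) ^ m :=
          mul_le_mul hGaa hP2 hprodnn (by positivity)
  -- now divide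
  have hpow : (2:ℝ)^(m+n) * (Real.Gamma s * s ^ γ) * (s/2)^n
      = Real.Gamma s * s ^ a * (2*s) ^ m := by
    have hsn : (s:ℝ)^(n:ℕ) = s ^ ((n:ℕ):ℝ) := (Real.rpow_natCast s n).symm
    have hsm : (s:ℝ)^(m:ℕ) = s ^ ((m:ℕ):ℝ) := (Real.rpow_natCast s m).symm
    rw [div_pow, mul_pow, pow_add, hsn, hsm]
    rw [show (2:ℝ)^m * 2^n * (Real.Gamma s * s ^ γ) * (s ^ ((n:ℕ):ℝ) / 2 ^ n)
        = (2:ℝ)^m * ((2:ℝ)^n / 2^n) * Real.Gamma s * (s ^ γ * s ^ ((n:ℕ):ℝ)) by ring]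
    rw [div_self (by positivity : ((2:ℝ)^n) ≠ 0), ← Real.rpow_add hs0]
    rw [show γ + (n:ℝ) = a + (m:ℝ) from hkey.symm, Real.rpow_add hs0]
    ring
  have := mul_le_mul_of_nonneg_right (le_refl (Real.Gamma (s + γ))) (le_of_lt hGγpos)
  have hfinal : Real.Gamma (s + γ) * (s/2)^n ≤ (2:ℝ)^(m+n) * (Real.Gamma s * s ^ γ) * (s/2)^n := by
    rw [hpow]; exact hmain
  exact le_of_mul_le_mul_right hfinal (by positivity)

lemma h_le_max {p x : ℝ} (hp : 0 < p) (hx : 0 < x) :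
    x ^ p * Real.exp (-(x/2)) ≤ (2*p) ^ p * Real.exp (-p) := by
  have h2p : (0:ℝ) < 2*p := by linarith
  have hlog : Real.log x ≤ Real.log (2*p) + (x/(2*p) - 1) := by
    have h := Real.log_le_sub_one_of_pos (show (0:ℝ) < x/(2*p) by positivity)
    rw [Real.log_div (ne_of_gt hx) (ne_of_gt h2p)] at h
    linarith
  have key : p * Real.log x - x/2 ≤ p * Real.log (2*p) - p := by
    have h1 := mul_le_mul_of_nonneg_left hlog (le_of_lt hp)
    have e : p * (Real.log (2*p) + (x/(2*p) - 1)) = p * Real.log (2*p) + (x/2 - p) := by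
      field_simp
    rw [e] at h1
    linarith
  calc x^p * Real.exp (-(x/2)) = Real.exp (p * Real.log x - x/2) := by
        rw [Real.rpow_def_of_pos hx, mul_comm (Real.log x) p, ← Real.exp_add]; ring_nf
    _ ≤ Real.exp (p * Real.log (2*p) - p) := Real.exp_le_exp.2 key
    _ = (2*p)^p * Real.exp (-p) := by
        rw [Real.rpow_def_of_pos h2p, mul_comm (Real.log (2*p)) p, ← Real.exp_add]; ring_nf

lemma h_hasDeriv {p : ℝ} (x : ℝ) (hx : 0 < x) :
    HasDerivAt (fun y : ℝ => y ^ p * Real.exp (-(y/2)))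
      (p * x ^ (p-1) * Real.exp (-(x/2)) + x ^ p * (Real.exp (-(x/2)) * (-(1/2)))) x := by
  have h1 : HasDerivAt (fun y : ℝ => y ^ p) (p * x ^ (p-1)) x :=
    Real.hasDerivAt_rpow_const (Or.inl (ne_of_gt hx))
  have h2 : HasDerivAt (fun y : ℝ => -(y/2)) (-(1/2)) x := by
    exact (((hasDerivAt_id x).div_const 2).neg).congr_deriv (by norm_num)
  have h3 : HasDerivAt (fun y : ℝ => Real.exp (-(y/2))) (Real.exp (-(x/2)) * (-(1/2))) x :=
    h2.exp
  exact h1.mul h3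

lemma h_deriv_eq {p : ℝ} (x : ℝ) (hx : 0 < x) :
    p * x ^ (p-1) * Real.exp (-(x/2)) + x ^ p * (Real.exp (-(x/2)) * (-(1/2)))
      = x ^ (p-1) * Real.exp (-(x/2)) * (p - x/2) := by
  have hxp : x ^ p = x ^ (p-1) * x := by
    rw [show p = (p-1)+1 by ring, Real.rpow_add_one (ne_of_gt hx)]
    ring_nf
  rw [hxp]; ring

lemma h_contOn {p : ℝ} (S : Set ℝ) (hS : S ⊆ Set.Ioi 0) :
    ContinuousOn (fun y : ℝ => y ^ p * Real.exp (-(y/2))) S := by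
  intro y hy
  have hy0 : (0:ℝ) < y := hS hy
  apply ContinuousAt.continuousWithinAt
  exact (Real.continuousAt_rpow_const y p (Or.inl (ne_of_gt hy0))).mul
    ((Real.continuous_exp.comp ((continuous_id.div_const 2).neg)).continuousAt)

lemma h_mono {p : ℝ} (hp : 0 < p) :
    MonotoneOn (fun y : ℝ => y ^ p * Real.exp (-(y/2))) (Set.Ioc 0 (2*p)) := by
  apply monotoneOn_of_deriv_nonneg (convex_Ioc _ _)
  · exact h_contOn _ (fun y hy => hy.1)
  · rw [interior_Ioc]
    intro y hy
    exact ((h_hasDeriv y hy.1).differentiableAt).differentiableWithinAt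
  · rw [interior_Ioc]
    intro y hy
    rw [(h_hasDeriv y hy.1).deriv, h_deriv_eq y hy.1]
    have h1 : (0:ℝ) < y ^ (p-1) := Real.rpow_pos_of_pos hy.1 _
    have h2 : (0:ℝ) < Real.exp (-(y/2)) := Real.exp_pos _
    have h3 : 0 ≤ p - y/2 := by
      have := hy.2; linarith
    positivity

lemma h_anti {p : ℝ} (hp : 0 < p) :
    AntitoneOn (fun y : ℝ => y ^ p * Real.exp (-(y/2))) (Set.Ici (2*p)) := by
  apply antitoneOn_of_deriv_nonpos (convex_Ici _)
  · exact h_contOn _ (fun y hy => lt_of_lt_of_le (by linarith : (0:ℝ) < 2*p) hy)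
  · rw [interior_Ici]
    intro y hy
    have hy0 : (0:ℝ) < y := lt_trans (by linarith : (0:ℝ) < 2*p) hy
    exact ((h_hasDeriv y hy0).differentiableAt).differentiableWithinAt
  · rw [interior_Ici]
    intro y hy
    have hy0 : (0:ℝ) < y := lt_trans (by linarith : (0:ℝ) < 2*p) hy
    rw [(h_hasDeriv y hy0).deriv, h_deriv_eq y hy0]
    have h1 : (0:ℝ) ≤ y ^ (p-1) * Real.exp (-(y/2)) := by positivity
    have h3 : p - y/2 ≤ 0 := by
      have := hy; simp only [Set.mem_Ioi] at this; linarith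
    exact mul_nonpos_of_nonneg_of_nonpos h1 h3

lemma h_integrableOn {p : ℝ} (hp : 0 < p) :
    IntegrableOn (fun x : ℝ => x ^ p * Real.exp (-(x/2))) (Set.Ioi 0) := by
  have base : IntegrableOn (fun x : ℝ => Real.exp (-x) * x ^ p) (Set.Ioi 0) := by
    simpa using Real.GammaIntegral_convergent (show (0:ℝ) < p+1 by linarith)
  have half : IntegrableOn (fun x : ℝ => Real.exp (-((1/2)*x)) * ((1/2)*x) ^ p) (Set.Ioi 0) := by
    have h2 := (integrableOn_Ioi_comp_mul_left_iff
      (fun x : ℝ => Real.exp (-x) * x ^ p) 0 (show (0:ℝ) < 1/2 by norm_num)).2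
    simpa using h2 (by simpa using base)
  apply IntegrableOn.congr_fun (half.const_mul ((2:ℝ)^p)) ?_ measurableSet_Ioi
  intro x hx
  simp only [Set.mem_Ioi] at hx
  have e1 : ((1/2:ℝ)*x) ^ p = (1/2:ℝ)^p * x ^ p :=
    Real.mul_rpow (by norm_num) (le_of_lt hx)
  have e2 : (2:ℝ)^p * (1/2:ℝ)^p = 1 := by
    rw [← Real.mul_rpow (by norm_num) (by norm_num)]
    norm_num
  show (2:ℝ)^p * (Real.exp (-(1/2*x)) * ((1/2*x) ^ p)) = x ^ p * Real.exp (-(x/2))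
  rw [e1, show -((1/2:ℝ)*x) = -(x/2) by ring]
  calc (2:ℝ)^p * (Real.exp (-(x/2)) * ((1/2:ℝ)^p * x ^ p))
      = ((2:ℝ)^p * (1/2:ℝ)^p) * (x ^ p * Real.exp (-(x/2))) := by ring
    _ = x ^ p * Real.exp (-(x/2)) := by rw [e2]; ring

lemma h_integral {p : ℝ} (hp : 0 < p) :
    ∫ x in Set.Ioi (0:ℝ), x ^ p * Real.exp (-(x/2)) = 2 ^ (p+1) * Real.Gamma (p+1) := by
  have key := Real.integral_rpow_mul_exp_neg_mul_Ioi
    (show (0:ℝ) < p+1 by linarith) (show (0:ℝ) < 1/2 by norm_num)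
  rw [show (1:ℝ)/(1/2) = 2 by norm_num] at key
  rw [← key]
  apply setIntegral_congr_fun measurableSet_Ioi
  intro x hx
  show x ^ p * Real.exp (-(x/2)) = x ^ (p+1-1) * Real.exp (-(1/2*x))
  rw [show p + 1 - 1 = p by ring, show (1/2:ℝ)*x = x/2 by ring]

lemma sum_le {p c δ : ℝ} (hp : 1 ≤ p) (hc : 0 < c) (hδ : 0 < δ)
    (F : Finset ℕ)
    (hpos : ∀ D ∈ F, 0 < D)
    (hgap : ∀ D ∈ F, ∀ D' ∈ F, D < D' → c * D + δ ≤ c * D') :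
    ∑ D ∈ F, (c*D) ^ p * Real.exp (-(c*D/2))
      ≤ 2 * ((2*p)^p * Real.exp (-p)) + (1/δ) * (2^(p+1) * Real.Gamma (p+1)) := by
  classical
  have hp0 : (0:ℝ) < p := by linarith
  set f : ℝ → ℝ := fun y => y ^ p * Real.exp (-(y/2)) with hfdef
  have hfnonneg : ∀ y : ℝ, 0 < y → 0 ≤ f y := by
    intro y hy; simp only [hfdef]; positivity
  set M : ℝ := (2*p)^p * Real.exp (-p) with hM
  have hM0 : 0 ≤ M := by rw [hM]; positivity
  set P : ℕ → Prop := fun D => c*D + δ ≤ 2*p with hP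
  set Q : ℕ → Prop := fun D => 2*p + δ ≤ c*D with hQ
  set FA := F.filter P with hFA
  set FB := (F.filter (fun D => ¬ P D)).filter Q with hFB
  set FC := (F.filter (fun D => ¬ P D)).filter (fun D => ¬ Q D) with hFC
  have hsplit : ∑ D ∈ F, f (c*D) = ∑ D ∈ FA, f (c*D) + (∑ D ∈ FB, f (c*D) + ∑ D ∈ FC, f (c*D)) := by
    rw [hFA, hFB, hFC, Finset.sum_filter_add_sum_filter_not (F.filter (fun D => ¬ P D)) Q]
    rw [Finset.sum_filter_add_sum_filter_not F P]
  have hcDpos : ∀ D ∈ F, (0:ℝ) < c * D := by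
    intro D hD
    have := hpos D hD
    have : (0:ℝ) < (D:ℝ) := by exact_mod_cast this
    positivity
  -- Part A
  have hintIoc : IntegrableOn f (Set.Ioc (0:ℝ) (2*p)) :=
    (h_integrableOn hp0).mono_set Set.Ioc_subset_Ioi_self
  have hintIoi2p : IntegrableOn f (Set.Ioi (2*p)) :=
    (h_integrableOn hp0).mono_set (fun x hx => lt_trans (by positivity : (0:ℝ) < 2*p) hx)
  have hA : δ * ∑ D ∈ FA, f (c*D) ≤ ∫ x in Set.Ioc (0:ℝ) (2*p), f x := by
    set I : ℕ → Set ℝ := fun D => Set.Ioc (c*D) (c*D + δ) with hI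
    have hIsub : ∀ D ∈ FA, I D ⊆ Set.Ioc (0:ℝ) (2*p) := by
      intro D hD x hx
      have h1 : (0:ℝ) < c * D := hcDpos D (Finset.mem_of_mem_filter D hD)
      have h2 : c*D + δ ≤ 2*p := (Finset.mem_filter.1 hD).2
      exact ⟨lt_trans h1 hx.1, le_trans hx.2 h2⟩
    have hstep1 : ∀ D ∈ FA, δ * f (c*D) ≤ ∫ x in I D, f x := by
      intro D hD
      have h1 : (0:ℝ) < c * D := hcDpos D (Finset.mem_of_mem_filter D hD)
      have h2 : c*D + δ ≤ 2*p := (Finset.mem_filter.1 hD).2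
      have hconst : ∫ _x in I D, f (c*D) = δ * f (c*D) := by
        rw [MeasureTheory.setIntegral_const, hI]
        simp only [measureReal_def, Real.volume_Ioc]
        rw [ENNReal.toReal_ofReal (by linarith : (0:ℝ) ≤ c*D + δ - c*D)]
        rw [smul_eq_mul]
        ring_nf
      rw [← hconst]
      apply MeasureTheory.setIntegral_mono_on
      · exact MeasureTheory.integrableOn_const (by rw [hI]; simp [Real.volume_Ioc])
      · exact hintIoc.mono_set (hIsub D hD)
      · exact measurableSet_Ioc
      · intro x hx
        apply h_mono hp0 ⟨h1, by linarith⟩ (hIsub D hD hx) (le_of_lt hx.1)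
    have hdisj : (FA : Set ℕ).Pairwise (Function.onFun Disjoint I) := by
      intro D hD D' hD' hne
      simp only [Finset.coe_mem, Finset.mem_coe] at hD hD'
      have hDF : D ∈ F := Finset.mem_of_mem_filter D hD
      have hD'F : D' ∈ F := Finset.mem_of_mem_filter D' hD'
      rcases lt_or_gt_of_ne hne with h | h
      · have hg := hgap D hDF D' hD'F h
        exact Set.Ioc_disjoint_Ioc.2 (le_trans (min_le_left _ _) (le_trans hg (le_max_right _ _)))
      · have hg := hgap D' hD'F D hDF h
        exact Set.Ioc_disjoint_Ioc.2 (le_trans (min_le_right _ _) (le_trans hg (le_max_left _ _)))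
    have hstep2 : ∑ D ∈ FA, ∫ x in I D, f x = ∫ x in ⋃ D ∈ FA, I D, f x := by
      rw [MeasureTheory.integral_biUnion_finset FA (fun D _ => measurableSet_Ioc) hdisj
        (fun D hD => hintIoc.mono_set (hIsub D hD))]
    have hstep3 : ∫ x in ⋃ D ∈ FA, I D, f x ≤ ∫ x in Set.Ioc (0:ℝ) (2*p), f x := by
      apply MeasureTheory.setIntegral_mono_set hintIoc
      · filter_upwards [MeasureTheory.self_mem_ae_restrict measurableSet_Ioc] with y hy
        exact hfnonneg y hy.1
      · exact HasSubset.Subset.eventuallyLE (Set.iUnion₂_subset hIsub)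
    calc δ * ∑ D ∈ FA, f (c*D) = ∑ D ∈ FA, δ * f (c*D) := Finset.mul_sum _ _ _
      _ ≤ ∑ D ∈ FA, ∫ x in I D, f x := Finset.sum_le_sum hstep1
      _ = ∫ x in ⋃ D ∈ FA, I D, f x := hstep2
      _ ≤ ∫ x in Set.Ioc (0:ℝ) (2*p), f x := hstep3
  -- Part B
  have hB : δ * ∑ D ∈ FB, f (c*D) ≤ ∫ x in Set.Ioi (2*p), f x := by
    set J : ℕ → Set ℝ := fun D => Set.Ioc (c*D - δ) (c*D) with hJ
    have hJsub : ∀ D ∈ FB, J D ⊆ Set.Ioi (2*p) := by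
      intro D hD x hx
      have h2 : 2*p + δ ≤ c*D := (Finset.mem_filter.1 hD).2
      simp only [Set.mem_Ioi]
      have := hx.1
      linarith
    have hstep1 : ∀ D ∈ FB, δ * f (c*D) ≤ ∫ x in J D, f x := by
      intro D hD
      have h2 : 2*p + δ ≤ c*D := (Finset.mem_filter.1 hD).2
      have hconst : ∫ _x in J D, f (c*D) = δ * f (c*D) := by
        rw [MeasureTheory.setIntegral_const, hJ]
        simp only [measureReal_def, Real.volume_Ioc]
        rw [ENNReal.toReal_ofReal (by linarith : (0:ℝ) ≤ c*D - (c*D - δ))]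
        rw [smul_eq_mul]
        ring_nf
      rw [← hconst]
      apply MeasureTheory.setIntegral_mono_on
      · exact MeasureTheory.integrableOn_const (by rw [hJ]; simp [Real.volume_Ioc])
      · exact hintIoi2p.mono_set (hJsub D hD)
      · exact measurableSet_Ioc
      · intro x hx
        have hx2p : 2*p < x := hJsub D hD hx
        apply h_anti hp0 (le_of_lt hx2p) (by simp only [Set.mem_Ici]; linarith) hx.2
    have hdisj : (FB : Set ℕ).Pairwise (Function.onFun Disjoint J) := by
      intro D hD D' hD' hne
      simp only [Finset.mem_coe] at hD hD'
      have hDF : D ∈ F := Finset.mem_of_mem_filter D (Finset.mem_of_mem_filter D hD)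
      have hD'F : D' ∈ F := Finset.mem_of_mem_filter D' (Finset.mem_of_mem_filter D' hD')
      rcases lt_or_gt_of_ne hne with h | h
      · have hg := hgap D hDF D' hD'F h
        exact Set.Ioc_disjoint_Ioc.2 (le_trans (min_le_left _ _) (le_trans (by linarith) (le_max_right _ _)))
      · have hg := hgap D' hD'F D hDF h
        exact Set.Ioc_disjoint_Ioc.2 (le_trans (min_le_right _ _) (le_trans (by linarith) (le_max_left _ _)))
    have hstep2 : ∑ D ∈ FB, ∫ x in J D, f x = ∫ x in ⋃ D ∈ FB, J D, f x := by
      rw [MeasureTheory.integral_biUnion_finset FB (fun D _ => measurableSet_Ioc) hdisj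
        (fun D hD => hintIoi2p.mono_set (hJsub D hD))]
    have hstep3 : ∫ x in ⋃ D ∈ FB, J D, f x ≤ ∫ x in Set.Ioi (2*p), f x := by
      apply MeasureTheory.setIntegral_mono_set hintIoi2p
      · filter_upwards [MeasureTheory.self_mem_ae_restrict measurableSet_Ioi] with y hy
        exact hfnonneg y (lt_trans (by positivity : (0:ℝ) < 2*p) hy)
      · exact HasSubset.Subset.eventuallyLE (Set.iUnion₂_subset hJsub)
    calc δ * ∑ D ∈ FB, f (c*D) = ∑ D ∈ FB, δ * f (c*D) := Finset.mul_sum _ _ _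
      _ ≤ ∑ D ∈ FB, ∫ x in J D, f x := Finset.sum_le_sum hstep1
      _ = ∫ x in ⋃ D ∈ FB, J D, f x := hstep2
      _ ≤ ∫ x in Set.Ioi (2*p), f x := hstep3
  -- Part C
  have hCcard : FC.card ≤ 2 := by
    by_cases hne : FC.Nonempty
    · set D₀ := FC.min' hne with hD₀
      have hmem : D₀ ∈ FC := FC.min'_mem hne
      have hbound : ∀ D ∈ FC, 2*p - δ < c*D ∧ c*D < 2*p + δ := by
        intro D hD
        have h1 : ¬ P D := (Finset.mem_filter.1 (Finset.mem_of_mem_filter D hD)).2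
        have h2 : ¬ Q D := (Finset.mem_filter.1 hD).2
        simp only [hP, not_le] at h1
        simp only [hQ, not_le] at h2
        constructor <;> linarith
      have herase : (FC.erase D₀).card ≤ 1 := by
        apply Finset.card_le_one.2
        intro D hD D' hD'
        by_contra hne'
        have hDm : D ∈ FC := Finset.mem_of_mem_erase hD
        have hD'm : D' ∈ FC := Finset.mem_of_mem_erase hD'
        have hDF : D ∈ F := Finset.mem_of_mem_filter D (Finset.mem_of_mem_filter D hDm)
        have hD'F : D' ∈ F := Finset.mem_of_mem_filter D' (Finset.mem_of_mem_filter D' hD'm)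
        have hD₀F : D₀ ∈ F := Finset.mem_of_mem_filter D₀ (Finset.mem_of_mem_filter D₀ hmem)
        have hD0 : D₀ < D := lt_of_le_of_ne (FC.min'_le D hDm) (Ne.symm (Finset.ne_of_mem_erase hD))
        have hD0' : D₀ < D' := lt_of_le_of_ne (FC.min'_le D' hD'm) (Ne.symm (Finset.ne_of_mem_erase hD'))
        have hb₀ := hbound D₀ hmem
        have hbD := hbound D hDm
        have hbD' := hbound D' hD'm
        rcases lt_trichotomy D D' with h | h | h
        · have g1 := hgap D₀ hD₀F D hDF hD0
          have g2 := hgap D hDF D' hD'F h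
          linarith [hb₀.1, hbD'.2]
        · exact hne' h
        · have g1 := hgap D₀ hD₀F D' hD'F hD0'
          have g2 := hgap D' hD'F D hDF h
          linarith [hb₀.1, hbD.2]
      have := Finset.card_erase_add_one hmem
      omega
    · rw [Finset.not_nonempty_iff_eq_empty] at hne
      simp [hne]
  have hC : ∑ D ∈ FC, f (c*D) ≤ 2 * M := by
    have h1 : ∑ D ∈ FC, f (c*D) ≤ FC.card • M := by
      apply Finset.sum_le_card_nsmul
      intro D hD
      have hDF : D ∈ F := Finset.mem_of_mem_filter D (Finset.mem_of_mem_filter D hD)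
      exact h_le_max hp0 (hcDpos D hDF)
    rw [nsmul_eq_mul] at h1
    have h2 : (FC.card : ℝ) ≤ 2 := by exact_mod_cast hCcard
    nlinarith [h1, h2, hM0]
  -- combine
  have hAB : ∑ D ∈ FA, f (c*D) + ∑ D ∈ FB, f (c*D) ≤ (1/δ) * (2^(p+1) * Real.Gamma (p+1)) := by
    have hsum : (∫ x in Set.Ioc (0:ℝ) (2*p), f x) + ∫ x in Set.Ioi (2*p), f x
        = 2^(p+1) * Real.Gamma (p+1) := by
      rw [← MeasureTheory.setIntegral_union (Set.Ioc_disjoint_Ioi le_rfl) measurableSet_Ioi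
        hintIoc hintIoi2p]
      rw [Set.Ioc_union_Ioi_eq_Ioi (by positivity : (0:ℝ) ≤ 2*p)]
      exact h_integral hp0
    have hδsum : δ * (∑ D ∈ FA, f (c*D) + ∑ D ∈ FB, f (c*D)) ≤ 2^(p+1) * Real.Gamma (p+1) := by
      rw [mul_add]
      calc δ * ∑ D ∈ FA, f (c*D) + δ * ∑ D ∈ FB, f (c*D)
          ≤ (∫ x in Set.Ioc (0:ℝ) (2*p), f x) + ∫ x in Set.Ioi (2*p), f x := add_le_add hA hB
        _ = 2^(p+1) * Real.Gamma (p+1) := hsum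
    have hδ' : (0:ℝ) < 1/δ := by positivity
    have h3 := mul_le_mul_of_nonneg_left hδsum (le_of_lt hδ')
    have h4 : (1/δ) * (δ * (∑ D ∈ FA, f (c*D) + ∑ D ∈ FB, f (c*D)))
        = ∑ D ∈ FA, f (c*D) + ∑ D ∈ FB, f (c*D) := by
      field_simp
    rw [h4] at h3
    linarith [h3]
  rw [hsplit]
  linarith [hAB, hC]

lemma sqrt_pi_le_two : Real.sqrt π ≤ 2 := by
  rw [show (2:ℝ) = Real.sqrt 4 by
    rw [show (4:ℝ) = 2^2 by norm_num, Real.sqrt_sq (by norm_num : (0:ℝ) ≤ 2)]]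
  exact Real.sqrt_le_sqrt (by linarith [Real.pi_le_four])

lemma Gamma_l_half_lower {s : ℝ} (hs : 2 ≤ s) :
    (1/4) * ((2:ℝ)^s * (Real.Gamma s * s ^ ((1:ℝ)/4))) ≤ Real.Gamma (2*s) ^ ((1:ℝ)/2) := by
  have hs0 : (0:ℝ) < s := by linarith
  have hG : 0 < Real.Gamma s := Real.Gamma_pos_of_pos hs0
  have h12 : Real.Gamma s * (s - 1/2) ^ ((1:ℝ)/2) ≤ Real.Gamma (s + 1/2) :=
    Gamma_half_ge (by linarith)
  have hhalf : (s/2) ^ ((1:ℝ)/2) ≤ (s - 1/2) ^ ((1:ℝ)/2) :=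
    Real.rpow_le_rpow (by positivity) (by linarith) (by norm_num)
  have hdup := Real.Gamma_mul_Gamma_add_half s
  have hsqrtπ : (0:ℝ) < Real.sqrt π := Real.sqrt_pos.2 Real.pi_pos
  have h2s : (0:ℝ) < (2:ℝ)^(1-2*s) := Real.rpow_pos_of_pos two_pos _
  have hG2s : Real.Gamma (2*s)
      = Real.Gamma s * Real.Gamma (s+1/2) / ((2:ℝ)^(1-2*s) * Real.sqrt π) := by
    rw [eq_div_iff (by positivity)]
    rw [show Real.Gamma (2*s) * ((2:ℝ)^(1-2*s) * Real.sqrt π)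
      = Real.Gamma (2*s) * (2:ℝ)^(1-2*s) * Real.sqrt π by ring]
    rw [show s + 1/2 = s + 1/2 by rfl] at hdup
    rw [← hdup]
  have key : (1/16) * ((2:ℝ)^(2*s) * ((Real.Gamma s)^2 * s ^ ((1:ℝ)/2)))
      ≤ Real.Gamma (2*s) := by
    rw [hG2s]
    have hnum : (Real.Gamma s)^2 * (s ^ ((1:ℝ)/2) / 2)
        ≤ Real.Gamma s * Real.Gamma (s+1/2) := by
      have e1 : (s/2:ℝ) ^ ((1:ℝ)/2) = s ^ ((1:ℝ)/2) / 2 ^ ((1:ℝ)/2) :=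
        Real.div_rpow (le_of_lt hs0) (by norm_num) _
      have e2 : (2:ℝ) ^ ((1:ℝ)/2) ≤ 2 := by
        calc (2:ℝ) ^ ((1:ℝ)/2) ≤ (2:ℝ) ^ (1:ℝ) :=
          Real.rpow_le_rpow_of_exponent_le one_le_two (by norm_num)
        _ = 2 := Real.rpow_one 2
      have e3 : s ^ ((1:ℝ)/2) / 2 ≤ (s/2:ℝ) ^ ((1:ℝ)/2) := by
        rw [e1]
        apply div_le_div_of_nonneg_left (by positivity) (by positivity) e2
      calc (Real.Gamma s)^2 * (s ^ ((1:ℝ)/2) / 2)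
          ≤ (Real.Gamma s)^2 * ((s/2:ℝ) ^ ((1:ℝ)/2)) :=
            mul_le_mul_of_nonneg_left e3 (by positivity)
        _ ≤ (Real.Gamma s)^2 * ((s - 1/2) ^ ((1:ℝ)/2)) :=
            mul_le_mul_of_nonneg_left hhalf (by positivity)
        _ = Real.Gamma s * (Real.Gamma s * (s - 1/2) ^ ((1:ℝ)/2)) := by ring
        _ ≤ Real.Gamma s * Real.Gamma (s+1/2) :=
            mul_le_mul_of_nonneg_left h12 (le_of_lt hG)
    have hden : (2:ℝ)^(1-2*s) * Real.sqrt π ≤ 4 / (2:ℝ)^(2*s) := by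
      have e4 : (2:ℝ)^(1-2*s) = 2 / (2:ℝ)^(2*s) := by
        rw [Real.rpow_sub two_pos, Real.rpow_one]
      rw [e4]
      calc 2 / (2:ℝ)^(2*s) * Real.sqrt π ≤ 2 / (2:ℝ)^(2*s) * 2 :=
            mul_le_mul_of_nonneg_left sqrt_pi_le_two (by positivity)
        _ = 4 / (2:ℝ)^(2*s) := by ring
    have hstep : ((Real.Gamma s)^2 * (s ^ ((1:ℝ)/2) / 2)) / (4 / (2:ℝ)^(2*s))
        ≤ Real.Gamma s * Real.Gamma (s+1/2) / ((2:ℝ)^(1-2*s) * Real.sqrt π) := by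
      apply div_le_div₀ (by positivity) hnum (by positivity) hden
    have hX : ((Real.Gamma s)^2 * (s ^ ((1:ℝ)/2) / 2)) / (4 / (2:ℝ)^(2*s))
        = (1/8) * ((2:ℝ)^(2*s) * ((Real.Gamma s)^2 * s ^ ((1:ℝ)/2))) := by
      field_simp
      ring
    rw [hX] at hstep
    refine le_trans ?_ hstep
    have hT : (0:ℝ) ≤ (2:ℝ)^(2*s) * ((Real.Gamma s)^2 * s ^ ((1:ℝ)/2)) := by positivity
    nlinarith [hT]
  have hsq : ((1/4) * ((2:ℝ)^s * (Real.Gamma s * s ^ ((1:ℝ)/4))))^2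
      = (1/16) * ((2:ℝ)^(2*s) * ((Real.Gamma s)^2 * s ^ ((1:ℝ)/2))) := by
    have a1 : ((2:ℝ)^s)^2 = (2:ℝ)^(2*s) := by
      rw [sq, ← Real.rpow_add two_pos]; ring_nf
    have a2 : (s ^ ((1:ℝ)/4))^2 = s ^ ((1:ℝ)/2) := by
      rw [sq, ← Real.rpow_add hs0]; norm_num
    rw [mul_pow, mul_pow, mul_pow, a1, a2]
    ring
  have h1 : ((1/4) * ((2:ℝ)^s * (Real.Gamma s * s ^ ((1:ℝ)/4))))^2 ≤ Real.Gamma (2*s) := by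
    rw [hsq]; exact key
  have h2 := Real.sqrt_le_sqrt h1
  rw [Real.sqrt_sq (by positivity)] at h2
  rw [← Real.sqrt_eq_rpow]
  exact h2

lemma f2_aux {s β : ℝ} (hs1 : 1 ≤ s) (hsβ : 1 ≤ s - β) :
    (s-β) ^ (s-β) ≤ Real.exp (|β| + β^2) * s ^ (s-β) := by
  have hs0 : (0:ℝ) < s := by linarith
  have hsβ0 : (0:ℝ) < s - β := by linarith
  have hlog : Real.log (s-β) ≤ Real.log s - β/s := by
    have h := Real.log_le_sub_one_of_pos (show (0:ℝ) < (s-β)/s by positivity)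
    rw [Real.log_div (ne_of_gt hsβ0) (ne_of_gt hs0)] at h
    have e : (s-β)/s - 1 = -(β/s) := by field_simp; ring
    rw [e] at h
    linarith
  have hmul : (s-β) * Real.log (s-β) ≤ (s-β) * Real.log s + (|β| + β^2) := by
    have h1 := mul_le_mul_of_nonneg_left hlog (le_of_lt hsβ0)
    have e : (s-β) * (Real.log s - β/s) = (s-β)*Real.log s - β + β^2/s := by
      field_simp; ring
    rw [e] at h1
    have h2 : β^2/s ≤ β^2 := div_le_self (sq_nonneg β) hs1
    have h3 : -β ≤ |β| := neg_le_abs β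
    linarith
  calc (s-β) ^ (s-β) = Real.exp ((s-β) * Real.log (s-β)) := by
        rw [Real.rpow_def_of_pos hsβ0, mul_comm]
    _ ≤ Real.exp ((s-β) * Real.log s + (|β| + β^2)) := Real.exp_le_exp.2 hmul
    _ = Real.exp (|β| + β^2) * s ^ (s-β) := by
        rw [Real.exp_add, Real.rpow_def_of_pos hs0, mul_comm (Real.log s) (s-β)]
        ring

set_option maxHeartbeats 1000000 in
lemma key_est (β : ℝ) : ∃ C : ℝ, 0 < C ∧ ∃ ℓ₀ : ℝ, 2 ≤ ℓ₀ ∧ ∀ l : ℝ, ℓ₀ ≤ l →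
    (1 ≤ l/2 - β) ∧
    2^((l/2 - β)+1) * Real.Gamma ((l/2 - β)+1)
        ≤ C * (l ^ ((3:ℝ)/4-β) * Real.Gamma l ^ ((1:ℝ)/2)) ∧
    (2*(l/2 - β))^(l/2 - β) * Real.exp (-(l/2 - β))
        ≤ C * (l ^ ((1:ℝ)/4-β) * Real.Gamma l ^ ((1:ℝ)/2)) := by
  obtain ⟨C₀, hC₀, s₀, hs₀2, hshift⟩ := Gamma_shift (1-β)
  set C₂ : ℝ := 16 * Real.exp (2*|β| + β^2 + 2) with hC₂
  clear_value C₂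
  have hC₂0 : 0 < C₂ := by rw [hC₂]; positivity
  refine ⟨8*C₀ + C₂, by positivity, 2*s₀ + 4*|β| + 8, by nlinarith [abs_nonneg β], ?_⟩
  intro l hl
  have habs0 : 0 ≤ |β| := abs_nonneg β
  have habs : -|β| ≤ β := neg_abs_le β
  have habs' : β ≤ |β| := le_abs_self β
  set s : ℝ := l/2 with hsdef
  clear_value s
  have hss₀ : s₀ ≤ s := by rw [hsdef]; linarith
  have hs2 : (2:ℝ) ≤ s := by rw [hsdef]; linarith
  have hs0 : (0:ℝ) < s := by linarith
  have hβs : 1 ≤ s - β := by rw [hsdef]; linarith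
  have hp0 : (0:ℝ) < s - β := by linarith
  have hl2s : l = 2*s := by rw [hsdef]; ring
  have hl0 : (0:ℝ) < l := by rw [hl2s]; linarith
  have hGpos : 0 < Real.Gamma s := Real.Gamma_pos_of_pos hs0
  have hGl : (1/4) * ((2:ℝ)^s * (Real.Gamma s * s ^ ((1:ℝ)/4))) ≤ Real.Gamma l ^ ((1:ℝ)/2) := by
    rw [hl2s]; exact Gamma_l_half_lower hs2
  refine ⟨hβs, ?_, ?_⟩
  · -- part (i)
    have h1 : Real.Gamma (s + (1-β)) ≤ C₀ * (Real.Gamma s * s ^ (1-β)) := hshift s hss₀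
    have e1 : (2:ℝ)^(s + (1 - β)) = (2:ℝ)^s * (2:ℝ)^(1-β) := Real.rpow_add two_pos _ _
    have e2 : l ^ ((3:ℝ)/4-β) = (2:ℝ)^((3:ℝ)/4-β) * s ^ ((3:ℝ)/4-β) := by
      rw [hl2s]; exact Real.mul_rpow (by norm_num) (le_of_lt hs0)
    have e3 : s ^ ((3:ℝ)/4-β) * s ^ ((1:ℝ)/4) = s ^ (1-β) := by
      rw [← Real.rpow_add hs0, show (3:ℝ)/4-β+1/4 = 1-β by ring]
    have e4 : (2:ℝ)^((1:ℝ)-β) ≤ 2 * (2:ℝ)^((3:ℝ)/4-β) := by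
      rw [show (2:ℝ) * (2:ℝ)^((3:ℝ)/4-β) = (2:ℝ)^(1:ℝ) * (2:ℝ)^((3:ℝ)/4-β) by
        rw [Real.rpow_one], ← Real.rpow_add two_pos]
      exact Real.rpow_le_rpow_of_exponent_le one_le_two (by linarith)
    have hfin : 2^(s + (1 - β)) * Real.Gamma (s + (1-β))
        ≤ (8*C₀) * (l ^ ((3:ℝ)/4-β) * Real.Gamma l ^ ((1:ℝ)/2)) := by
      calc (2:ℝ)^(s + (1 - β)) * Real.Gamma (s + (1-β))
          = (2:ℝ)^s * (2:ℝ)^((1:ℝ)-β) * Real.Gamma (s + (1-β)) := by rw [e1]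
        _ ≤ (2:ℝ)^s * (2:ℝ)^((1:ℝ)-β) * (C₀ * (Real.Gamma s * s ^ (1-β))) := by
            apply mul_le_mul_of_nonneg_left h1 (by positivity)
        _ ≤ (2:ℝ)^s * (2 * (2:ℝ)^((3:ℝ)/4-β)) * (C₀ * (Real.Gamma s * s ^ (1-β))) := by
            apply mul_le_mul_of_nonneg_right (mul_le_mul_of_nonneg_left e4 (by positivity))
              (by positivity)
        _ = (8*C₀) * (((2:ℝ)^((3:ℝ)/4-β) * s^((3:ℝ)/4-β))
              * ((1/4)*((2:ℝ)^s*(Real.Gamma s * s^((1:ℝ)/4))))) := by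
            rw [← e3]; ring
        _ = (8*C₀) * (l ^ ((3:ℝ)/4-β) * ((1/4)*((2:ℝ)^s*(Real.Gamma s * s^((1:ℝ)/4))))) := by
            rw [e2]
        _ ≤ (8*C₀) * (l ^ ((3:ℝ)/4-β) * Real.Gamma l ^ ((1:ℝ)/2)) := by
            apply mul_le_mul_of_nonneg_left
              (mul_le_mul_of_nonneg_left hGl (by positivity)) (by positivity)
    rw [show s - β + 1 = s + (1 - β) by ring]
    calc (2:ℝ)^(s + (1 - β)) * Real.Gamma (s + (1-β))
        ≤ (8*C₀) * (l ^ ((3:ℝ)/4-β) * Real.Gamma l ^ ((1:ℝ)/2)) := hfin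
      _ ≤ (8*C₀ + C₂) * (l ^ ((3:ℝ)/4-β) * Real.Gamma l ^ ((1:ℝ)/2)) := by
          apply mul_le_mul_of_nonneg_right (by linarith) (by positivity)
  · -- part (ii)
    have f1 : (2*(s-β))^(s-β) = (2:ℝ)^(s-β) * (s-β)^(s-β) :=
      Real.mul_rpow (by norm_num) (le_of_lt hp0)
    have f2 := f2_aux (by linarith : (1:ℝ) ≤ s) hβs
    have fst := Gamma_stirling (by linarith : (1:ℝ) ≤ s)
    have e2 : l ^ ((1:ℝ)/4-β) = (2:ℝ)^((1:ℝ)/4-β) * s ^ ((1:ℝ)/4-β) := by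
      rw [hl2s]; exact Real.mul_rpow (by norm_num) (le_of_lt hs0)
    have e5 : s ^ ((1:ℝ)/4-β) * (s ^ (s - 1/2) * s ^ ((1:ℝ)/4)) = s ^ (s-β) := by
      rw [← Real.rpow_add hs0, ← Real.rpow_add hs0]
      ring_nf
    have e6 : (2:ℝ)^(s-β) = (2:ℝ)^s * (2:ℝ)^(-β) := by
      rw [← Real.rpow_add two_pos]; ring_nf
    have e7 : Real.exp (-(s-β)) = Real.exp (-s) * Real.exp β := by
      rw [← Real.exp_add]; ring_nf
    have hscal : (2:ℝ)^(-β) * Real.exp (|β|+β^2+β)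
        ≤ (C₂ * (1/4) * Real.exp (-1)) * (2:ℝ)^((1:ℝ)/4-β) := by
      have g1 : (2:ℝ)^((1:ℝ)/4-β) = (2:ℝ)^((1:ℝ)/4) * (2:ℝ)^(-β) := by
        rw [← Real.rpow_add two_pos]; ring_nf
      have g2 : (1:ℝ) ≤ (2:ℝ)^((1:ℝ)/4) := by
        rw [show (1:ℝ) = (2:ℝ)^(0:ℝ) by rw [Real.rpow_zero]]
        exact Real.rpow_le_rpow_of_exponent_le one_le_two (by norm_num)
      have g3 : Real.exp (|β|+β^2+β) ≤ C₂ * (1/4) * Real.exp (-1) := by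
        have e8 : C₂ * (1/4) * Real.exp (-1) = 4 * Real.exp (2*|β| + β^2 + 1) := by
          rw [hC₂, show (2*|β| + β^2 + 2 : ℝ) = (2*|β| + β^2 + 1) + 1 by ring, Real.exp_add]
          rw [show ((-1:ℝ)) = -(1:ℝ) by norm_num, Real.exp_neg]
          have h9 : Real.exp 1 ≠ 0 := ne_of_gt (Real.exp_pos 1)
          field_simp
          ring
        rw [e8]
        calc Real.exp (|β|+β^2+β) ≤ Real.exp (2*|β| + β^2 + 1) := by
              apply Real.exp_le_exp.2; linarith
          _ ≤ 4 * Real.exp (2*|β| + β^2 + 1) := by nlinarith [Real.exp_pos (2*|β| + β^2 + 1)]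
      calc (2:ℝ)^(-β) * Real.exp (|β|+β^2+β)
          ≤ (2:ℝ)^(-β) * (C₂ * (1/4) * Real.exp (-1)) :=
            mul_le_mul_of_nonneg_left g3 (by positivity)
        _ ≤ ((2:ℝ)^((1:ℝ)/4) * (2:ℝ)^(-β)) * (C₂ * (1/4) * Real.exp (-1)) := by
            apply mul_le_mul_of_nonneg_right ?_ (by positivity)
            nlinarith [Real.rpow_pos_of_pos two_pos (-β), g2]
        _ = (C₂ * (1/4) * Real.exp (-1)) * (2:ℝ)^((1:ℝ)/4-β) := by rw [g1]; ring
    set T : ℝ := (2:ℝ)^s * (s ^ (s-β) * Real.exp (-s)) with hT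
    clear_value T
    have hT0 : 0 ≤ T := by rw [hT]; positivity
    have hLup : (2*(s-β))^(s-β) * Real.exp (-(s-β))
        ≤ ((2:ℝ)^(-β) * Real.exp (|β|+β^2+β)) * T := by
      have u1 : (2*(s-β))^(s-β) * Real.exp (-(s-β))
          = ((2:ℝ)^s * (2:ℝ)^(-β) * (s-β)^(s-β)) * (Real.exp (-s) * Real.exp β) := by
        rw [f1, e6, e7]
      have u2 : ((2:ℝ)^s * (2:ℝ)^(-β) * (s-β)^(s-β)) * (Real.exp (-s) * Real.exp β)
          ≤ ((2:ℝ)^s * (2:ℝ)^(-β) * (Real.exp (|β| + β^2) * s ^ (s-β))) * (Real.exp (-s) * Real.exp β) := by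
        apply mul_le_mul_of_nonneg_right (mul_le_mul_of_nonneg_left f2 (by positivity))
          (by positivity)
      have u3 : ((2:ℝ)^s * (2:ℝ)^(-β) * (Real.exp (|β| + β^2) * s ^ (s-β))) * (Real.exp (-s) * Real.exp β)
          = ((2:ℝ)^(-β) * Real.exp (|β|+β^2+β)) * T := by
        rw [hT]
        rw [show Real.exp (|β|+β^2+β) = Real.exp |β| * Real.exp (β^2) * Real.exp β by
          rw [← Real.exp_add, ← Real.exp_add]]
        rw [show Real.exp (|β|+β^2) = Real.exp |β| * Real.exp (β^2) by rw [← Real.exp_add]]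
        ring
      rw [u1, ← u3]
      exact u2
    have hRlow : (C₂ * (1/4) * Real.exp (-1)) * ((2:ℝ)^((1:ℝ)/4-β)) * T
        ≤ C₂ * (l ^ ((1:ℝ)/4-β) * Real.Gamma l ^ ((1:ℝ)/2)) := by
      have step1 : (C₂ * (1/4) * Real.exp (-1)) * ((2:ℝ)^((1:ℝ)/4-β)) * T
          = C₂ * (((2:ℝ)^((1:ℝ)/4-β) * s ^ ((1:ℝ)/4-β))
            * ((1/4)*((2:ℝ)^s*((Real.exp (-1) * (s ^ (s-1/2) * Real.exp (-s))) * s^((1:ℝ)/4))))) := by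
        rw [hT, ← e5]; ring
      rw [step1]
      have step2 : ((2:ℝ)^((1:ℝ)/4-β) * s ^ ((1:ℝ)/4-β))
            * ((1/4)*((2:ℝ)^s*((Real.exp (-1) * (s ^ (s-1/2) * Real.exp (-s))) * s^((1:ℝ)/4))))
          ≤ (l ^ ((1:ℝ)/4-β)) * ((1/4)*((2:ℝ)^s*(Real.Gamma s * s^((1:ℝ)/4)))) := by
        rw [e2]
        apply mul_le_mul_of_nonneg_left ?_ (by positivity)
        apply mul_le_mul_of_nonneg_left ?_ (by norm_num)
        apply mul_le_mul_of_nonneg_left ?_ (by positivity)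
        apply mul_le_mul_of_nonneg_right fst (by positivity)
      calc C₂ * (((2:ℝ)^((1:ℝ)/4-β) * s ^ ((1:ℝ)/4-β))
            * ((1/4)*((2:ℝ)^s*((Real.exp (-1) * (s ^ (s-1/2) * Real.exp (-s))) * s^((1:ℝ)/4)))))
          ≤ C₂ * ((l ^ ((1:ℝ)/4-β)) * ((1/4)*((2:ℝ)^s*(Real.Gamma s * s^((1:ℝ)/4))))) :=
            mul_le_mul_of_nonneg_left step2 (le_of_lt hC₂0)
        _ ≤ C₂ * (l ^ ((1:ℝ)/4-β) * Real.Gamma l ^ ((1:ℝ)/2)) := by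
            apply mul_le_mul_of_nonneg_left
              (mul_le_mul_of_nonneg_left hGl (by positivity)) (le_of_lt hC₂0)
    have hmid : ((2:ℝ)^(-β) * Real.exp (|β|+β^2+β)) * T
        ≤ (C₂ * (1/4) * Real.exp (-1)) * ((2:ℝ)^((1:ℝ)/4-β)) * T :=
      mul_le_mul_of_nonneg_right hscal hT0
    calc (2*(s-β))^(s-β) * Real.exp (-(s-β))
        ≤ ((2:ℝ)^(-β) * Real.exp (|β|+β^2+β)) * T := hLup
      _ ≤ (C₂ * (1/4) * Real.exp (-1)) * ((2:ℝ)^((1:ℝ)/4-β)) * T := hmid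
      _ ≤ C₂ * (l ^ ((1:ℝ)/4-β) * Real.Gamma l ^ ((1:ℝ)/2)) := hRlow
      _ ≤ (8*C₀ + C₂) * (l ^ ((1:ℝ)/4-β) * Real.Gamma l ^ ((1:ℝ)/2)) := by
          apply mul_le_mul_of_nonneg_right (by linarith) (by positivity)

end Q1Lemmas

set_option maxHeartbeats 2000000 in
open Q1Lemmas in
/-- Second case of Lemma 4.3 of the paper: if `v := 2 N v′ ≤ ℓ^{1/2+ε}` then
`Q₁ ≪ ℓ^{α−β+3/4+ε} v^{β−1} N^{−β} (1 + v ℓ^{−1/2})`. -/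
theorem stmt_5 (α β ε : ℝ) (hε : ε ∈ Set.Ioo (0 : ℝ) (1 / 2)) :
    ∃ C : ℝ, 0 < C ∧ ∃ ℓ₀ : ℝ, 2 ≤ ℓ₀ ∧
      ∀ (l : ℝ), ℓ₀ ≤ l → ∀ (N : ℕ), 0 < N → ∀ (a : ℤ) (v' : ℝ), 0 < v' →
        2 * N * v' ≤ l ^ (1 / 2 + ε) →
        Q1 l α β N a v' ≤
          C * l ^ (α - β + 3 / 4 + ε) * (2 * N * v') ^ (β - 1) * (N : ℝ) ^ (-β) *
            (1 + (2 * N * v') * l ^ (-(1 : ℝ) / 2)) := by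
  obtain ⟨C, hC0, ℓ₀, hℓ₀2, hkeyall⟩ := Q1Lemmas.key_est β
  have hπ := Real.pi_pos
  refine ⟨C * ((2*π)^(β-1) + 2*(2*π)^β), by positivity, max ℓ₀ 2, le_max_right _ _, ?_⟩
  intro l hl N hN a v' hv' hvcond
  obtain ⟨hβs, hkey1, hkey2⟩ := hkeyall l (le_trans (le_max_left _ _) hl)
  have hl2 : (2:ℝ) ≤ l := le_trans (le_max_right _ _) hl
  have hl0 : (0:ℝ) < l := by linarith
  simp only [Q1]
  set p : ℝ := l/2 - β with hpdef
  set c : ℝ := 4*π*v' with hc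
  set v : ℝ := 2*(N:ℝ)*v' with hv
  set δ : ℝ := c*(N:ℝ) with hδ
  have hN0 : (0:ℝ) < (N:ℝ) := by exact_mod_cast hN
  have hc0 : (0:ℝ) < c := by rw [hc]; positivity
  have hv0 : (0:ℝ) < v := by rw [hv]; positivity
  have hδ0 : (0:ℝ) < δ := by rw [hδ]; positivity
  have hδv : δ = 2*π*v := by rw [hδ, hc, hv]; ring
  have hΓl : 0 < Real.Gamma l := Real.Gamma_pos_of_pos hl0
  have hp1 : (1:ℝ) ≤ p := hβs
  have hp0 : (0:ℝ) < p := by linarith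
  set K : ℝ := Real.Gamma l ^ (-(1:ℝ)/2) * l^α * c^β with hK
  have hK0 : (0:ℝ) ≤ K := by
    rw [hK]
    have h1 : (0:ℝ) ≤ Real.Gamma l ^ (-(1:ℝ)/2) := Real.rpow_nonneg (le_of_lt hΓl) _
    have h2 : (0:ℝ) ≤ l^α := Real.rpow_nonneg (le_of_lt hl0) _
    have h3 : (0:ℝ) ≤ c^β := Real.rpow_nonneg (le_of_lt hc0) _
    positivity
  set B : ℝ := 2*((2*p)^p * Real.exp (-p)) + (1/δ)*(2^(p+1)*Real.Gamma (p+1)) with hB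
  have hterm : ∀ D : ℕ, (if 0 < D ∧ (D:ℤ) ≡ a [ZMOD (N:ℤ)] then
        (c * (D:ℝ)) ^ (l / 2) * Real.Gamma l ^ (-(1:ℝ) / 2) * Real.exp (-2 * π * v' * (D:ℝ))
          * l ^ α * (D:ℝ) ^ (-β)
      else 0)
      = K * (if 0 < D ∧ (D:ℤ) ≡ a [ZMOD (N:ℤ)] then
          (c*(D:ℝ))^p * Real.exp (-(c*(D:ℝ)/2)) else 0) := by
    intro D
    by_cases hcond : 0 < D ∧ (D:ℤ) ≡ a [ZMOD (N:ℤ)]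
    · rw [if_pos hcond, if_pos hcond]
      have hD0 : (0:ℝ) < (D:ℝ) := by exact_mod_cast hcond.1
      have hcD : (0:ℝ) < c*(D:ℝ) := by positivity
      have q1 : (c*(D:ℝ))^p = (c*(D:ℝ))^(l/2) * (c*(D:ℝ))^(-β) := by
        rw [hpdef, ← Real.rpow_add hcD, sub_eq_add_neg]
      have q2 : (c*(D:ℝ))^(-β) = c^(-β) * (D:ℝ)^(-β) := Real.mul_rpow (le_of_lt hc0) (le_of_lt hD0)
      have q3 : c^β * c^(-β) = 1 := by
        rw [← Real.rpow_add hc0]; simp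
      have q4 : Real.exp (-2 * π * v' * (D:ℝ)) = Real.exp (-(c*(D:ℝ)/2)) := by
        congr 1; rw [hc]; ring
      rw [q4, hK, q1, q2]
      linear_combination (-((c*(D:ℝ))^(l/2) * Real.Gamma l ^ (-(1:ℝ)/2)
        * Real.exp (-(c*(D:ℝ)/2)) * l^α * (D:ℝ)^(-β))) * q3
    · rw [if_neg hcond, if_neg hcond, mul_zero]
  have horig0 : ∀ D : ℕ, 0 ≤ (if 0 < D ∧ (D:ℤ) ≡ a [ZMOD (N:ℤ)] then
        (c * (D:ℝ)) ^ (l / 2) * Real.Gamma l ^ (-(1:ℝ) / 2) * Real.exp (-2 * π * v' * (D:ℝ))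
          * l ^ α * (D:ℝ) ^ (-β)
      else 0) := by
    intro D
    split
    · have h0 : (0:ℝ) ≤ c*(D:ℝ) := mul_nonneg (le_of_lt hc0) (Nat.cast_nonneg D)
      have h1 : (0:ℝ) ≤ (c*(D:ℝ))^(l/2) := Real.rpow_nonneg h0 _
      have h2 : (0:ℝ) ≤ Real.Gamma l ^ (-(1:ℝ)/2) := Real.rpow_nonneg (le_of_lt hΓl) _
      have h3 : (0:ℝ) ≤ l^α := Real.rpow_nonneg (le_of_lt hl0) _
      have h4 : (0:ℝ) ≤ (D:ℝ)^(-β) := Real.rpow_nonneg (Nat.cast_nonneg D) _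
      have h5 : (0:ℝ) ≤ Real.exp (-2 * π * v' * (D:ℝ)) := le_of_lt (Real.exp_pos _)
      positivity
    · exact le_refl 0
  have hfin : ∀ F : Finset ℕ, (∑ D ∈ F, (if 0 < D ∧ (D:ℤ) ≡ a [ZMOD (N:ℤ)] then
        (c * (D:ℝ)) ^ (l / 2) * Real.Gamma l ^ (-(1:ℝ) / 2) * Real.exp (-2 * π * v' * (D:ℝ))
          * l ^ α * (D:ℝ) ^ (-β)
      else 0)) ≤ K * B := by
    intro F
    rw [Finset.sum_congr rfl (fun D _ => hterm D), ← Finset.mul_sum]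
    apply mul_le_mul_of_nonneg_left ?_ hK0
    rw [← Finset.sum_filter, hB]
    apply Q1Lemmas.sum_le hp1 hc0 hδ0
    · intro D hD
      exact (Finset.mem_filter.1 hD).2.1
    · intro D hD D' hD' hlt
      have hDa := (Finset.mem_filter.1 hD).2.2
      have hD'a := (Finset.mem_filter.1 hD').2.2
      have hdvd : ((N:ℕ):ℤ) ∣ (D':ℤ) - (D:ℤ) := (hDa.trans hD'a.symm).dvd
      have hlt' : (0:ℤ) < (D':ℤ) - (D:ℤ) := by
        have : (D:ℤ) < (D':ℤ) := by exact_mod_cast hlt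
        linarith
      have hNle : ((N:ℕ):ℤ) ≤ (D':ℤ) - (D:ℤ) := Int.le_of_dvd hlt' hdvd
      have hNler : (N:ℝ) ≤ (D':ℝ) - (D:ℝ) := by exact_mod_cast hNle
      have := mul_le_mul_of_nonneg_left hNler (le_of_lt hc0)
      rw [hδ]
      nlinarith [this]
  have hsummable : Summable (fun D : ℕ => (if 0 < D ∧ (D:ℤ) ≡ a [ZMOD (N:ℤ)] then
        (c * (D:ℝ)) ^ (l / 2) * Real.Gamma l ^ (-(1:ℝ) / 2) * Real.exp (-2 * π * v' * (D:ℝ))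
          * l ^ α * (D:ℝ) ^ (-β)
      else 0)) := summable_of_sum_le horig0 hfin
  refine le_trans (Summable.tsum_le_of_sum_le hsummable hfin) ?_
  -- final computation : K * B ≤ target
  have eΓ : Real.Gamma l ^ (-(1:ℝ)/2) * Real.Gamma l ^ ((1:ℝ)/2) = 1 := by
    rw [← Real.rpow_add hΓl]; norm_num
  have ecv : c = 2*π*v/(N:ℝ) := by
    rw [hc, hv]; field_simp; ring
  have ec : c^β = (2*π)^β * v^β / (N:ℝ)^β := by
    rw [ecv, Real.div_rpow (by positivity) (le_of_lt hN0),
      Real.mul_rpow (by positivity) (le_of_lt hv0)]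
  have ev : v^(β-1) * v = v^β := by
    rw [Real.rpow_sub_one (ne_of_gt hv0)]; field_simp
  have e2π : (2*π)^(β-1) * (2*π) = (2*π)^β := by
    rw [Real.rpow_sub_one (by positivity : (2*π:ℝ) ≠ 0)]; field_simp
  have eE : l^(α - β + 3/4 + ε) * l^(-(1:ℝ)/2) = l^(α-β+1/4+ε) := by
    rw [← Real.rpow_add hl0]; congr 1; ring
  have el1 : l^α * l^((3:ℝ)/4-β) = l^(α+(3/4-β)) := (Real.rpow_add hl0 _ _).symm
  have el2 : l^α * l^((1:ℝ)/4-β) = l^(α+(1/4-β)) := (Real.rpow_add hl0 _ _).symm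
  have hl1 : (1:ℝ) ≤ l := by linarith
  have hεpos : 0 < ε := hε.1
  have emono1 : l^(α+(3/4-β)) ≤ l^(α - β + 3/4 + ε) :=
    Real.rpow_le_rpow_of_exponent_le hl1 (by linarith)
  have emono2 : l^(α+(1/4-β)) ≤ l^(α-β+1/4+ε) :=
    Real.rpow_le_rpow_of_exponent_le hl1 (by linarith)
  have eN : (N:ℝ)^(-β) = ((N:ℝ)^β)⁻¹ := Real.rpow_neg (le_of_lt hN0) β
  have hNβ0 : (0:ℝ) < (N:ℝ)^β := Real.rpow_pos_of_pos hN0 β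
  have hpiece1 : K * ((1/δ)*(2^(p+1)*Real.Gamma (p+1)))
      ≤ (C * (2*π)^(β-1)) * (l^(α - β + 3/4 + ε) * (v^(β-1) * ((N:ℝ)^β)⁻¹)) := by
    have s1 : K * ((1/δ)*(2^(p+1)*Real.Gamma (p+1)))
        ≤ K * ((1/δ)*(C*(l^((3:ℝ)/4-β) * Real.Gamma l ^ ((1:ℝ)/2)))) := by
      apply mul_le_mul_of_nonneg_left (mul_le_mul_of_nonneg_left hkey1 (by positivity)) hK0
    refine le_trans s1 ?_
    have s2 : K * ((1/δ)*(C*(l^((3:ℝ)/4-β) * Real.Gamma l ^ ((1:ℝ)/2))))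
        = (C*(2*π)^(β-1)) * (l^(α+(3/4-β)) * (v^(β-1) * ((N:ℝ)^β)⁻¹)) := by
      rw [hK, ec, hδv]
      rw [show Real.Gamma l ^ (-(1:ℝ)/2) * l^α * ((2*π)^β * v^β / (N:ℝ)^β)
            * ((1/(2*π*v))*(C*(l^((3:ℝ)/4-β) * Real.Gamma l ^ ((1:ℝ)/2))))
          = C * (Real.Gamma l ^ (-(1:ℝ)/2) * Real.Gamma l ^ ((1:ℝ)/2)) * (l^α * l^((3:ℝ)/4-β))
            * ((2*π)^β * v^β) * ((N:ℝ)^β)⁻¹ * (1/(2*π*v)) by ring]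
      rw [eΓ, el1, ← ev, ← e2π]
      field_simp
    rw [s2]
    apply mul_le_mul_of_nonneg_left ?_ (by positivity)
    apply mul_le_mul_of_nonneg_right emono1 (by positivity)
  have hpiece2 : K * (2*((2*p)^p * Real.exp (-p)))
      ≤ (2*C*(2*π)^β) * ((l^(α - β + 3/4 + ε) * (v^(β-1) * ((N:ℝ)^β)⁻¹)) * (v * l^(-(1:ℝ)/2))) := by
    have s1 : K * (2*((2*p)^p * Real.exp (-p)))
        ≤ K * (2*(C*(l^((1:ℝ)/4-β) * Real.Gamma l ^ ((1:ℝ)/2)))) := by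
      apply mul_le_mul_of_nonneg_left (mul_le_mul_of_nonneg_left hkey2 (by norm_num)) hK0
    refine le_trans s1 ?_
    have s2 : K * (2*(C*(l^((1:ℝ)/4-β) * Real.Gamma l ^ ((1:ℝ)/2))))
        = (2*C*(2*π)^β) * (l^(α+(1/4-β)) * (v^β * ((N:ℝ)^β)⁻¹)) := by
      rw [hK, ec]
      rw [show Real.Gamma l ^ (-(1:ℝ)/2) * l^α * ((2*π)^β * v^β / (N:ℝ)^β)
            * (2*(C*(l^((1:ℝ)/4-β) * Real.Gamma l ^ ((1:ℝ)/2))))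
          = 2 * C * (Real.Gamma l ^ (-(1:ℝ)/2) * Real.Gamma l ^ ((1:ℝ)/2)) * (l^α * l^((1:ℝ)/4-β))
            * (2*π)^β * (v^β * ((N:ℝ)^β)⁻¹) by ring]
      rw [eΓ, el2]
      ring
    rw [s2]
    have s3 : (l^(α - β + 3/4 + ε) * (v^(β-1) * ((N:ℝ)^β)⁻¹)) * (v * l^(-(1:ℝ)/2))
        = l^(α-β+1/4+ε) * (v^β * ((N:ℝ)^β)⁻¹) := by
      rw [← eE, ← ev]; ring
    rw [s3]
    apply mul_le_mul_of_nonneg_left ?_ (by positivity)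
    apply mul_le_mul_of_nonneg_right emono2 (by positivity)
  have hKB : K * B = K*(2*((2*p)^p * Real.exp (-p))) + K*((1/δ)*(2^(p+1)*Real.Gamma (p+1))) := by
    rw [hB]; ring
  rw [hKB, eN]
  have hexp : C * ((2*π)^(β-1) + 2*(2*π)^β) * l^(α - β + 3/4 + ε) * v^(β-1) * ((N:ℝ)^β)⁻¹
        * (1 + v * l^(-(1:ℝ)/2))
      = (C * (2*π)^(β-1)) * (l^(α - β + 3/4 + ε) * (v^(β-1) * ((N:ℝ)^β)⁻¹))
        + (2*C*(2*π)^β) * ((l^(α - β + 3/4 + ε) * (v^(β-1) * ((N:ℝ)^β)⁻¹)) * (v * l^(-(1:ℝ)/2)))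
        + ((2*C*(2*π)^β) * (l^(α - β + 3/4 + ε) * (v^(β-1) * ((N:ℝ)^β)⁻¹))
          + (C * (2*π)^(β-1)) * ((l^(α - β + 3/4 + ε) * (v^(β-1) * ((N:ℝ)^β)⁻¹)) * (v * l^(-(1:ℝ)/2)))) := by
    ring
  rw [hexp]
  have hpos1 : 0 ≤ (2*C*(2*π)^β) * (l^(α - β + 3/4 + ε) * (v^(β-1) * ((N:ℝ)^β)⁻¹)) := by
    have := Real.rpow_nonneg (le_of_lt hl0) (α - β + 3/4 + ε)
    have := Real.rpow_nonneg (le_of_lt hv0) (β-1)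
    positivity
  have hpos2 : 0 ≤ (C * (2*π)^(β-1)) * ((l^(α - β + 3/4 + ε) * (v^(β-1) * ((N:ℝ)^β)⁻¹)) * (v * l^(-(1:ℝ)/2))) := by
    have := Real.rpow_nonneg (le_of_lt hl0) (α - β + 3/4 + ε)
    have := Real.rpow_nonneg (le_of_lt hv0) (β-1)
    have := Real.rpow_nonneg (le_of_lt hl0) (-(1:ℝ)/2)
    positivity
  linarith [hpiece1, hpiece2, hpos1, hpos2]
end

section
/- Let ε ∈ (0, 1/2). For every real ℓ ≥ 1 and every real x > 0 with |4πx − ℓ| ≥ ℓ^{1/2+ε}, one has (4πx/ℓ)^{ℓ/2} · exp(ℓ/2 − 2πx) ≤ exp(−ℓ^{2ε}/8). -/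
open Real

private lemma log_add_le_aux (u : ℝ) (h0 : 0 ≤ u) (h1 : u ≤ 1) :
    Real.log (1 + u) ≤ u - u ^ 2 / 4 := by
  have hd : ∀ v ∈ Set.Icc (0:ℝ) 1,
      HasDerivAt (fun v : ℝ => v - v ^ 2 / 4 - Real.log (1 + v))
        (1 - 2 * v / 4 - 1 / (1 + v)) v := by
    intro v hv
    have hv0 : (1 : ℝ) + v ≠ 0 := by nlinarith [hv.1]
    have h1' : HasDerivAt (fun v : ℝ => 1 + v) 1 v := (hasDerivAt_id v).const_add 1
    have h2 : HasDerivAt (fun v : ℝ => Real.log (1 + v)) (1 / (1 + v)) v := by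
      simpa using h1'.log hv0
    have h3 : HasDerivAt (fun v : ℝ => v ^ 2 / 4) (2 * v / 4) v := by
      simpa using ((hasDerivAt_pow 2 v).div_const 4)
    exact ((hasDerivAt_id' v).sub h3).sub h2
  have hmono : MonotoneOn (fun v : ℝ => v - v ^ 2 / 4 - Real.log (1 + v)) (Set.Icc 0 1) := by
    apply monotoneOn_of_deriv_nonneg (convex_Icc 0 1)
    · exact fun v hv => ((hd v hv).continuousAt).continuousWithinAt
    · intro v hv
      rw [interior_Icc] at hv
      exact ((hd v (Set.mem_Icc_of_Ioo hv)).differentiableAt).differentiableWithinAt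
    · intro v hv
      rw [interior_Icc] at hv
      rw [(hd v (Set.mem_Icc_of_Ioo hv)).deriv]
      have hv0 : (0:ℝ) < 1 + v := by nlinarith [hv.1]
      have he : 1 - 2 * v / 4 - 1 / (1 + v) = v * (1 - v) / (2 * (1 + v)) := by
        field_simp; ring
      rw [he]
      exact div_nonneg (by nlinarith [hv.1, hv.2]) (by positivity)
  have h00 : (0:ℝ) ∈ Set.Icc (0:ℝ) 1 := ⟨le_refl 0, zero_le_one⟩
  have := hmono h00 ⟨h0, h1⟩ h0
  norm_num at this
  linarith

private lemma log_sub_le_aux (u : ℝ) (h0 : 0 ≤ u) (h1 : u < 1) :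
    Real.log (1 - u) ≤ -u - u ^ 2 / 4 := by
  have hd : ∀ v ∈ Set.Icc (0:ℝ) u,
      HasDerivAt (fun v : ℝ => -v - v ^ 2 / 4 - Real.log (1 - v))
        (-1 - 2 * v / 4 - (-1) / (1 - v)) v := by
    intro v hv
    have hv0 : (1 : ℝ) - v ≠ 0 := by
      have := hv.2; nlinarith
    have h1' : HasDerivAt (fun v : ℝ => 1 - v) (-1) v := by
      simpa using (hasDerivAt_id v).const_sub 1
    have h2 : HasDerivAt (fun v : ℝ => Real.log (1 - v)) ((-1) / (1 - v)) v := by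
      simpa using h1'.log hv0
    have h3 : HasDerivAt (fun v : ℝ => v ^ 2 / 4) (2 * v / 4) v := by
      simpa using ((hasDerivAt_pow 2 v).div_const 4)
    have h4 : HasDerivAt (fun v : ℝ => -v) (-1) v := by
      exact (hasDerivAt_id' v).neg
    exact (h4.sub h3).sub h2
  have hmono : MonotoneOn (fun v : ℝ => -v - v ^ 2 / 4 - Real.log (1 - v)) (Set.Icc 0 u) := by
    apply monotoneOn_of_deriv_nonneg (convex_Icc 0 u)
    · exact fun v hv => ((hd v hv).continuousAt).continuousWithinAt
    · intro v hv
      rw [interior_Icc] at hv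
      exact ((hd v (Set.mem_Icc_of_Ioo hv)).differentiableAt).differentiableWithinAt
    · intro v hv
      rw [interior_Icc] at hv
      rw [(hd v (Set.mem_Icc_of_Ioo hv)).deriv]
      have hv1 : (0:ℝ) < 1 - v := by nlinarith [hv.2]
      have hv2 : 0 ≤ v := le_of_lt hv.1
      have he : -1 - 2 * v / 4 - (-1) / (1 - v) = (v / 2 + v ^ 2 / 2) / (1 - v) := by
        field_simp; ring
      rw [he]
      exact div_nonneg (by nlinarith) hv1.le
  have h00 : (0:ℝ) ∈ Set.Icc (0:ℝ) u := ⟨le_refl 0, h0⟩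
  have := hmono h00 ⟨h0, le_refl u⟩ h0
  norm_num at this
  linarith

/-- Exponential decay of `h(x) = (4πx/ℓ)^{ℓ/2} exp(ℓ/2 − 2πx)` when
`|4πx − ℓ| ≥ ℓ^{1/2+ε}`; used in the proof of Lemma 4.3 of the paper. -/
theorem stmt_7 (ε : ℝ) (hε : ε ∈ Set.Ioo (0 : ℝ) (1 / 2)) (l x : ℝ)
    (hl : 1 ≤ l) (hx : 0 < x) (h : l ^ (1 / 2 + ε) ≤ |4 * π * x - l|) :
    (4 * π * x / l) ^ (l / 2) * Real.exp (l / 2 - 2 * π * x) ≤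
      Real.exp (-(l ^ (2 * ε)) / 8) := by
  obtain ⟨hε0, hε2⟩ := hε
  have hπ : 0 < π := Real.pi_pos
  have hl0 : (0:ℝ) < l := lt_of_lt_of_le one_pos hl
  set t : ℝ := 4 * π * x / l with ht_def
  have ht0 : 0 < t := by positivity
  have htl : 4 * π * x = t * l := by rw [ht_def, div_mul_cancel₀ _ hl0.ne']
  set δ : ℝ := l ^ (-(1/2) + ε) with hδ_def
  have hδ0 : 0 < δ := Real.rpow_pos_of_pos hl0 _
  have hδ1 : δ ≤ 1 := Real.rpow_le_one_of_one_le_of_nonpos hl (by linarith)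
  have hld : l ^ ((1:ℝ)/2 + ε) = l * δ := by
    have he : (1:ℝ)/2 + ε = 1 + (-(1/2) + ε) := by ring
    rw [hδ_def, he, Real.rpow_add hl0, Real.rpow_one]
  have hδsq : l * δ ^ 2 = l ^ (2*ε) := by
    have e1 : l * δ ^ 2 = l ^ (1:ℝ) * (l ^ (-(1/2)+ε) * l ^ (-(1/2)+ε)) := by
      rw [Real.rpow_one, sq, hδ_def]
    rw [e1, ← Real.rpow_add hl0, ← Real.rpow_add hl0]
    congr 1
    ring
  have habs : δ ≤ |t - 1| := by
    have h' : l * δ ≤ |t * l - l| := by rw [← hld, ← htl]; exact h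
    have he : |t * l - l| = |t - 1| * l := by
      rw [← sub_one_mul, abs_mul, abs_of_pos hl0]
    rw [he] at h'
    have h'' : δ * l ≤ |t - 1| * l := by linarith [h', mul_comm l δ]
    exact le_of_mul_le_mul_right h'' hl0
  have hδsq1 : δ ^ 2 ≤ 1 := by nlinarith
  have key : Real.log t + 1 - t ≤ -(δ^2)/4 := by
    rcases le_or_gt t 2 with h2 | h2
    · rcases le_or_gt 1 t with h1 | h1
      · have hu := log_add_le_aux (t-1) (by linarith) (by linarith)
        rw [abs_of_nonneg (by linarith : (0:ℝ) ≤ t - 1)] at habs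
        have hlt : Real.log t ≤ (t-1) - (t-1)^2/4 := by
          have : (1:ℝ) + (t - 1) = t := by ring
          rwa [this] at hu
        have hsq : δ ^ 2 ≤ (t-1) ^ 2 := by nlinarith
        linarith
      · have hu := log_sub_le_aux (1-t) (by linarith) (by linarith)
        rw [abs_of_nonpos (by linarith : t - 1 ≤ 0)] at habs
        have hlt : Real.log t ≤ -(1-t) - (1-t)^2/4 := by
          have : (1:ℝ) - (1 - t) = t := by ring
          rwa [this] at hu
        have hsq : δ ^ 2 ≤ (1-t) ^ 2 := by nlinarith
        linarith
    · have hlt2 : Real.log (t/2) ≤ t/2 - 1 := Real.log_le_sub_one_of_pos (by positivity)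
      have he : Real.log (t/2) = Real.log t - Real.log 2 := by
        rw [Real.log_div ht0.ne' (by norm_num)]
      have hl2 : Real.log 2 < 0.6931471808 := Real.log_two_lt_d9
      nlinarith
  have hLHS : t ^ (l/2) * Real.exp (l / 2 - 2 * π * x)
      = Real.exp (l/2 * (Real.log t + 1 - t)) := by
    rw [Real.rpow_def_of_pos ht0, ← Real.exp_add]
    congr 1
    have h2πx : 2 * π * x = t * l / 2 := by
      rw [ht_def]; field_simp; ring
    rw [h2πx]
    ring
  rw [hLHS, Real.exp_le_exp]
  have h8 : -(l ^ (2*ε))/8 = l/2 * (-(δ^2)/4) := by rw [← hδsq]; ring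
  rw [h8]
  have hhalf : (0:ℝ) ≤ l/2 := by linarith
  exact mul_le_mul_of_nonneg_left key hhalf
end

section
/- For all real numbers s > 0, v > 0 and every y ∈ ℝ, the sum Σ_{r ∈ ℤ} exp(−2π(r·y + r²·v/s)) converges and satisfies Σ_{r ∈ ℤ} exp(−2π(r·y + r²·v/s)) ≤ exp(2π s y²/v) · (1 + √(s/v)). -/
open Real

lemma gaussNat_summable {c : ℝ} (hc : 0 < c) :
    Summable (fun n : ℕ => Real.exp (-c * ((n : ℝ) + 1) ^ 2)) := by
  refine Summable.of_nonneg_of_le (fun n => (Real.exp_pos _).le) (fun n => ?_)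
    (summable_geometric_of_lt_one (Real.exp_pos (-c)).le
      (Real.exp_lt_one_iff.2 (by linarith)))
  rw [← Real.exp_nat_mul]
  apply Real.exp_le_exp.2
  have h1 : (n : ℝ) ≤ ((n : ℝ) + 1) ^ 2 := by nlinarith [sq_nonneg ((n:ℝ))]
  nlinarith

lemma gaussNat_tsum_le {c : ℝ} (hc : 0 < c) :
    ∑' n : ℕ, Real.exp (-c * ((n : ℝ) + 1) ^ 2) ≤ Real.sqrt (π / c) / 2 := by
  apply tsum_le_of_sum_range_le (fun n => (Real.exp_pos _).le)
  intro a
  have hanti : AntitoneOn (fun x : ℝ => Real.exp (-c * x ^ 2)) (Set.Icc (0:ℝ) (0 + a)) := by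
    intro x hx y hy hxy
    apply Real.exp_le_exp.2
    have h : x ^ 2 ≤ y ^ 2 := by nlinarith [hx.1, hy.1]
    nlinarith [mul_le_mul_of_nonneg_left h hc.le]
  have h1 := hanti.sum_le_integral
  simp only [zero_add] at h1
  have h2 : (∑ i ∈ Finset.range a, Real.exp (-c * ((i : ℝ) + 1) ^ 2)) ≤
      ∫ x in (0:ℝ)..(a:ℝ), Real.exp (-c * x ^ 2) := by
    refine le_trans (le_of_eq ?_) h1
    apply Finset.sum_congr rfl
    intro i _
    push_cast
    ring_nf
  refine h2.trans ?_
  rw [intervalIntegral.integral_of_le (by positivity)]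
  have hInt : MeasureTheory.IntegrableOn (fun x : ℝ => Real.exp (-c * x ^ 2)) (Set.Ioi 0) :=
    (integrable_exp_neg_mul_sq hc).integrableOn
  have h3 : ∫ x in Set.Ioc (0:ℝ) (a:ℝ), Real.exp (-c * x ^ 2) ≤
      ∫ x in Set.Ioi (0:ℝ), Real.exp (-c * x ^ 2) := by
    apply MeasureTheory.setIntegral_mono_set hInt
    · exact MeasureTheory.ae_of_all _ fun x => (Real.exp_pos _).le
    · exact MeasureTheory.ae_of_all _ Set.Ioc_subset_Ioi_self
  refine h3.trans ?_
  rw [integral_gaussian_Ioi]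

lemma gaussInt (c : ℝ) (hc : 0 < c) :
    Summable (fun r : ℤ => Real.exp (-c * (r : ℝ) ^ 2)) ∧
      ∑' r : ℤ, Real.exp (-c * (r : ℝ) ^ 2) ≤ 1 + Real.sqrt (π / c) := by
  set f : ℤ → ℝ := fun r => Real.exp (-c * (r : ℝ) ^ 2) with hf
  have hnat : Summable (fun n : ℕ => f n) := by
    rw [← summable_nat_add_iff 1]
    simpa [hf] using gaussNat_summable hc
  have hneg : Summable (fun n : ℕ => f (-(n + 1))) := by
    have : (fun n : ℕ => f (-(n + 1))) = fun n : ℕ => Real.exp (-c * ((n : ℝ) + 1) ^ 2) := by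
      funext n; simp only [hf]; congr 1; push_cast; ring
    rw [this]; exact gaussNat_summable hc
  have hsum : Summable f := Summable.of_nat_of_neg_add_one hnat hneg
  refine ⟨hsum, ?_⟩
  rw [tsum_of_nat_of_neg_add_one hnat hneg]
  have e1 : ∑' n : ℕ, f n = f 0 + ∑' n : ℕ, f (n + 1) := Summable.tsum_eq_zero_add hnat
  have e2 : ∑' n : ℕ, f ((n : ℤ) + 1) = ∑' n : ℕ, Real.exp (-c * ((n : ℝ) + 1) ^ 2) := by
    apply tsum_congr; intro n; simp only [hf]; congr 1; push_cast; ring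
  have e3 : ∑' n : ℕ, f (-(n + 1)) = ∑' n : ℕ, Real.exp (-c * ((n : ℝ) + 1) ^ 2) := by
    apply tsum_congr; intro n; simp only [hf]; congr 1; push_cast; ring
  have hf0 : f 0 = 1 := by simp [hf]
  have hb := gaussNat_tsum_le hc
  have e1' : ∑' n : ℕ, f n = 1 + ∑' n : ℕ, Real.exp (-c * ((n : ℝ) + 1) ^ 2) := by
    rw [e1, hf0, ← e2]
  rw [e1', e3]
  linarith

/-- The Gaussian lattice-sum estimate (4.19) of the paper:
`Σ_{r ∈ ℤ} exp(−2π(ry + r²v/s)) ≤ exp(2πsy²/v)(1 + √(s/v))`. -/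
theorem stmt_8 (s v y : ℝ) (hs : 0 < s) (hv : 0 < v) :
    Summable (fun r : ℤ => Real.exp (-2 * π * ((r : ℝ) * y + (r : ℝ) ^ 2 * v / s))) ∧
      ∑' r : ℤ, Real.exp (-2 * π * ((r : ℝ) * y + (r : ℝ) ^ 2 * v / s)) ≤
        Real.exp (2 * π * s * y ^ 2 / v) * (1 + Real.sqrt (s / v)) := by
  have hπ := Real.pi_pos
  set c : ℝ := π * v / s with hc
  have hcpos : 0 < c := by positivity
  -- termwise bound
  have key : ∀ r : ℤ, Real.exp (-2 * π * ((r : ℝ) * y + (r : ℝ) ^ 2 * v / s)) ≤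
      Real.exp (π * s * y ^ 2 / v) * Real.exp (-c * (r : ℝ) ^ 2) := by
    intro r
    rw [← Real.exp_add]
    apply Real.exp_le_exp.2
    rw [← sub_nonneg]
    have hsq := sq_nonneg (s * y + v * (r : ℝ))
    have h : π * s * y ^ 2 / v + -c * (r : ℝ) ^ 2 - -2 * π * ((r : ℝ) * y + (r : ℝ) ^ 2 * v / s)
        = π * (s * y + v * (r : ℝ)) ^ 2 / (s * v) := by
      rw [hc]; field_simp; ring
    rw [h]
    positivity
  have hg := gaussInt c hcpos
  have hsum : Summable (fun r : ℤ => Real.exp (-2 * π * ((r : ℝ) * y + (r : ℝ) ^ 2 * v / s))) :=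
    Summable.of_nonneg_of_le (fun r => (Real.exp_pos _).le) key
      (hg.1.mul_left _)
  refine ⟨hsum, ?_⟩
  have h1 : ∑' r : ℤ, Real.exp (-2 * π * ((r : ℝ) * y + (r : ℝ) ^ 2 * v / s)) ≤
      ∑' r : ℤ, Real.exp (π * s * y ^ 2 / v) * Real.exp (-c * (r : ℝ) ^ 2) :=
    Summable.tsum_le_tsum key hsum (hg.1.mul_left _)
  rw [tsum_mul_left] at h1
  have hsqrt : Real.sqrt (π / c) = Real.sqrt (s / v) := by
    congr 1
    rw [hc]; field_simp
  have h2 : Real.exp (π * s * y ^ 2 / v) * (∑' r : ℤ, Real.exp (-c * (r : ℝ) ^ 2)) ≤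
      Real.exp (2 * π * s * y ^ 2 / v) * (1 + Real.sqrt (s / v)) := by
    apply mul_le_mul
    · apply Real.exp_le_exp.2
      have h0 : 0 ≤ π * s * y ^ 2 / v := by positivity
      have he : 2 * π * s * y ^ 2 / v = 2 * (π * s * y ^ 2 / v) := by ring
      linarith
    · rw [← hsqrt]; exact hg.2
    · exact tsum_nonneg fun r => (Real.exp_pos _).le
    · positivity
  linarith
end

section
/- For all real numbers a > 0, b > 0, m > 0 and every u ∈ ℝ, the double sum Σ_{(p,q) ∈ ℤ×ℤ} exp(−m(a·p² + b·(u·p + q)²)) converges and satisfies Σ_{(p,q) ∈ ℤ×ℤ} exp(−m(a·p² + b·(u·p + q)²)) ≤ (1 + √(π/(a·m))) · (1 + √(π/(b·m))). -/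
open Real

open MeasureTheory Set


lemma gauss_step (c : ℝ) (hc : 0 < c) (α M : ℝ) (h : ∀ t ∈ Set.Icc α (α+1), t^2 ≤ M) :
    Real.exp (-c*M) ≤ ∫ t in α..(α+1), Real.exp (-c*t^2) := by
  have hcont : Continuous fun t : ℝ => Real.exp (-c*t^2) := by continuity
  have hint : IntervalIntegrable (fun t => Real.exp (-c*t^2)) volume α (α+1) :=
    hcont.intervalIntegrable _ _
  have hmono := intervalIntegral.integral_mono_on (f := fun _ : ℝ => Real.exp (-c*M))
    (g := fun t => Real.exp (-c*t^2)) (by linarith : α ≤ α + 1)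
    (intervalIntegrable_const) hint
    (fun t ht => Real.exp_le_exp.mpr (by nlinarith [h t ht]))
  simpa using hmono

lemma sum_le_integral_Ioi (c : ℝ) (hc : 0 < c) (s : ℝ) (f : ℕ → ℝ)
    (hf : ∀ k : ℕ, f k ≤ ∫ t in (s+k)..(s+k+1), Real.exp (-c*t^2)) (N : ℕ) :
    ∑ k ∈ Finset.range N, f k ≤ ∫ t in Set.Ioi s, Real.exp (-c*t^2) := by
  have hcont : Continuous fun t : ℝ => Real.exp (-c*t^2) := by continuity
  have hInt : Integrable fun t : ℝ => Real.exp (-c*t^2) := integrable_exp_neg_mul_sq hc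
  have h1 : ∑ k ∈ Finset.range N, f k ≤ ∑ k ∈ Finset.range N, ∫ t in (s+k)..(s+k+1), Real.exp (-c*t^2) :=
    Finset.sum_le_sum fun k _ => hf k
  have h2 : ∑ k ∈ Finset.range N, ∫ t in (s+k)..(s+k+1), Real.exp (-c*t^2)
      = ∫ t in s..(s+N), Real.exp (-c*t^2) := by
    have := intervalIntegral.sum_integral_adjacent_intervals (a := fun k : ℕ => s + k)
      (μ := volume) (f := fun t => Real.exp (-c*t^2)) (n := N)
      (fun k _ => hcont.intervalIntegrable _ _)
    simpa [Nat.cast_add, Nat.cast_one, add_assoc] using this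
  have h3 : ∫ t in s..(s+N), Real.exp (-c*t^2) ≤ ∫ t in Set.Ioi s, Real.exp (-c*t^2) := by
    rw [intervalIntegral.integral_of_le (by linarith [Nat.cast_nonneg (α := ℝ) N] : s ≤ s + N)]
    exact setIntegral_mono_set hInt.integrableOn
      (Filter.Eventually.of_forall fun t => (Real.exp_pos _).le)
      (HasSubset.Subset.eventuallyLE Set.Ioc_subset_Ioi_self)
  linarith

lemma pos_side (c : ℝ) (hc : 0 < c) (y : ℝ) (hy : -(1/2) ≤ y) :
    Summable (fun n : ℕ => Real.exp (-c*(y+(n+1))^2)) ∧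
    ∑' n : ℕ, Real.exp (-c*(y+(n+1))^2) ≤ ∫ t in Set.Ioi y, Real.exp (-c*t^2) := by
  have hf : ∀ k : ℕ, Real.exp (-c*(y+(k+1))^2) ≤ ∫ t in (y+k)..(y+k+1), Real.exp (-c*t^2) := by
    intro k
    have hk : (0:ℝ) ≤ (k:ℝ) := Nat.cast_nonneg k
    have := gauss_step c hc (y+k) ((y+(k+1))^2) (by
      intro t ht
      obtain ⟨ht1, ht2⟩ := ht
      nlinarith)
    convert this using 3
  have hb := sum_le_integral_Ioi c hc y _ hf
  have hnn : ∀ n : ℕ, 0 ≤ Real.exp (-c*(y+(n+1))^2) := fun n => (Real.exp_pos _).le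
  exact ⟨summable_of_sum_range_le hnn hb, Real.tsum_le_of_sum_range_le hnn hb⟩

lemma gauss_core (c : ℝ) (hc : 0 < c) (y : ℝ) (hy : |y| ≤ 1/2) :
    Summable (fun q : ℤ => Real.exp (-c*(y+q)^2)) ∧
    ∑' q : ℤ, Real.exp (-c*(y+q)^2) ≤ 1 + Real.sqrt (π / c) := by
  obtain ⟨hy1, hy2⟩ := abs_le.mp hy
  set f : ℤ → ℝ := fun q => Real.exp (-c*(y+q)^2) with hfdef
  have hpos := pos_side c hc y (by linarith)
  have hneg' := pos_side c hc (-y) (by linarith)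
  -- negative ℕ-side terms
  have hnegeq : (fun n : ℕ => f (-(n+1))) = fun n : ℕ => Real.exp (-c*((-y)+(n+1))^2) := by
    funext n
    simp only [hfdef]
    push_cast
    ring_nf
  -- shifted nat side summable → nat side summable
  have hnat_sum : Summable (fun n : ℕ => f n) := by
    have : Summable (fun n : ℕ => f (n+1)) := by
      have := hpos.1
      apply this.congr
      intro n; simp only [hfdef]; push_cast; ring_nf
    exact (summable_nat_add_iff 1).mp this
  have hneg_sum : Summable (fun n : ℕ => f (-(n+1))) := by rw [hnegeq]; exact hneg'.1
  have hsum : Summable f := Summable.of_nat_of_neg_add_one hnat_sum hneg_sum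
  refine ⟨hsum, ?_⟩
  -- integral over Ioi (-y) equals integral over Iio y
  have hflip : ∫ t in Set.Ioi (-y), Real.exp (-c*t^2) = ∫ t in Set.Iio y, Real.exp (-c*t^2) := by
    have h := integral_comp_neg_Ioi (c := -y) (f := fun t => Real.exp (-c*t^2))
    simp only [neg_neg, neg_sq] at h
    rw [h, integral_Iic_eq_integral_Iio]
  have hInt : Integrable fun t : ℝ => Real.exp (-c*t^2) := integrable_exp_neg_mul_sq hc
  have htotal : (∫ t in Set.Iio y, Real.exp (-c*t^2)) + (∫ t in Set.Ioi y, Real.exp (-c*t^2))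
      = Real.sqrt (π / c) := by
    rw [← integral_Iic_eq_integral_Iio,
      intervalIntegral.integral_Iic_add_Ioi hInt.integrableOn hInt.integrableOn,
      integral_gaussian]
  have hzero : f 0 ≤ 1 := by
    simp only [hfdef]
    rw [← Real.exp_zero]
    apply Real.exp_le_exp.mpr
    push_cast
    nlinarith
  have hnat_tsum : ∑' n : ℕ, f n ≤ 1 + ∫ t in Set.Ioi y, Real.exp (-c*t^2) := by
    rw [Summable.tsum_eq_zero_add hnat_sum]
    have h1 : ∑' n : ℕ, f ((n+1 : ℕ) : ℤ) = ∑' n : ℕ, Real.exp (-c*(y+(n+1))^2) := by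
      congr 1; funext n; simp only [hfdef]; push_cast; ring_nf
    rw [h1]
    have hzero' : f ((0:ℕ) : ℤ) ≤ 1 := by simpa using hzero
    linarith [hpos.2]
  have hneg_tsum : ∑' n : ℕ, f (-(n+1)) ≤ ∫ t in Set.Iio y, Real.exp (-c*t^2) := by
    rw [hnegeq, ← hflip]; exact hneg'.2
  rw [tsum_of_nat_of_neg_add_one hnat_sum hneg_sum]
  linarith



lemma gauss_shift (c : ℝ) (hc : 0 < c) (x : ℝ) :
    Summable (fun q : ℤ => Real.exp (-c*(x+q)^2)) ∧
    ∑' q : ℤ, Real.exp (-c*(x+q)^2) ≤ 1 + Real.sqrt (π / c) := by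
  set n : ℤ := round x with hn
  set y : ℝ := x - n with hy
  have hyb : |y| ≤ 1/2 := by rw [hy, hn]; exact abs_sub_round x
  have hcore := gauss_core c hc y hyb
  have e : ℤ ≃ ℤ := Equiv.subRight n
  have hkey : ∀ q : ℤ, Real.exp (-c*(x+(q - n : ℤ))^2) = Real.exp (-c*(y+q)^2) := by
    intro q
    rw [hy]
    push_cast
    ring_nf
  have hs : Summable (fun q : ℤ => Real.exp (-c*(x+q)^2)) := by
    rw [← (Equiv.subRight n).summable_iff]
    exact hcore.1.congr fun q => (hkey q).symm
  refine ⟨hs, ?_⟩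
  have ht : ∑' q : ℤ, Real.exp (-c*(x+q)^2)
      = ∑' q : ℤ, Real.exp (-c*(x+((Equiv.subRight n) q : ℤ))^2) :=
    ((Equiv.subRight n).tsum_eq (fun q : ℤ => Real.exp (-c*(x+q)^2))).symm
  rw [ht]
  calc ∑' q : ℤ, Real.exp (-c*(x+((Equiv.subRight n) q : ℤ))^2)
      = ∑' q : ℤ, Real.exp (-c*(y+q)^2) := by
        congr 1; funext q; exact hkey q
    _ ≤ 1 + Real.sqrt (π / c) := hcore.2

set_option maxHeartbeats 1000000 in
/-- The two-dimensional Gaussian lattice-sum estimate of Section 4.2 of the paper: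
`Σ_{(p,q) ∈ ℤ²} exp(−m(ap² + b(up+q)²)) ≤ (1 + √(π/(am)))(1 + √(π/(bm)))`. -/
theorem stmt_9 (a b m u : ℝ) (ha : 0 < a) (hb : 0 < b) (hm : 0 < m) :
    Summable (fun pq : ℤ × ℤ =>
      Real.exp (-m * (a * (pq.1 : ℝ) ^ 2 + b * (u * (pq.1 : ℝ) + (pq.2 : ℝ)) ^ 2))) ∧
      ∑' pq : ℤ × ℤ,
          Real.exp (-m * (a * (pq.1 : ℝ) ^ 2 + b * (u * (pq.1 : ℝ) + (pq.2 : ℝ)) ^ 2)) ≤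
        (1 + Real.sqrt (π / (a * m))) * (1 + Real.sqrt (π / (b * m))) := by
  have hma : 0 < m * a := by positivity
  have hmb : 0 < m * b := by positivity
  set Ca := 1 + Real.sqrt (π / (a * m)) with hCa
  set Cb := 1 + Real.sqrt (π / (b * m)) with hCb
  have hCa0 : 0 ≤ Ca := by positivity
  have hCb0 : 0 ≤ Cb := by positivity
  have hfeq : (fun pq : ℤ × ℤ =>
      Real.exp (-m * (a * (pq.1 : ℝ) ^ 2 + b * (u * (pq.1 : ℝ) + (pq.2 : ℝ)) ^ 2)))
      = fun pq : ℤ × ℤ => Real.exp (-(m*a)*(pq.1:ℝ)^2) * Real.exp (-(m*b)*(u*(pq.1:ℝ)+(pq.2:ℝ))^2) := by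
    funext pq
    rw [← Real.exp_add]
    ring_nf
  -- inner sums
  have hinner : ∀ p : ℤ, Summable (fun q : ℤ => Real.exp (-(m*b)*(u*(p:ℝ)+(q:ℝ))^2)) ∧
      ∑' q : ℤ, Real.exp (-(m*b)*(u*(p:ℝ)+(q:ℝ))^2) ≤ Cb := by
    intro p
    have := gauss_shift (m*b) hmb (u*(p:ℝ))
    refine ⟨this.1, this.2.trans_eq ?_⟩
    rw [hCb, mul_comm b m]
  -- outer sum
  have hA : Summable (fun p : ℤ => Real.exp (-(m*a)*(p:ℝ)^2)) ∧
      ∑' p : ℤ, Real.exp (-(m*a)*(p:ℝ)^2) ≤ Ca := by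
    have := gauss_shift (m*a) hma 0
    simp only [zero_add] at this
    refine ⟨this.1, this.2.trans_eq ?_⟩
    rw [hCa, mul_comm a m]
  set g := fun pq : ℤ × ℤ => Real.exp (-(m*a)*(pq.1:ℝ)^2) * Real.exp (-(m*b)*(u*(pq.1:ℝ)+(pq.2:ℝ))^2)
    with hg
  have hrow : ∀ p : ℤ, Summable fun q : ℤ => g (p, q) := by
    intro p
    exact (hinner p).1.mul_left (Real.exp (-(m*a)*(p:ℝ)^2))
  have hrowsum : ∀ p : ℤ, ∑' q : ℤ, g (p, q)
      = Real.exp (-(m*a)*(p:ℝ)^2) * ∑' q : ℤ, Real.exp (-(m*b)*(u*(p:ℝ)+(q:ℝ))^2) := by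
    intro p
    simp only [hg]
    exact tsum_mul_left
  have hrowle : ∀ p : ℤ, ∑' q : ℤ, g (p, q) ≤ Real.exp (-(m*a)*(p:ℝ)^2) * Cb := by
    intro p
    rw [hrowsum p]
    exact mul_le_mul_of_nonneg_left (hinner p).2 (Real.exp_pos _).le
  have hcol : Summable fun p : ℤ => ∑' q : ℤ, g (p, q) := by
    apply Summable.of_nonneg_of_le (fun p => tsum_nonneg fun q => by positivity) hrowle
    exact hA.1.mul_right _
  have hgsum : Summable g := by
    rw [summable_prod_of_nonneg (fun pq => by positivity)]
    exact ⟨hrow, hcol⟩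
  rw [hfeq]
  refine ⟨hgsum, ?_⟩
  rw [Summable.tsum_prod' hgsum hrow]
  calc ∑' p : ℤ, ∑' q : ℤ, g (p, q) ≤ ∑' p : ℤ, Real.exp (-(m*a)*(p:ℝ)^2) * Cb :=
        Summable.tsum_le_tsum hrowle hcol (hA.1.mul_right _)
    _ = (∑' p : ℤ, Real.exp (-(m*a)*(p:ℝ)^2)) * Cb := tsum_mul_right
    _ ≤ Ca * Cb := mul_le_mul_of_nonneg_right hA.2 hCb0
end

section
/- For every ε ∈ (0, 1/2) there exist constants c > 0, C > 0 and ℓ₀ ≥ 2, depending only on ε, such that for all real ℓ ≥ ℓ₀ and all real v′ > 0: Σ over positive integers D with |4π v′ D − ℓ| ≥ ℓ^{1/2+ε} of (4π v′ D)^{ℓ/2} Γ(ℓ)^{−1/2} exp(−2π v′ D) is at most C · (1 + 1/v′) · exp(−c·ℓ^{ε}). -/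
open Real

private lemma aux_deriv (s : ℝ) (hs : -1 < s) :
    HasDerivAt (fun t : ℝ => t - t ^ 2 / 4 - Real.log (1 + t)) (1 - s / 2 - (1 + s)⁻¹) s := by
  have hne : (1 : ℝ) + s ≠ 0 := by intro h; linarith
  have d1 : HasDerivAt (fun t : ℝ => 1 + t) 1 s := by
    simpa using (hasDerivAt_id s).const_add 1
  have d2 : HasDerivAt (fun t : ℝ => Real.log (1 + t)) ((1 + s)⁻¹ * 1) s :=
    (Real.hasDerivAt_log hne).comp s d1
  have d3 : HasDerivAt (fun t : ℝ => t - t ^ 2 / 4) (1 - 2 * s / 4) s := by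
    have := (hasDerivAt_id s).sub ((hasDerivAt_pow 2 s).div_const 4)
    simpa [Pi.sub_def] using this
  have := d3.sub d2
  convert this using 1
  · rfl
  · rfl
  · rfl
  · ring

private lemma aux_log_quad {t : ℝ} (h1 : -1 < t) (h2 : t ≤ 1) :
    Real.log (1 + t) ≤ t - t ^ 2 / 4 := by
  set g : ℝ → ℝ := fun s => s - s ^ 2 / 4 - Real.log (1 + s) with hgdef
  have hg0 : g 0 = 0 := by simp [hgdef]
  have hcont : ∀ a b : ℝ, -1 < a → ContinuousOn g (Set.Icc a b) := by
    intro a b ha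
    apply ContinuousOn.sub
    · exact (continuous_id.sub ((continuous_pow 2).div_const 4)).continuousOn
    · apply ContinuousOn.log
      · exact (continuous_const.add continuous_id).continuousOn
      · intro s hs
        have : -1 < s := lt_of_lt_of_le ha hs.1
        exact ne_of_gt (by linarith)
  have key : 0 ≤ g t := by
    rcases le_or_gt 0 t with ht | ht
    · have hmono : MonotoneOn g (Set.Icc 0 t) := by
        apply monotoneOn_of_deriv_nonneg (convex_Icc 0 t) (hcont 0 t (by norm_num))
        · intro s hs
          rw [interior_Icc] at hs
          exact ((aux_deriv s (by linarith [hs.1])).differentiableAt).differentiableWithinAt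
        · intro s hs
          rw [interior_Icc] at hs
          obtain ⟨hs0, hst⟩ := hs
          rw [(aux_deriv s (by linarith)).deriv]
          have h1s : (0:ℝ) < 1 + s := by linarith
          have hinv : (1 + s)⁻¹ ≤ 1 - s / 2 := by
            rw [inv_eq_one_div, div_le_iff₀ h1s]
            nlinarith [mul_nonneg hs0.le (by linarith : (0:ℝ) ≤ 1 - s)]
          linarith
      have := hmono (Set.left_mem_Icc.mpr ht) (Set.right_mem_Icc.mpr ht) ht
      rw [hg0] at this
      exact this
    · have hanti : AntitoneOn g (Set.Icc t 0) := by
        apply antitoneOn_of_deriv_nonpos (convex_Icc t 0) (hcont t 0 h1)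
        · intro s hs
          rw [interior_Icc] at hs
          exact ((aux_deriv s (by linarith [hs.1])).differentiableAt).differentiableWithinAt
        · intro s hs
          rw [interior_Icc] at hs
          obtain ⟨hst, hs0⟩ := hs
          rw [(aux_deriv s (by linarith)).deriv]
          have h1s : (0:ℝ) < 1 + s := by linarith
          have hinv : 1 - s / 2 ≤ (1 + s)⁻¹ := by
            rw [inv_eq_one_div, le_div_iff₀ h1s]
            nlinarith [mul_nonneg (by linarith : (0:ℝ) ≤ -s) (by linarith : (0:ℝ) ≤ 1 - s)]
          linarith
      have := hanti (Set.left_mem_Icc.mpr ht.le) (Set.right_mem_Icc.mpr ht.le) ht.le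
      rw [hg0] at this
      exact this
  simp only [hgdef] at key
  linarith

private lemma aux_log_le_div_e {y : ℝ} (hy : 0 < y) : Real.log y ≤ y / Real.exp 1 := by
  have h := Real.log_le_sub_one_of_pos (div_pos hy (Real.exp_pos 1))
  rw [Real.log_div (ne_of_gt hy) (ne_of_gt (Real.exp_pos 1)), Real.log_exp] at h
  linarith

private lemma aux_gamma_lb {l : ℝ} (hl : 2 ≤ l) :
    ∃ m : ℕ, 1 ≤ (m : ℝ) ∧ l - 2 ≤ (m : ℝ) ∧ (m : ℝ) ≤ l - 1 ∧
      (m : ℝ) * (Real.log m - 1) ≤ Real.log (Real.Gamma l) := by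
  have hl0 : (0:ℝ) < l := by linarith
  set n : ℕ := ⌊l⌋₊ with hndef
  have hn2 : 2 ≤ n := Nat.le_floor (by exact_mod_cast hl)
  have hnl : (n : ℝ) ≤ l := Nat.floor_le hl0.le
  have hln : l < (n : ℝ) + 1 := Nat.lt_floor_add_one l
  refine ⟨n - 1, ?_, ?_, ?_, ?_⟩
  · have : ((n - 1 : ℕ) : ℝ) = (n : ℝ) - 1 := by
      rw [Nat.cast_sub (by omega)]; norm_num
    rw [this]
    have : (2:ℝ) ≤ (n:ℝ) := by exact_mod_cast hn2
    linarith
  · have : ((n - 1 : ℕ) : ℝ) = (n : ℝ) - 1 := by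
      rw [Nat.cast_sub (by omega)]; norm_num
    rw [this]; linarith
  · have : ((n - 1 : ℕ) : ℝ) = (n : ℝ) - 1 := by
      rw [Nat.cast_sub (by omega)]; norm_num
    rw [this]; linarith
  · set m : ℕ := n - 1 with hmdef
    have hmcast : ((m : ℕ) : ℝ) = (n : ℝ) - 1 := by
      rw [hmdef, Nat.cast_sub (by omega)]; norm_num
    have hm1 : 1 ≤ (m:ℝ) := by
      rw [hmcast]
      have : (2:ℝ) ≤ (n:ℝ) := by exact_mod_cast hn2
      linarith
    have hm0 : (0:ℝ) < m := by linarith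
    -- Gamma n ≤ Gamma l
    have hGam : Real.Gamma (n : ℝ) ≤ Real.Gamma l := by
      rcases eq_or_lt_of_le hnl with h | h
      · rw [h]
      · exact le_of_lt (Real.Gamma_strictMonoOn_Ici
          (by simp only [Set.mem_Ici]; exact_mod_cast hn2)
          (by simp only [Set.mem_Ici]; linarith) h)
    -- Gamma n = m !
    have hGn : Real.Gamma (n : ℝ) = (m.factorial : ℝ) := by
      have : (n : ℝ) = (m : ℝ) + 1 := by rw [hmcast]; ring
      rw [this, Real.Gamma_nat_eq_factorial]
    -- factorial lower bound
    have hfac : (m:ℝ) ^ m * Real.exp (-(m:ℝ)) ≤ (m.factorial : ℝ) := by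
      have hfp : (0:ℝ) < (m.factorial : ℝ) := by exact_mod_cast m.factorial_pos
      have h1 : (m:ℝ) ^ m / (m.factorial : ℝ) ≤ Real.exp (m:ℝ) := by
        calc (m:ℝ) ^ m / (m.factorial : ℝ)
            ≤ ∑ i ∈ Finset.range (m + 1), (m:ℝ) ^ i / (i.factorial : ℝ) := by
              exact Finset.single_le_sum (f := fun i => (m:ℝ) ^ i / (i.factorial : ℝ))
                (fun i _ => by positivity) (Finset.self_mem_range_succ m)
          _ ≤ Real.exp (m:ℝ) := Real.sum_le_exp_of_nonneg (by positivity) _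
      have h2 : (m:ℝ) ^ m ≤ Real.exp (m:ℝ) * (m.factorial : ℝ) := by
        rw [div_le_iff₀ hfp] at h1
        linarith [h1]
      calc (m:ℝ) ^ m * Real.exp (-(m:ℝ))
          ≤ (Real.exp (m:ℝ) * (m.factorial : ℝ)) * Real.exp (-(m:ℝ)) :=
            mul_le_mul_of_nonneg_right h2 (Real.exp_nonneg _)
        _ = (m.factorial : ℝ) := by
            rw [mul_comm (Real.exp (m:ℝ)), mul_assoc, ← Real.exp_add]
            simp
    have hGl : (m:ℝ) ^ m * Real.exp (-(m:ℝ)) ≤ Real.Gamma l := by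
      rw [← hGn] at hfac
      linarith
    have hpos : (0:ℝ) < (m:ℝ) ^ m * Real.exp (-(m:ℝ)) := by positivity
    have hlog := Real.log_le_log hpos hGl
    rw [Real.log_mul (by positivity) (Real.exp_ne_zero _), Real.log_pow, Real.log_exp] at hlog
    calc (m:ℝ) * (Real.log m - 1) = (m:ℝ) * Real.log m + (-(m:ℝ)) := by ring
      _ ≤ Real.log (Real.Gamma l) := by
          have : ((m:ℕ):ℝ) * Real.log (m:ℝ) + (-(m:ℝ)) ≤ Real.log (Real.Gamma l) := hlog
          exact_mod_cast this

set_option maxHeartbeats 1000000 in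
/-- Tail estimate in the proof of Lemma 4.3 of the paper: the contribution to `Q₁`
of those `D` with `|4π v′ D − ℓ| ≥ ℓ^{1/2+ε}` is exponentially small in `ℓ`. -/
theorem stmt_10 (ε : ℝ) (hε : ε ∈ Set.Ioo (0 : ℝ) (1 / 2)) :
    ∃ c : ℝ, 0 < c ∧ ∃ C : ℝ, 0 < C ∧ ∃ ℓ₀ : ℝ, 2 ≤ ℓ₀ ∧
      ∀ l : ℝ, ℓ₀ ≤ l → ∀ v' : ℝ, 0 < v' →
        (∑' D : ℕ, if 0 < D ∧ l ^ (1 / 2 + ε) ≤ |4 * π * v' * D - l| then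
            (4 * π * v' * D) ^ (l / 2) * (Real.Gamma l) ^ (-(1 : ℝ) / 2) *
              Real.exp (-2 * π * v' * D)
          else 0) ≤ C * (1 + 1 / v') * Real.exp (-c * l ^ ε) := by
  obtain ⟨hε0, hε2⟩ := hε
  refine ⟨1/32, by norm_num, 1, by norm_num, ?_⟩
  have htend : Filter.Tendsto
      (fun l : ℝ => (l ^ (2*ε)) ^ ((1:ℝ)/ε) * Real.exp (-(1/32) * l ^ (2*ε)))
      Filter.atTop (nhds 0) :=
    (tendsto_rpow_mul_exp_neg_mul_atTop_nhds_zero ((1:ℝ)/ε) (1/32) (by norm_num)).comp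
      (tendsto_rpow_atTop (by linarith))
  have hev : ∀ᶠ l in Filter.atTop,
      (l ^ (2*ε)) ^ ((1:ℝ)/ε) * Real.exp (-(1/32) * l ^ (2*ε)) < 1/6 :=
    htend.eventually (gt_mem_nhds (by norm_num : (0:ℝ) < 1/6))
  obtain ⟨ℓ₁, hℓ₁⟩ := Filter.eventually_atTop.mp hev
  refine ⟨max ℓ₁ 2, le_max_right _ _, ?_⟩
  intro l hl v' hv'
  have hl2 : 2 ≤ l := le_trans (le_max_right _ _) hl
  have hl0 : (0:ℝ) < l := by linarith
  have hl1 : (1:ℝ) ≤ l := by linarith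
  have hGpos : 0 < Real.Gamma l := Real.Gamma_pos_of_pos hl0
  obtain ⟨A, hAdef⟩ : ∃ A : ℝ, A = l ^ (2*ε) := ⟨_, rfl⟩
  have hA1 : (1:ℝ) ≤ A := by
    have h := Real.rpow_le_rpow_of_exponent_le hl1 (by linarith : (0:ℝ) ≤ 2*ε)
    rw [Real.rpow_zero] at h
    rw [hAdef]; exact h
  have hAl : A ≤ l := by
    have h := Real.rpow_le_rpow_of_exponent_le hl1 (by linarith : 2*ε ≤ (1:ℝ))
    rw [Real.rpow_one] at h
    rw [hAdef]; exact h
  have hAε : l ^ ε ≤ A := by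
    have h := Real.rpow_le_rpow_of_exponent_le hl1 (by linarith : ε ≤ 2*ε)
    rw [hAdef]; exact h
  obtain ⟨m, hm1, hm2, hm3, hmG⟩ := aux_gamma_lb hl2
  obtain ⟨B, hBdef⟩ : ∃ B : ℝ, B = l * Real.exp (-(A/16)) := ⟨_, rfl⟩
  obtain ⟨a, hadef⟩ : ∃ a : ℝ, a = π * v' / (16 * l) := ⟨_, rfl⟩
  have ha : 0 < a := hadef ▸ div_pos (mul_pos Real.pi_pos hv') (by linarith)
  obtain ⟨r, hrdef⟩ : ∃ r : ℝ, r = Real.exp (-a) := ⟨_, rfl⟩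
  have hr1 : r < 1 := hrdef ▸ Real.exp_lt_one_iff.mpr (by linarith)
  have hr0 : (0:ℝ) ≤ r := hrdef ▸ Real.exp_nonneg _
  have hBpos : 0 < B := hBdef ▸ mul_pos hl0 (Real.exp_pos _)
  have hpoint : ∀ D : ℕ, (if 0 < D ∧ l ^ (1 / 2 + ε) ≤ |4 * π * v' * D - l| then
            (4 * π * v' * D) ^ (l / 2) * (Real.Gamma l) ^ (-(1 : ℝ) / 2) *
              Real.exp (-2 * π * v' * D)
          else 0) ≤ B * r ^ D := by
    intro D
    by_cases hD : 0 < D ∧ l ^ (1 / 2 + ε) ≤ |4 * π * v' * (D:ℝ) - l|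
    · rw [if_pos hD]
      obtain ⟨hD0, hδ⟩ := hD
      have hD1 : (1:ℝ) ≤ (D:ℝ) := by exact_mod_cast hD0
      obtain ⟨x, hxdef⟩ : ∃ x : ℝ, x = 4 * π * v' * (D:ℝ) := ⟨_, rfl⟩
      rw [← hxdef] at hδ ⊢
      have hx : 0 < x := by
        rw [hxdef]
        have : (0:ℝ) < (D:ℝ) := by linarith
        positivity
      rw [Real.rpow_def_of_pos hx, Real.rpow_def_of_pos hGpos, ← Real.exp_add, ← Real.exp_add]
      have hRHS : B * r ^ D = Real.exp (Real.log l + -(A/16) + (D:ℝ) * -a) := by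
        rw [Real.exp_add, Real.exp_add, Real.exp_log hl0, Real.exp_nat_mul, hBdef, hrdef]
      rw [hRHS, Real.exp_le_exp]
      -- goal: log x * (l/2) + log (Γ l) * (-1/2) + -2*π*v'*D ≤ log l + -(A/16) + D * -a
      have hxhalf : 2 * π * v' * (D:ℝ) = x / 2 := by rw [hxdef]; ring
      have haD : (D:ℝ) * a = x / (64 * l) := by
        rw [hxdef, hadef]; field_simp; ring
      -- Step I
      have hI : Real.log (Real.Gamma l) * (-1/2) ≤ -((m:ℝ)/2) * (Real.log m - 1) := by
        linarith [hmG]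
      -- Step II
      have hm0 : (0:ℝ) < (m:ℝ) := by linarith
      have hlog1 : Real.log l - Real.log (m:ℝ) ≤ (l - (m:ℝ)) / (m:ℝ) := by
        have h := Real.log_le_sub_one_of_pos (div_pos hl0 hm0)
        rw [Real.log_div (ne_of_gt hl0) (ne_of_gt hm0)] at h
        have heq : l / (m:ℝ) - 1 = (l - (m:ℝ))/(m:ℝ) := by field_simp
        linarith
      have hII : (l/2) * Real.log l - ((m:ℝ)/2) * Real.log (m:ℝ)
          ≤ Real.log l + (l - (m:ℝ))/2 := by
        have hA2 : ((m:ℝ)/2) * (Real.log l - Real.log (m:ℝ)) ≤ (l - (m:ℝ))/2 := by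
          have h := mul_le_mul_of_nonneg_left hlog1 (by positivity : (0:ℝ) ≤ (m:ℝ)/2)
          have heq : ((m:ℝ)/2) * ((l - (m:ℝ))/(m:ℝ)) = (l - (m:ℝ))/2 := by
            field_simp [hm0.ne']
          linarith
        have hll : 0 ≤ Real.log l := Real.log_nonneg hl1
        have hB2 : ((l - (m:ℝ))/2) * Real.log l ≤ Real.log l := by
          have h := mul_le_mul_of_nonneg_right
            (show (l - (m:ℝ))/2 ≤ 1 by linarith) hll
          linarith
        have hid : (l/2) * Real.log l - ((m:ℝ)/2) * Real.log (m:ℝ)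
            = ((m:ℝ)/2) * (Real.log l - Real.log (m:ℝ)) + ((l - (m:ℝ))/2) * Real.log l := by
          ring
        linarith
      -- Step III
      have hsq : l * A ≤ (x - l)^2 := by
        have hδ0 : (0:ℝ) ≤ l ^ ((1:ℝ) / 2 + ε) := (Real.rpow_pos_of_pos hl0 _).le
        have h1 : (l ^ ((1:ℝ) / 2 + ε))^2 ≤ |x - l|^2 := pow_le_pow_left₀ hδ0 hδ 2
        rw [sq_abs] at h1
        have h2 : (l ^ ((1:ℝ) / 2 + ε))^(2:ℕ) = l * A := by
          rw [← Real.rpow_natCast (l ^ ((1:ℝ) / 2 + ε)) 2, ← Real.rpow_mul hl0.le]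
          have harg : ((1:ℝ) / 2 + ε) * ((2:ℕ):ℝ) = 1 + 2*ε := by push_cast; ring
          rw [harg, Real.rpow_add hl0, Real.rpow_one, hAdef]
        rw [h2] at h1
        exact h1
      have hIII : (l/2) * (Real.log x - Real.log l) + (l - x)/2 ≤ -(A/16) - x/(64*l) := by
        rcases le_or_gt x (2*l) with hx2l | hx2l
        · have ht1 : -1 < (x - l)/l := by rw [lt_div_iff₀ hl0]; linarith
          have ht2 : (x - l)/l ≤ 1 := by rw [div_le_one hl0]; linarith
          have hq := aux_log_quad ht1 ht2
          have h1pt : 1 + (x - l)/l = x/l := by field_simp; ring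
          rw [h1pt, Real.log_div (ne_of_gt hx) (ne_of_gt hl0)] at hq
          have hH : (l/2) * (Real.log x - Real.log l) + (l - x)/2 ≤ -((x - l)^2/(8*l)) := by
            have h3 := mul_le_mul_of_nonneg_left hq (by positivity : (0:ℝ) ≤ l/2)
            have hexp : (l/2) * ((x - l)/l - ((x - l)/l)^2/4) = (x - l)/2 - (x - l)^2/(8*l) := by
              field_simp
              ring
            rw [hexp] at h3
            linarith
          have e1 : A/8 ≤ (x - l)^2/(8*l) := by
            rw [div_le_div_iff₀ (by norm_num) (by positivity)]
            linarith [hsq]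
          have e2 : x/(64*l) ≤ A/16 := by
            rw [div_le_div_iff₀ (by positivity) (by norm_num)]
            nlinarith [hx2l, mul_nonneg hl0.le (by linarith : (0:ℝ) ≤ A - 1)]
          linarith
        · have hlog := aux_log_le_div_e (div_pos hx hl0)
          rw [Real.log_div (ne_of_gt hx) (ne_of_gt hl0)] at hlog
          have he : (2.7182818283:ℝ) ≤ Real.exp 1 := le_of_lt Real.exp_one_gt_d9
          have h1 : (l/2) * (Real.log x - Real.log l) ≤ x/(2*Real.exp 1) := by
            have h3 := mul_le_mul_of_nonneg_left hlog (by positivity : (0:ℝ) ≤ l/2)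
            have heq : (l/2) * ((x/l)/Real.exp 1) = x/(2*Real.exp 1) := by
              field_simp
            rw [heq] at h3
            linarith
          have h2 : x/(2*Real.exp 1) ≤ (3/16)*x := by
            rw [div_le_iff₀ (by positivity)]
            nlinarith [mul_nonneg hx.le (show (0:ℝ) ≤ 3/8*Real.exp 1 - 1 by nlinarith [he])]
          have hH : (l/2)*(Real.log x - Real.log l) + (l - x)/2 ≤ -(x/16) := by linarith
          have e1 : A/16 ≤ x/32 := by linarith
          have e2 : x/(64*l) ≤ x/32 := by
            rw [div_le_div_iff₀ (by positivity) (by norm_num)]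
            nlinarith [mul_nonneg hx.le (by linarith : (0:ℝ) ≤ 64*l - 32)]
          linarith
      linarith [hI, hII, hIII, hxhalf, haD]
    · rw [if_neg hD]
      exact mul_nonneg hBpos.le (pow_nonneg hr0 D)
  have hfnn : ∀ D : ℕ, 0 ≤ (if 0 < D ∧ l ^ (1 / 2 + ε) ≤ |4 * π * v' * D - l| then
            (4 * π * v' * D) ^ (l / 2) * (Real.Gamma l) ^ (-(1 : ℝ) / 2) *
              Real.exp (-2 * π * v' * D)
          else 0) := by
    intro D
    split
    · apply mul_nonneg (mul_nonneg ?_ ?_) (Real.exp_nonneg _)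
      · exact Real.rpow_nonneg
          (mul_nonneg (mul_nonneg (mul_nonneg (by norm_num) Real.pi_pos.le) hv'.le)
            (Nat.cast_nonneg D)) _
      · exact Real.rpow_nonneg hGpos.le _
    · exact le_refl _
  have hMsum : Summable (fun D : ℕ => B * r ^ D) :=
    (summable_geometric_of_lt_one hr0 hr1).mul_left B
  have hfsum : Summable (fun D : ℕ => if 0 < D ∧ l ^ (1 / 2 + ε) ≤ |4 * π * v' * D - l| then
            (4 * π * v' * D) ^ (l / 2) * (Real.Gamma l) ^ (-(1 : ℝ) / 2) *
              Real.exp (-2 * π * v' * D)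
          else 0) := Summable.of_nonneg_of_le hfnn hpoint hMsum
  have h1v : (0:ℝ) < 1 + 1/v' := by
    have := one_div_pos.mpr hv'
    linarith
  refine le_trans (Summable.tsum_le_tsum hpoint hfsum hMsum) ?_
  rw [tsum_mul_left, tsum_geometric_of_lt_one hr0 hr1]
  have step1 : B * (1 - r)⁻¹ ≤ B * (1 + 1/a) := by
    apply mul_le_mul_of_nonneg_left ?_ hBpos.le
    have hr2 : 0 < 1 - r := by linarith
    rw [inv_eq_one_div, div_le_iff₀ hr2]
    have hra : r ≤ (1+a)⁻¹ := by
      rw [hrdef, Real.exp_neg]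
      have h1 : 1 + a ≤ Real.exp a := by linarith [Real.add_one_le_exp a]
      have h2 := one_div_le_one_div_of_le (by linarith : (0:ℝ) < 1 + a) h1
      simpa [one_div] using h2
    have h1a0 : (0:ℝ) < 1 + a := by linarith
    have hfr : (1+a)⁻¹ = 1 - a/(1+a) := by field_simp; ring
    have h5 : a/(1+a) ≤ 1 - r := by linarith [hra, hfr]
    have h1ia : (0:ℝ) ≤ 1 + 1/a := by
      have := one_div_pos.mpr ha
      linarith
    have key0 : (1 + 1/a) * (a/(1+a)) = 1 := by field_simp [ha.ne']; ring
    calc (1:ℝ) = (1 + 1/a) * (a/(1+a)) := key0.symm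
      _ ≤ (1 + 1/a)*(1-r) := mul_le_mul_of_nonneg_left h5 h1ia
  have step2 : B * (1 + 1/a) ≤ B * (6*l*(1+1/v')) := by
    apply mul_le_mul_of_nonneg_left ?_ hBpos.le
    have hinva : 1/a = 16*l/(π*v') := by
      rw [hadef]
      rw [one_div_div]
    have hpi : (3:ℝ) ≤ π := by linarith [Real.pi_gt_three]
    have h6 : 16*l/(π*v') ≤ 6*l/v' := by
      rw [div_le_div_iff₀ (mul_pos Real.pi_pos hv') hv']
      nlinarith [mul_nonneg (mul_nonneg hl0.le hv'.le) (by linarith : (0:ℝ) ≤ 6*π - 16)]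
    have hexpand : 6*l*(1+1/v') = 6*l + 6*l/v' := by ring
    linarith [hinva, h6]
  have hG6 := hℓ₁ l (le_trans (le_max_left _ _) hl)
  have hll2 : (l ^ (2*ε)) ^ ((1:ℝ)/ε) = l*l := by
    rw [← Real.rpow_mul hl0.le]
    have harg : 2*ε*((1:ℝ)/ε) = 2 := by field_simp
    rw [harg, show (2:ℝ) = ((2:ℕ):ℝ) by norm_num, Real.rpow_natCast]
    ring
  rw [hll2, ← hAdef] at hG6
  -- hG6 : l*l * exp (-(1/32) * A) < 1/6
  have h7 : 6*(l*l)*Real.exp (-(A/32)) ≤ 1 := by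
    have harg : -(A/32) = -(1/32) * A := by ring
    rw [harg]
    linarith [hG6]
  have h8 : Real.exp (-(A/16)) = Real.exp (-(A/32)) * Real.exp (-(A/32)) := by
    rw [← Real.exp_add]
    ring_nf
  have h9 : Real.exp (-(A/32)) ≤ Real.exp (-(1/32) * l ^ ε) := by
    rw [Real.exp_le_exp]
    linarith [hAε]
  calc B * (1 - r)⁻¹ ≤ B * (6*l*(1+1/v')) := le_trans step1 step2
    _ = (6*(l*l)*Real.exp (-(A/32))) * Real.exp (-(A/32)) * (1+1/v') := by
        rw [hBdef, h8]; ring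
    _ ≤ 1 * Real.exp (-(1/32) * l ^ ε) * (1+1/v') := by
        apply mul_le_mul_of_nonneg_right ?_ h1v.le
        exact mul_le_mul h7 h9 (Real.exp_nonneg _)
          (by norm_num)
    _ = 1 * (1 + 1/v') * Real.exp (-(1/32) * l ^ ε) := by ring
end
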